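/- arXiv:1001.5104 — 2 statements merged into one kernel-verified Lean document; each statement's English description precedes it below -/
import Mathlib

section
/- Every interval [x,y] of length 2 in the Bruhat–Chevalley–Renner order on R_n is either a chain {x, x_1, y} with x < x_1 < y, or a 'diamond' {x, x_1, x_1', y} with exactly two distinct intermediate elements x_1 ≠ x_1'. -/
open Finset

variable {n : ℕ}

/-- An element of the rook monoid `R_n` in one-line notation: a sequence of
entries in `{0,...,n}` whose nonzero entries are pairwise distinct. -/
def IsRook (n : ℕ) (a : Fin n → ℕ) : Prop :=
  (∀ i, a i ≤ n) ∧ ∀ i j, a i ≠ 0 → a i = a j → i = j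

/-- number of inversions -/
def rinv (a : Fin n → ℕ) : ℕ :=
  ((univ ×ˢ univ).filter fun p : Fin n × Fin n => p.1 < p.2 ∧ a p.2 < a p.1).card

/-- number of coinversion pairs -/
def rcoinv (a : Fin n → ℕ) : ℕ :=
  ((univ ×ˢ univ).filter fun p : Fin n × Fin n => p.1 < p.2 ∧ 0 < a p.1 ∧ a p.1 < a p.2).card

/-- the length function ℓ -/
def rlen (a : Fin n → ℕ) : ℕ := (∑ i, a i) + rinv a

/-- type 1 generating relation: increase a single entry -/
def Step1 (a b : Fin n → ℕ) : Prop := ∃ i, a i < b i ∧ ∀ j, j ≠ i → a j = b j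

/-- type 2 generating relation: swap two entries, larger one first -/
def Step2 (a b : Fin n → ℕ) : Prop :=
  ∃ i j, i < j ∧ a i < a j ∧ b i = a j ∧ b j = a i ∧ ∀ k, k ≠ i → k ≠ j → a k = b k

/-- the Bruhat-Chevalley-Renner order on `R_n` -/
def RookLe (n : ℕ) (a b : Fin n → ℕ) : Prop :=
  Relation.ReflTransGen (fun x y => IsRook n x ∧ IsRook n y ∧ (Step1 x y ∨ Step2 x y)) a b

def RookLt (n : ℕ) (a b : Fin n → ℕ) : Prop := RookLe n a b ∧ a ≠ b

/-- covering relation of the Bruhat-Chevalley-Renner order -/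
def RookCov (n : ℕ) (a b : Fin n → ℕ) : Prop :=
  RookLt n a b ∧ ∀ z, RookLt n a z → RookLt n z b → False

/-- the edge labeling `F` on covering relations -/
noncomputable def Flabel (a b : Fin n → ℕ) : ℕ × ℕ := by
  classical
  exact if h : ∃ i, a i < b i ∧ ∀ j, j ≠ i → a j = b j then (a h.choose, b h.choose)
  else if h2 : ∃ p : Fin n × Fin n, p.1 < p.2 ∧ a p.1 < a p.2 ∧ b p.1 = a p.2 ∧ b p.2 = a p.1 ∧
      ∀ k, k ≠ p.1 → k ≠ p.2 → a k = b k then (a h2.choose.1, a h2.choose.2)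
  else (0, 0)

/-- lexicographic (strict) order on labels -/
def pairLt (p q : ℕ × ℕ) : Prop := p.1 < q.1 ∨ (p.1 = q.1 ∧ p.2 < q.2)

def pairLe (p q : ℕ × ℕ) : Prop := p = q ∨ pairLt p q

/-- lexicographic comparison of label sequences -/
def lexLe (l m : List (ℕ × ℕ)) : Prop := l = m ∨ List.Lex pairLt l m

/-- the Jordan-Hölder sequence of labels of a chain -/
noncomputable def labels (c : List (Fin n → ℕ)) : List (ℕ × ℕ) :=
  List.zipWith Flabel c c.tail

/-- a maximal chain in the interval `[x,y]` -/
def RookMaxChain (n : ℕ) (x y : Fin n → ℕ) (c : List (Fin n → ℕ)) : Prop :=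
  c.Chain' (RookCov n) ∧ c.head? = some x ∧ c.getLast? = some y

/-! ### Auxiliary material -/

section SwapDef

def swapf (x : Fin n → ℕ) (i j : Fin n) : Fin n → ℕ :=
  fun k => if k = i then x j else if k = j then x i else x k

lemma swapf_fst (x : Fin n → ℕ) (i j : Fin n) : swapf x i j i = x j := by simp [swapf]

lemma swapf_snd (x : Fin n → ℕ) (i j : Fin n) : swapf x i j j = x i := by
  by_cases h : j = i <;> simp [swapf, h]

lemma swapf_other (x : Fin n → ℕ) {i j k : Fin n} (h1 : k ≠ i) (h2 : k ≠ j) :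
    swapf x i j k = x k := by simp [swapf, h1, h2]

end SwapDef

section DiffLemma

lemma rinv_int (a : Fin n → ℕ) :
    (rinv a : ℤ) = ∑ k : Fin n, ∑ l : Fin n, (if k < l ∧ a l < a k then (1:ℤ) else 0) := by
  rw [rinv, Finset.card_filter, Finset.sum_product]
  push_cast
  rfl

lemma rinv_update_diff (a : Fin n → ℕ) (i : Fin n) (c : ℕ) (h : a i ≤ c) :
    (rinv (Function.update a i c) : ℤ) - rinv a =
      (∑ l : Fin n, if i < l ∧ a i ≤ a l ∧ a l < c then (1:ℤ) else 0)
      - ∑ k : Fin n, if k < i ∧ a i < a k ∧ a k ≤ c then (1:ℤ) else 0 := by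
  classical
  set b := Function.update a i c with hb
  have hbi : b i = c := Function.update_self i c a
  have hbk : ∀ k, k ≠ i → b k = a k := fun k hk => Function.update_of_ne hk c a
  set D : Fin n → Fin n → ℤ := fun k l =>
    (if k < l ∧ b l < b k then (1:ℤ) else 0) - (if k < l ∧ a l < a k then (1:ℤ) else 0) with hD
  have hzero : ∀ k l, k ≠ i → l ≠ i → D k l = 0 := by
    intro k l hk hl
    simp [hD, hbk k hk, hbk l hl]
  have key : (rinv b : ℤ) - rinv a = ∑ k : Fin n, ∑ l : Fin n, D k l := by
    rw [rinv_int, rinv_int, ← Finset.sum_sub_distrib]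
    refine Finset.sum_congr rfl fun k _ => ?_
    rw [← Finset.sum_sub_distrib]
  have split : ∀ k : Fin n, (∑ l : Fin n, D k l) = D k i + ∑ l ∈ univ.erase i, D k l := by
    intro k
    exact (Finset.add_sum_erase univ (D k) (mem_univ i)).symm
  rw [key]
  calc (∑ k : Fin n, ∑ l : Fin n, D k l)
      = ∑ k : Fin n, (D k i + ∑ l ∈ univ.erase i, D k l) := Finset.sum_congr rfl fun k _ => split k
    _ = (∑ k : Fin n, D k i) + ∑ k : Fin n, ∑ l ∈ univ.erase i, D k l := Finset.sum_add_distrib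
    _ = (∑ k : Fin n, D k i) + ∑ l ∈ univ.erase i, D i l := by
        congr 1
        refine Finset.sum_eq_single i (fun k _ hk => ?_) (fun h => absurd (mem_univ i) h)
        exact Finset.sum_eq_zero fun l hl => hzero k l hk (Finset.ne_of_mem_erase hl)
    _ = (∑ k : Fin n, D k i) + ∑ l : Fin n, D i l := by
        congr 1
        refine Finset.sum_erase univ ?_
        simp [hD]
    _ = (∑ l : Fin n, if i < l ∧ a i ≤ a l ∧ a l < c then (1:ℤ) else 0)
      - ∑ k : Fin n, if k < i ∧ a i < a k ∧ a k ≤ c then (1:ℤ) else 0 := by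
        have h1 : ∀ k : Fin n, D k i = -(if k < i ∧ a i < a k ∧ a k ≤ c then (1:ℤ) else 0) := by
          intro k
          by_cases hk : k = i
          · subst hk; simp [hD]
          · simp only [hD, hbk k hk, hbi]
            split_ifs <;> omega
        have h2 : ∀ l : Fin n, D i l = (if i < l ∧ a i ≤ a l ∧ a l < c then (1:ℤ) else 0) := by
          intro l
          by_cases hl : l = i
          · subst hl; simp [hD]
          · simp only [hD, hbk l hl, hbi]
            split_ifs <;> omega
        rw [Finset.sum_congr rfl fun k _ => h1 k, Finset.sum_congr rfl fun l _ => h2 l]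
        rw [Finset.sum_neg_distrib]
        ring

lemma sum_swapf (x : Fin n → ℕ) (i j : Fin n) : ∑ k, swapf x i j k = ∑ k, x k := by
  have h : ∀ k, swapf x i j k = x (Equiv.swap i j k) := by
    intro k
    rcases eq_or_ne k i with rfl | h1
    · simp [swapf_fst]
    rcases eq_or_ne k j with rfl | h2
    · simp [swapf_snd]
    · rw [swapf_other x h1 h2, Equiv.swap_apply_of_ne_of_ne h1 h2]
  rw [Finset.sum_congr rfl fun k _ => h k]
  exact Equiv.sum_comp (Equiv.swap i j) x

/-- J1: exact length change for a single-entry increase. -/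
lemma rlen_update_eq (x : Fin n → ℕ) (i : Fin n) (c : ℕ) (hc : x i < c)
    (hfresh : ∀ k, k ≠ i → x k ≠ c) :
    (rlen (Function.update x i c) : ℤ) = rlen x + (c - (x i : ℤ))
      + ((univ.filter fun l => i < l ∧ x i ≤ x l ∧ x l < c).card : ℤ)
      - ((univ.filter fun k => k < i ∧ x i < x k ∧ x k < c).card : ℤ) := by
  classical
  have hsumN : (∑ k, Function.update x i c k) + x i = (∑ k, x k) + c := by
    have h1 : ∑ k, Function.update x i c k = c + ∑ k ∈ univ \ {i}, x k :=
      Finset.sum_update_of_mem (mem_univ i) x c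
    have h2 : x i + ∑ k ∈ univ \ {i}, x k = ∑ k, x k := by
      rw [Finset.sdiff_singleton_eq_erase]
      exact Finset.add_sum_erase univ x (mem_univ i)
    omega
  have hdiff := rinv_update_diff x i c (le_of_lt hc)
  have hG : (∑ l : Fin n, if i < l ∧ x i ≤ x l ∧ x l < c then (1:ℤ) else 0)
      = ((univ.filter fun l => i < l ∧ x i ≤ x l ∧ x l < c).card : ℤ) := by
    rw [Finset.sum_boole]
  have hL : (∑ k : Fin n, if k < i ∧ x i < x k ∧ x k ≤ c then (1:ℤ) else 0)
      = ((univ.filter fun k => k < i ∧ x i < x k ∧ x k < c).card : ℤ) := by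
    rw [Finset.sum_boole]
    have heq : (univ.filter fun k : Fin n => k < i ∧ x i < x k ∧ x k ≤ c)
        = (univ.filter fun k => k < i ∧ x i < x k ∧ x k < c) := by
      apply Finset.filter_congr
      intro k _
      constructor
      · rintro ⟨h1, h2, h3⟩
        exact ⟨h1, h2, lt_of_le_of_ne h3 (fun hk => hfresh k (fun h => by subst h; omega) hk)⟩
      · rintro ⟨h1, h2, h3⟩; exact ⟨h1, h2, le_of_lt h3⟩
    rw [heq]
  have hdiff2 : (rinv (Function.update x i c) : ℤ) - rinv x
      = ((univ.filter fun l => i < l ∧ x i ≤ x l ∧ x l < c).card : ℤ)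
      - ((univ.filter fun k => k < i ∧ x i < x k ∧ x k < c).card : ℤ) := by
    rw [hdiff, hG, hL]
  have hsumZ : (∑ k : Fin n, (Function.update x i c k : ℤ)) + (x i : ℤ)
      = (∑ k : Fin n, (x k : ℤ)) + c := by exact_mod_cast hsumN
  unfold rlen
  push_cast
  linarith [hdiff2, hsumZ]

end DiffLemma

section J1cor

variable (x : Fin n → ℕ) (i : Fin n) (c : ℕ)

/-- split the G set into the strict part and the equal part -/
lemma Gsplit (hc : x i < c) :
    (univ.filter fun l => i < l ∧ x i ≤ x l ∧ x l < c).card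
      = (univ.filter fun l : Fin n => i < l ∧ x i < x l ∧ x l < c).card
        + (univ.filter fun l : Fin n => i < l ∧ x l = x i).card := by
  classical
  rw [← Finset.card_union_of_disjoint]
  · congr 1
    ext l
    simp only [mem_union, mem_filter, mem_univ, true_and]
    constructor
    · rintro ⟨h1, h2, h3⟩
      rcases eq_or_lt_of_le h2 with h | h
      · exact Or.inr ⟨h1, h.symm⟩
      · exact Or.inl ⟨h1, h, h3⟩
    · rintro (⟨h1, h2, h3⟩ | ⟨h1, h2⟩)
      · exact ⟨h1, le_of_lt h2, h3⟩
      · exact ⟨h1, le_of_eq h2.symm, by omega⟩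
  · rw [Finset.disjoint_left]
    rintro l hl hl'
    simp only [mem_filter] at hl hl'
    omega

lemma LGbound (hrook : IsRook n x) (hc : x i < c) :
    (univ.filter fun k : Fin n => k < i ∧ x i < x k ∧ x k < c).card
      + (univ.filter fun l : Fin n => i < l ∧ x i < x l ∧ x l < c).card
      ≤ c - x i - 1 := by
  classical
  rw [← Finset.card_union_of_disjoint]
  · have h1 : ((univ.filter fun k : Fin n => k < i ∧ x i < x k ∧ x k < c)
        ∪ (univ.filter fun l : Fin n => i < l ∧ x i < x l ∧ x l < c)).card
        ≤ (Finset.Ioo (x i) c).card := by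
      apply Finset.card_le_card_of_injOn x
      · intro k hk
        simp only [Finset.mem_coe, mem_union, mem_filter, mem_univ, true_and] at hk ⊢
        rw [Finset.mem_Ioo]
        rcases hk with ⟨_, h2, h3⟩ | ⟨_, h2, h3⟩ <;> exact ⟨h2, h3⟩
      · intro k hk l hl hkl
        simp only [coe_union, coe_filter, mem_univ, true_and, Set.mem_union,
          Set.mem_setOf_eq] at hk hl
        apply hrook.2
        · rcases hk with ⟨_, h2, _⟩ | ⟨_, h2, _⟩ <;> omega
        · exact hkl
    rwa [Nat.card_Ioo] at h1
  · rw [Finset.disjoint_left]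
    rintro l hl hl'
    simp only [mem_filter] at hl hl'
    exact absurd (lt_trans hl.2.1 hl'.2.1) (lt_irrefl l)

lemma rlen_update_ge (hrook : IsRook n x) (hc : x i < c)
    (hfresh : ∀ k, k ≠ i → x k ≠ c) :
    rlen x + 1 ≤ rlen (Function.update x i c) := by
  have h1 := rlen_update_eq x i c hc hfresh
  have h2 := Gsplit x i c hc
  have h3 := LGbound x i c hrook hc
  omega

/-- characterization of a covering Step1: jump exactly one -/
lemma rlen_update_cov (hrook : IsRook n x) (hc : x i < c)
    (hfresh : ∀ k, k ≠ i → x k ≠ c)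
    (h1 : rlen (Function.update x i c) = rlen x + 1) :
    (∀ l, i < l → x i ≤ x l → x l < c → False)
      ∧ (∀ u, x i < u → u < c → ∃ m, m < i ∧ x m = u) := by
  classical
  have he := rlen_update_eq x i c hc hfresh
  have h2 := Gsplit x i c hc
  have h3 := LGbound x i c hrook hc
  have hG0 : (univ.filter fun l => i < l ∧ x i ≤ x l ∧ x l < c).card = 0 := by omega
  have hLfull : (univ.filter fun k : Fin n => k < i ∧ x i < x k ∧ x k < c).card
      = c - x i - 1 := by omega
  constructor
  · intro l hl1 hl2 hl3
    have : l ∈ (univ.filter fun l => i < l ∧ x i ≤ x l ∧ x l < c) := by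
      simp only [mem_filter, mem_univ, true_and]; exact ⟨hl1, hl2, hl3⟩
    rw [Finset.card_eq_zero] at hG0
    rw [hG0] at this
    exact absurd this (notMem_empty l)
  · intro u hu1 hu2
    set L := (univ.filter fun k : Fin n => k < i ∧ x i < x k ∧ x k < c) with hL
    have himg : L.image x ⊆ Finset.Ioo (x i) c := by
      intro u hu
      rw [Finset.mem_image] at hu
      obtain ⟨k, hk, rfl⟩ := hu
      simp only [hL, mem_filter, mem_univ, true_and] at hk
      rw [Finset.mem_Ioo]
      exact ⟨hk.2.1, hk.2.2⟩
    have hinj : Set.InjOn x L := by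
      intro k hk l hl hkl
      simp only [hL, coe_filter, mem_univ, true_and, Set.mem_setOf_eq] at hk hl
      exact hrook.2 k l (by omega) hkl
    have hcard : (L.image x).card = c - x i - 1 := by
      rw [Finset.card_image_of_injOn hinj, hLfull]
    have : L.image x = Finset.Ioo (x i) c := by
      apply Finset.eq_of_subset_of_card_le himg
      rw [Nat.card_Ioo, hcard]
    have hu : u ∈ L.image x := by
      rw [this, Finset.mem_Ioo]; exact ⟨hu1, hu2⟩
    rw [Finset.mem_image] at hu
    obtain ⟨m, hm, hmu⟩ := hu
    simp only [hL, mem_filter, mem_univ, true_and] at hm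
    exact ⟨m, hm.1, hmu⟩

/-- a Step1 of jump two: there is a free value strictly between, or a later
equal (hence zero) entry -/
lemma rlen_update_two (hrook : IsRook n x) (hc : x i < c)
    (hfresh : ∀ k, k ≠ i → x k ≠ c)
    (h1 : rlen (Function.update x i c) = rlen x + 2) :
    (∃ u, x i < u ∧ u < c ∧ ∀ m, x m ≠ u) ∨ (∃ k, i < k ∧ x k = x i) := by
  classical
  have he := rlen_update_eq x i c hc hfresh
  have h2 := Gsplit x i c hc
  have h3 := LGbound x i c hrook hc
  by_cases hZ : (univ.filter fun l : Fin n => i < l ∧ x l = x i).card = 0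
  · left
    have hG0 : (univ.filter fun l : Fin n => i < l ∧ x i < x l ∧ x l < c).card = 0 := by omega
    have hLcard : (univ.filter fun k : Fin n => k < i ∧ x i < x k ∧ x k < c).card
        = c - x i - 2 := by omega
    set L := (univ.filter fun k : Fin n => k < i ∧ x i < x k ∧ x k < c) with hL
    have himg : L.image x ⊆ Finset.Ioo (x i) c := by
      intro u hu
      rw [Finset.mem_image] at hu
      obtain ⟨k, hk, rfl⟩ := hu
      simp only [hL, mem_filter, mem_univ, true_and] at hk
      rw [Finset.mem_Ioo]
      exact ⟨hk.2.1, hk.2.2⟩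
    have hinj : Set.InjOn x L := by
      intro k hk l hl hkl
      simp only [hL, coe_filter, mem_univ, true_and, Set.mem_setOf_eq] at hk hl
      exact hrook.2 k l (by omega) hkl
    have hcard : (L.image x).card < (Finset.Ioo (x i) c).card := by
      rw [Finset.card_image_of_injOn hinj, hLcard, Nat.card_Ioo]
      omega
    have hss : L.image x ⊂ Finset.Ioo (x i) c :=
      Finset.ssubset_iff_subset_ne.mpr ⟨himg, fun h => by rw [h] at hcard; omega⟩
    obtain ⟨u, hu1, hu2⟩ := Finset.exists_of_ssubset hss
    rw [Finset.mem_Ioo] at hu1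
    refine ⟨u, hu1.1, hu1.2, fun m hm => ?_⟩
    rcases lt_trichotomy m i with h | h | h
    · apply hu2
      rw [Finset.mem_image]
      exact ⟨m, by simp only [hL, mem_filter, mem_univ, true_and]; omega, hm⟩
    · subst h; omega
    · have : m ∈ (univ.filter fun l : Fin n => i < l ∧ x i < x l ∧ x l < c) := by
        simp only [mem_filter, mem_univ, true_and]; omega
      rw [Finset.card_eq_zero] at hG0
      rw [hG0] at this
      exact absurd this (notMem_empty m)
  · right
    have : (univ.filter fun l : Fin n => i < l ∧ x l = x i).Nonempty := by
      rw [Finset.nonempty_iff_ne_empty]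
      intro h
      rw [← Finset.card_eq_zero] at h
      exact hZ h
    obtain ⟨k, hk⟩ := this
    simp only [mem_filter, mem_univ, true_and] at hk
    exact ⟨k, hk.1, hk.2⟩

end J1cor


section J2

/-- J2: exact length change for a swap step. -/
lemma rlen_swapf_eq (x : Fin n → ℕ) (i j : Fin n) (hij : i < j) (hv : x i < x j)
    (hfresh : ∀ k, k ≠ j → x k ≠ x j) :
    rlen (swapf x i j) = rlen x + 1
      + 2 * (univ.filter fun k : Fin n => i < k ∧ k < j ∧ x i < x k ∧ x k < x j).card
      + (univ.filter fun k : Fin n => i < k ∧ k < j ∧ x k = x i).card := by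
  classical
  set z := swapf x i j with hz
  set m := Function.update x i (x j) with hm
  have hij' : i ≠ j := ne_of_lt hij
  have hzi : z i = x j := swapf_fst x i j
  have hzj : z j = x i := swapf_snd x i j
  have hzo : ∀ k, k ≠ i → k ≠ j → z k = x k := fun k h1 h2 => swapf_other x h1 h2
  have hmi : m i = x j := Function.update_self i (x j) x
  have hmo : ∀ k, k ≠ i → m k = x k := fun k hk => Function.update_of_ne hk (x j) x
  have hD1 := rinv_update_diff x i (x j) (le_of_lt hv)
  have hm2 : Function.update z j (x j) = m := by
    funext k
    rcases eq_or_ne k j with rfl | hkj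
    · rw [Function.update_self, hmo k (Ne.symm hij')]
    · rw [Function.update_of_ne hkj]
      rcases eq_or_ne k i with rfl | hki
      · rw [hzi, hmi]
      · rw [hzo k hki hkj, hmo k hki]
  have hD2 := rinv_update_diff z j (x j) (by rw [hzj]; exact le_of_lt hv)
  rw [hm2, hzj] at hD2
  -- now combine
  have hkey : (rinv z : ℤ) - rinv x
      = ∑ k : Fin n, ((if i < k ∧ x i ≤ x k ∧ x k < x j then (1:ℤ) else 0)
          - (if k < i ∧ x i < x k ∧ x k ≤ x j then (1:ℤ) else 0)
          - (if j < k ∧ x i ≤ z k ∧ z k < x j then (1:ℤ) else 0)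
          + (if k < j ∧ x i < z k ∧ z k ≤ x j then (1:ℤ) else 0)) := by
    calc (rinv z : ℤ) - rinv x
        = ((rinv m : ℤ) - rinv x) - ((rinv m : ℤ) - rinv z) := by ring
      _ = (∑ l : Fin n, if i < l ∧ x i ≤ x l ∧ x l < x j then (1:ℤ) else 0)
          - (∑ k : Fin n, if k < i ∧ x i < x k ∧ x k ≤ x j then (1:ℤ) else 0)
          - ((∑ l : Fin n, if j < l ∧ x i ≤ z l ∧ z l < x j then (1:ℤ) else 0)
          - (∑ k : Fin n, if k < j ∧ x i < z k ∧ z k ≤ x j then (1:ℤ) else 0)) := by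
          rw [← hm] at hD1
          rw [hD1, hD2]
      _ = _ := by
          rw [Finset.sum_add_distrib, Finset.sum_sub_distrib, Finset.sum_sub_distrib]
          ring
  have hpt : ∀ k : Fin n, ((if i < k ∧ x i ≤ x k ∧ x k < x j then (1:ℤ) else 0)
          - (if k < i ∧ x i < x k ∧ x k ≤ x j then (1:ℤ) else 0)
          - (if j < k ∧ x i ≤ z k ∧ z k < x j then (1:ℤ) else 0)
          + (if k < j ∧ x i < z k ∧ z k ≤ x j then (1:ℤ) else 0))
      = (if k = i then (1:ℤ) else 0)
        + 2 * (if i < k ∧ k < j ∧ x i < x k ∧ x k < x j then (1:ℤ) else 0)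
        + (if i < k ∧ k < j ∧ x k = x i then (1:ℤ) else 0) := by
    intro k
    have hij2 : (i : ℕ) < (j : ℕ) := hij
    rcases eq_or_ne k i with h | hki
    · subst h
      rw [hzi]
      simp only [Fin.lt_def, Fin.ext_iff]
      split_ifs <;> omega
    rcases eq_or_ne k j with h | hkj
    · subst h
      rw [hzj]
      have hki2 : (k : ℕ) ≠ (i : ℕ) := fun h => hki (Fin.ext h)
      simp only [Fin.lt_def, Fin.ext_iff]
      split_ifs <;> omega
    · rw [hzo k hki hkj]
      have hki2 : (k : ℕ) ≠ (i : ℕ) := fun h => hki (Fin.ext h)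
      have hkj2 : (k : ℕ) ≠ (j : ℕ) := fun h => hkj (Fin.ext h)
      have hfk : x k ≠ x j := hfresh k hkj
      simp only [Fin.lt_def, Fin.ext_iff]
      split_ifs <;> omega
  rw [Finset.sum_congr rfl fun k _ => hpt k] at hkey
  rw [Finset.sum_add_distrib, Finset.sum_add_distrib] at hkey
  rw [Finset.sum_ite_eq' univ i fun _ => (1:ℤ)] at hkey
  rw [← Finset.mul_sum] at hkey
  rw [Finset.sum_boole, Finset.sum_boole] at hkey
  have hsz : ∑ k, z k = ∑ k, x k := sum_swapf x i j
  have h1 : rlen z = (∑ k, z k) + rinv z := rfl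
  have hx' : rlen x = (∑ k, x k) + rinv x := rfl
  simp only [if_pos (mem_univ i)] at hkey
  omega

section J2cor

variable (x : Fin n → ℕ) (i j : Fin n)

lemma rlen_swapf_ge (hij : i < j) (hv : x i < x j)
    (hfresh : ∀ k, k ≠ j → x k ≠ x j) :
    rlen x + 1 ≤ rlen (swapf x i j) := by
  have := rlen_swapf_eq x i j hij hv hfresh
  omega

lemma rlen_swapf_cov (hij : i < j) (hv : x i < x j)
    (hfresh : ∀ k, k ≠ j → x k ≠ x j)
    (h1 : rlen (swapf x i j) = rlen x + 1) :
    ∀ k, i < k → k < j → x k < x i ∨ x j < x k := by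
  have he := rlen_swapf_eq x i j hij hv hfresh
  have hB : (univ.filter fun k : Fin n => i < k ∧ k < j ∧ x i < x k ∧ x k < x j).card = 0 := by
    omega
  have hZ : (univ.filter fun k : Fin n => i < k ∧ k < j ∧ x k = x i).card = 0 := by omega
  rw [Finset.card_eq_zero] at hB hZ
  intro k hk1 hk2
  by_contra hcon
  push_neg at hcon
  obtain ⟨hc1, hc2⟩ := hcon
  have hkj : k ≠ j := fun h => by rw [h] at hk2; exact lt_irrefl j hk2
  have hneq : x k ≠ x j := hfresh k hkj
  rcases eq_or_lt_of_le hc1 with h | h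
  · have : k ∈ (univ.filter fun k : Fin n => i < k ∧ k < j ∧ x k = x i) := by
      simp only [mem_filter, mem_univ, true_and]; exact ⟨hk1, hk2, h.symm⟩
    rw [hZ] at this; exact absurd this (notMem_empty k)
  · have : k ∈ (univ.filter fun k : Fin n => i < k ∧ k < j ∧ x i < x k ∧ x k < x j) := by
      simp only [mem_filter, mem_univ, true_and]
      exact ⟨hk1, hk2, h, by omega⟩
    rw [hB] at this; exact absurd this (notMem_empty k)

lemma rlen_swapf_two (hij : i < j) (hv : x i < x j)
    (hfresh : ∀ k, k ≠ j → x k ≠ x j)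
    (h1 : rlen (swapf x i j) = rlen x + 2) :
    ∃ k, i < k ∧ k < j ∧ x k = x i := by
  have he := rlen_swapf_eq x i j hij hv hfresh
  have hZ : 0 < (univ.filter fun k : Fin n => i < k ∧ k < j ∧ x k = x i).card := by omega
  rw [Finset.card_pos] at hZ
  obtain ⟨k, hk⟩ := hZ
  simp only [mem_filter, mem_univ, true_and] at hk
  exact ⟨k, hk⟩

end J2cor

end J2

section Order

lemma step1_elim {x z : Fin n → ℕ} (h : Step1 x z) :
    ∃ i c, x i < c ∧ z = Function.update x i c := by
  obtain ⟨i, h1, h2⟩ := h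
  refine ⟨i, z i, h1, funext fun k => ?_⟩
  rcases eq_or_ne k i with rfl | hk
  · rw [Function.update_self]
  · rw [Function.update_of_ne hk]; exact (h2 k hk).symm

lemma step2_elim {x z : Fin n → ℕ} (h : Step2 x z) :
    ∃ i j, i < j ∧ x i < x j ∧ z = swapf x i j := by
  obtain ⟨i, j, h1, h2, h3, h4, h5⟩ := h
  refine ⟨i, j, h1, h2, funext fun k => ?_⟩
  rcases eq_or_ne k i with rfl | hki
  · rw [swapf_fst, h3]
  rcases eq_or_ne k j with rfl | hkj
  · rw [swapf_snd, h4]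
  · rw [swapf_other x hki hkj]; exact (h5 k hki hkj).symm

lemma step1_intro (x : Fin n → ℕ) {i : Fin n} {c : ℕ} (hc : x i < c) :
    Step1 x (Function.update x i c) :=
  ⟨i, by rw [Function.update_self]; exact hc,
    fun j hj => (Function.update_of_ne hj c x).symm⟩

lemma step2_intro (x : Fin n → ℕ) {i j : Fin n} (hij : i < j) (hv : x i < x j) :
    Step2 x (swapf x i j) :=
  ⟨i, j, hij, hv, swapf_fst x i j, swapf_snd x i j,
    fun k h1 h2 => (swapf_other x h1 h2).symm⟩

lemma update_fresh {x : Fin n → ℕ} {i : Fin n} {c : ℕ}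
    (hz : IsRook n (Function.update x i c)) (hc : x i < c) :
    ∀ k, k ≠ i → x k ≠ c := by
  intro k hk hxk
  have h1 : Function.update x i c k = c := by rw [Function.update_of_ne hk]; exact hxk
  have h2 : Function.update x i c i = c := Function.update_self i c x
  exact hk (hz.2 k i (by omega) (h1.trans h2.symm))

lemma swap_fresh {x : Fin n → ℕ} (hx : IsRook n x) {i j : Fin n} (hv : x i < x j) :
    ∀ k, k ≠ j → x k ≠ x j :=
  fun k hk h => hk (hx.2 k j (by omega) h)

lemma rook_update {x : Fin n → ℕ} (hx : IsRook n x) {i : Fin n} {c : ℕ} (hc : c ≤ n)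
    (hfr : ∀ k, k ≠ i → x k ≠ c) : IsRook n (Function.update x i c) := by
  constructor
  · intro k
    rcases eq_or_ne k i with rfl | hk
    · rw [Function.update_self]; exact hc
    · rw [Function.update_of_ne hk]; exact hx.1 k
  · intro p q hp hpq
    by_cases hpi : p = i <;> by_cases hqi : q = i
    · rw [hpi, hqi]
    · rw [hpi, Function.update_self] at hpq
      rw [Function.update_of_ne hqi] at hpq
      exact absurd hpq.symm (hfr q hqi)
    · rw [hqi, Function.update_self] at hpq
      rw [Function.update_of_ne hpi] at hpq hp
      exact absurd hpq (hfr p hpi)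
    · rw [Function.update_of_ne hpi] at hpq hp
      rw [Function.update_of_ne hqi] at hpq
      exact hx.2 p q hp hpq

lemma rook_swapf {x : Fin n → ℕ} (hx : IsRook n x) (i j : Fin n) :
    IsRook n (swapf x i j) := by
  constructor
  · intro k
    rcases eq_or_ne k i with rfl | h1
    · rw [swapf_fst]; exact hx.1 j
    rcases eq_or_ne k j with rfl | h2
    · rw [swapf_snd]; exact hx.1 i
    · rw [swapf_other x h1 h2]; exact hx.1 k
  · intro p q hp hpq
    have hc : ∀ k, swapf x i j k = x (Equiv.swap i j k) := by
      intro k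
      rcases eq_or_ne k i with rfl | h1
      · simp [swapf_fst]
      rcases eq_or_ne k j with rfl | h2
      · simp [swapf_snd]
      · rw [swapf_other x h1 h2, Equiv.swap_apply_of_ne_of_ne h1 h2]
    rw [hc] at hp hpq
    rw [hc q] at hpq
    exact (Equiv.swap i j).injective (hx.2 _ _ hp hpq)

end Order


section OrderLemmas

lemma step_rlen {x z : Fin n → ℕ} (hx : IsRook n x) (hz : IsRook n z)
    (h : Step1 x z ∨ Step2 x z) : rlen x + 1 ≤ rlen z := by
  rcases h with h | h
  · obtain ⟨i, c, hc, rfl⟩ := step1_elim h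
    exact rlen_update_ge x i c hx hc (update_fresh hz hc)
  · obtain ⟨i, j, hij, hv, rfl⟩ := step2_elim h
    exact rlen_swapf_ge x i j hij hv (swap_fresh hx hv)

lemma rookLe_rlen {x y : Fin n → ℕ} (h : RookLe n x y) : x = y ∨ rlen x + 1 ≤ rlen y := by
  induction h with
  | refl => exact Or.inl rfl
  | tail h1 h2 ih =>
    right
    have hs := step_rlen h2.1 h2.2.1 h2.2.2
    rcases ih with rfl | ih
    · exact hs
    · omega

lemma rookLt_rlen {x y : Fin n → ℕ} (h : RookLt n x y) : rlen x + 1 ≤ rlen y :=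
  (rookLe_rlen h.1).resolve_left h.2

lemma rookLt_single {x y : Fin n → ℕ} (h : RookLt n x y) (hl : rlen y = rlen x + 1) :
    IsRook n x ∧ IsRook n y ∧ (Step1 x y ∨ Step2 x y) := by
  obtain ⟨hle, hne⟩ := h
  rcases Relation.ReflTransGen.cases_head hle with rfl | ⟨m, hstep, hrest⟩
  · exact absurd rfl hne
  · rcases rookLe_rlen hrest with rfl | hlt
    · exact hstep
    · have := step_rlen hstep.1 hstep.2.1 hstep.2.2
      omega

lemma lt_of_step {x z : Fin n → ℕ} (hx : IsRook n x) (hz : IsRook n z)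
    (h : Step1 x z ∨ Step2 x z) : RookLt n x z := by
  refine ⟨Relation.ReflTransGen.single ⟨hx, hz, h⟩, fun he => ?_⟩
  have := step_rlen hx hz h
  rw [he] at this
  omega

/-- property of an intermediate element in a length-two interval -/
def MidM (n : ℕ) (x y z : Fin n → ℕ) : Prop :=
  IsRook n z ∧ (Step1 x z ∨ Step2 x z) ∧ (Step1 z y ∨ Step2 z y) ∧ rlen z = rlen x + 1

lemma mid_of_lt {x y z : Fin n → ℕ} (hlen : rlen y = rlen x + 2)
    (h1 : RookLt n x z) (h2 : RookLt n z y) : MidM n x y z := by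
  have l1 := rookLt_rlen h1
  have l2 := rookLt_rlen h2
  have hz : rlen z = rlen x + 1 := by omega
  have s1 := rookLt_single h1 hz
  have s2 := rookLt_single h2 (by omega)
  exact ⟨s1.2.1, s1.2.2, s2.2.2, hz⟩

lemma exists_mid {x y : Fin n → ℕ} (hx : IsRook n x) (hy : IsRook n y)
    (hlt : RookLt n x y) (hlen : rlen y = rlen x + 2) :
    ∃ z, RookLt n x z ∧ RookLt n z y := by
  obtain ⟨hle, hne⟩ := hlt
  rcases Relation.ReflTransGen.cases_head hle with rfl | ⟨m, hstep, hrest⟩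
  · exact absurd rfl hne
  rcases rookLe_rlen hrest with rfl | hlt2
  · -- a single step from x to y of length jump two; split it
    obtain ⟨hx', hy', hs⟩ := hstep
    rcases hs with h1 | h2
    · obtain ⟨i, c, hc, hupd⟩ := step1_elim h1
      subst hupd
      have hfr := update_fresh hy' hc
      have hcn : c ≤ n := by
        have := hy'.1 i
        rwa [Function.update_self] at this
      rcases rlen_update_two x i c hx hc hfr hlen with ⟨u, hu1, hu2, hu3⟩ | ⟨k, hk1, hk2⟩
      · have hzrook : IsRook n (Function.update x i u) :=
          rook_update hx (by omega) (fun k _ => hu3 k)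
        refine ⟨Function.update x i u,
          lt_of_step hx hzrook (Or.inl (step1_intro x hu1)), ?_⟩
        have hs2 : Step1 (Function.update x i u) (Function.update x i c) := by
          have he : Function.update x i c = Function.update (Function.update x i u) i c := by
            simp [Function.update_idem]
          rw [he]
          exact step1_intro _ (by rw [Function.update_self]; exact hu2)
        exact lt_of_step hzrook hy' (Or.inl hs2)
      · have hki : k ≠ i := by
          intro h; rw [h] at hk1; exact lt_irrefl i hk1
        have hfr2 : ∀ m, m ≠ k → x m ≠ c := by
          intro m hm hmc
          rcases eq_or_ne m i with rfl | hmi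
          · omega
          · exact hfr m hmi hmc
        have hzrook := rook_update hx hcn hfr2
        refine ⟨Function.update x k c,
          lt_of_step hx hzrook (Or.inl (step1_intro x (by omega : x k < c))), ?_⟩
        have heq : Function.update x i c = swapf (Function.update x k c) i k := by
          funext l
          rcases eq_or_ne l i with rfl | hli
          · rw [Function.update_self, swapf_fst, Function.update_self]
          rcases eq_or_ne l k with rfl | hlk
          · rw [Function.update_of_ne hki, swapf_snd, Function.update_of_ne (Ne.symm hki)]
            omega
          · rw [Function.update_of_ne hli, swapf_other _ hli hlk,
              Function.update_of_ne hlk]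
        have hvv : Function.update x k c i < Function.update x k c k := by
          rw [Function.update_self, Function.update_of_ne (Ne.symm hki)]
          omega
        exact lt_of_step hzrook hy' (Or.inr (by rw [heq]; exact step2_intro _ hk1 hvv))
    · obtain ⟨i, j, hij, hv, hupd⟩ := step2_elim h2
      subst hupd
      obtain ⟨k, hk1, hk2, hk3⟩ := rlen_swapf_two x i j hij hv (swap_fresh hx hv) hlen
      have hzrook := rook_swapf hx k j
      have hki : k ≠ i := fun h => by rw [h] at hk1; exact lt_irrefl i hk1
      have hkj : k ≠ j := fun h => by rw [h] at hk2; exact lt_irrefl j hk2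
      have hji : j ≠ i := fun h => by rw [h] at hij; exact lt_irrefl i hij
      refine ⟨swapf x k j,
        lt_of_step hx hzrook (Or.inr (step2_intro x hk2 (by omega : x k < x j))), ?_⟩
      have hij' : i ≠ j := ne_of_lt hij
      have heq : swapf x i j = swapf (swapf x k j) i k := by
        funext l
        rcases eq_or_ne l i with rfl | hli
        · rw [swapf_fst, swapf_fst, swapf_fst]
        rcases eq_or_ne l k with rfl | hlk
        · rw [swapf_other x hki hkj, swapf_snd, swapf_other x (Ne.symm hki) hij']
          exact hk3
        rcases eq_or_ne l j with rfl | hlj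
        · rw [swapf_snd, swapf_other _ hji (Ne.symm hkj), swapf_snd]
          exact hk3.symm
        · rw [swapf_other x hli hlj, swapf_other _ hli hlk, swapf_other x hlk hlj]
      have hvv : swapf x k j i < swapf x k j k := by
        rw [swapf_other x (Ne.symm hki) hij', swapf_fst]
        omega
      exact lt_of_step hzrook hy' (Or.inr (by rw [heq]; exact step2_intro _ hk1 hvv))
  · have hxm : x ≠ m := by
      intro he
      have := step_rlen hstep.1 hstep.2.1 hstep.2.2
      rw [he] at this
      omega
    have hmy : m ≠ y := by
      intro he
      rw [he] at hlt2
      omega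
    exact ⟨m, ⟨Relation.ReflTransGen.single hstep, hxm⟩, ⟨hrest, hmy⟩⟩

end OrderLemmas


section Moves

open Function

variable {x y z : Fin n → ℕ}

/-- Classification of all two-step paths from `x` to `y` through `z`. -/
lemma moves (hmid : MidM n x y z) :
    (∃ i c c', x i < c ∧ c < c' ∧ z = update x i c ∧ y i = c' ∧
      ∀ k, k ≠ i → y k = x k) ∨
    (∃ i i' c c', i ≠ i' ∧ x i < c ∧ x i' < c' ∧ z = update x i c ∧ y i = c ∧ y i' = c' ∧
      ∀ k, k ≠ i → k ≠ i' → y k = x k) ∨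
    (∃ i p q c, p < q ∧ i ≠ p ∧ i ≠ q ∧ x i < c ∧ x p < x q ∧ z = update x i c ∧
      y i = c ∧ y p = x q ∧ y q = x p ∧ ∀ k, k ≠ i → k ≠ p → k ≠ q → y k = x k) ∨
    (∃ p q c, p < q ∧ x p < c ∧ c < x q ∧ z = update x p c ∧
      y p = x q ∧ y q = c ∧ ∀ k, k ≠ p → k ≠ q → y k = x k) ∨
    (∃ p q c, p < q ∧ x q < c ∧ x p < c ∧ z = update x q c ∧
      y p = c ∧ y q = x p ∧ ∀ k, k ≠ p → k ≠ q → y k = x k) ∨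
    (∃ p q c, p < q ∧ x p < x q ∧ x q < c ∧ z = swapf x p q ∧
      y p = c ∧ y q = x p ∧ ∀ k, k ≠ p → k ≠ q → y k = x k) ∨
    (∃ p q c, p < q ∧ x p < x q ∧ x p < c ∧ z = swapf x p q ∧
      y p = x q ∧ y q = c ∧ ∀ k, k ≠ p → k ≠ q → y k = x k) ∨
    (∃ p q i c, p < q ∧ i ≠ p ∧ i ≠ q ∧ x p < x q ∧ x i < c ∧ z = swapf x p q ∧
      y p = x q ∧ y q = x p ∧ y i = c ∧ ∀ k, k ≠ p → k ≠ q → k ≠ i → y k = x k) ∨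
    (∃ p q r s, p < q ∧ r < s ∧ r ≠ p ∧ r ≠ q ∧ s ≠ p ∧ s ≠ q ∧ x p < x q ∧ x r < x s ∧
      z = swapf x p q ∧ y p = x q ∧ y q = x p ∧ y r = x s ∧ y s = x r ∧
      ∀ k, k ≠ p → k ≠ q → k ≠ r → k ≠ s → y k = x k) ∨
    (∃ p q s, p < q ∧ q < s ∧ x p < x q ∧ x p < x s ∧ z = swapf x p q ∧
      y p = x q ∧ y q = x s ∧ y s = x p ∧ ∀ k, k ≠ p → k ≠ q → k ≠ s → y k = x k) ∨
    (∃ p q s, p < q ∧ p < s ∧ s ≠ q ∧ x p < x q ∧ x q < x s ∧ z = swapf x p q ∧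
      y p = x s ∧ y q = x p ∧ y s = x q ∧ ∀ k, k ≠ p → k ≠ q → k ≠ s → y k = x k) ∨
    (∃ p q r, p < q ∧ r < q ∧ r ≠ p ∧ x p < x q ∧ x r < x p ∧ z = swapf x p q ∧
      y p = x q ∧ y r = x p ∧ y q = x r ∧ ∀ k, k ≠ p → k ≠ q → k ≠ r → y k = x k) ∨
    (∃ p q r, r < p ∧ p < q ∧ x p < x q ∧ x r < x q ∧ z = swapf x p q ∧
      y r = x q ∧ y p = x r ∧ y q = x p ∧ ∀ k, k ≠ p → k ≠ q → k ≠ r → y k = x k) := by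
  obtain ⟨hzrook, hm1, hm2, hlen1⟩ := hmid
  rcases hm1 with h1 | h1
  · obtain ⟨i, c, hc, rfl⟩ := step1_elim h1
    rcases hm2 with h2 | h2
    · obtain ⟨i', c', hc', hy⟩ := step1_elim h2
      rcases eq_or_ne i' i with rfl | hii
      · rw [update_self] at hc'
        left
        refine ⟨i', c, c', hc, hc', rfl, ?_, fun k hk => ?_⟩
        · rw [hy, update_self]
        · rw [hy, update_of_ne hk, update_of_ne hk]
      · rw [update_of_ne hii] at hc'
        right; left
        refine ⟨i, i', c, c', Ne.symm hii, hc, hc', rfl, ?_, ?_, ?_⟩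
        · rw [hy, update_of_ne (Ne.symm hii), update_self]
        · rw [hy, update_self]
        · intro k hk hk'
          rw [hy, update_of_ne hk', update_of_ne hk]
    · obtain ⟨p, q, hpq, hval, hy⟩ := step2_elim h2
      have hyval : ∀ k, y k = swapf (update x i c) p q k := fun k => by rw [hy]
      rcases eq_or_ne i p with rfl | hip
      · -- i = p : D4
        rw [update_self, update_of_ne (ne_of_gt hpq)] at hval
        right; right; right; left
        refine ⟨i, q, c, hpq, hc, hval, rfl, ?_, ?_, ?_⟩
        · rw [hyval i, swapf_fst, update_of_ne (ne_of_gt hpq)]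
        · rw [hyval q, swapf_snd, update_self]
        · intro k hk hk'
          rw [hyval k, swapf_other _ hk hk', update_of_ne hk]
      rcases eq_or_ne i q with rfl | hiq
      · -- i = q : D5
        rw [update_self, update_of_ne (Ne.symm hip)] at hval
        right; right; right; right; left
        refine ⟨p, i, c, hpq, hc, hval, rfl, ?_, ?_, ?_⟩
        · rw [hyval p, swapf_fst, update_self]
        · rw [hyval i, swapf_snd, update_of_ne (Ne.symm hip)]
        · intro k hk hk'
          rw [hyval k, swapf_other _ hk hk', update_of_ne hk']
      · -- D3
        rw [update_of_ne (Ne.symm hip), update_of_ne (Ne.symm hiq)] at hval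
        right; right; left
        refine ⟨i, p, q, c, hpq, hip, hiq, hc, hval, rfl, ?_, ?_, ?_, ?_⟩
        · rw [hyval i, swapf_other _ hip hiq, update_self]
        · rw [hyval p, swapf_fst, update_of_ne (Ne.symm hiq)]
        · rw [hyval q, swapf_snd, update_of_ne (Ne.symm hip)]
        · intro k hk hkp hkq
          rw [hyval k, swapf_other _ hkp hkq, update_of_ne hk]
  · obtain ⟨p, q, hpq, hv, rfl⟩ := step2_elim h1
    have hqp : q ≠ p := ne_of_gt hpq
    rcases hm2 with h2 | h2
    · obtain ⟨i, c, hc, hy⟩ := step1_elim h2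
      have hyval : ∀ k, y k = update (swapf x p q) i c k := fun k => by rw [hy]
      rcases eq_or_ne i p with rfl | hip
      · -- D6
        rw [swapf_fst] at hc
        right; right; right; right; right; left
        refine ⟨i, q, c, hpq, hv, hc, rfl, ?_, ?_, ?_⟩
        · rw [hyval i, update_self]
        · rw [hyval q, update_of_ne hqp, swapf_snd]
        · intro k hk hk'
          rw [hyval k, update_of_ne hk, swapf_other _ hk hk']
      rcases eq_or_ne i q with rfl | hiq
      · -- D7
        rw [swapf_snd] at hc
        right; right; right; right; right; right; left
        refine ⟨p, i, c, hpq, hv, hc, rfl, ?_, ?_, ?_⟩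
        · rw [hyval p, update_of_ne (Ne.symm hip), swapf_fst]
        · rw [hyval i, update_self]
        · intro k hk hk'
          rw [hyval k, update_of_ne hk', swapf_other _ hk hk']
      · -- D8
        rw [swapf_other _ hip hiq] at hc
        right; right; right; right; right; right; right; left
        refine ⟨p, q, i, c, hpq, hip, hiq, hv, hc, rfl, ?_, ?_, ?_, ?_⟩
        · rw [hyval p, update_of_ne (Ne.symm hip), swapf_fst]
        · rw [hyval q, update_of_ne (Ne.symm hiq), swapf_snd]
        · rw [hyval i, update_self]
        · intro k hkp hkq hk
          rw [hyval k, update_of_ne hk, swapf_other _ hkp hkq]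
    · obtain ⟨r, s, hrs, hval, hy⟩ := step2_elim h2
      have hyval : ∀ k, y k = swapf (swapf x p q) r s k := fun k => by rw [hy]
      rcases eq_or_ne r p with rfl | hrp
      · -- r = p
        rcases eq_or_ne s q with rfl | hsq
        · -- both coincide : contradiction
          rw [swapf_fst, swapf_snd] at hval
          omega
        · -- D11 : p = r, s ∉ {p,q}
          have hsp : s ≠ r := ne_of_gt hrs
          rw [swapf_fst, swapf_other _ hsp hsq] at hval
          right; right; right; right; right; right; right; right; right; right; left
          refine ⟨r, q, s, hpq, hrs, hsq, hv, hval, rfl, ?_, ?_, ?_, ?_⟩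
          · rw [hyval r, swapf_fst, swapf_other _ hsp hsq]
          · rw [hyval q, swapf_other _ hqp (Ne.symm hsq), swapf_snd]
          · rw [hyval s, swapf_snd, swapf_fst]
          · intro k hkp hkq hks
            rw [hyval k, swapf_other _ hkp hks, swapf_other _ hkp hkq]
      rcases eq_or_ne r q with rfl | hrq
      · -- r = q : D10  (s > q, s ≠ p since s > r = q > p)
        have hsp : s ≠ p := by
          intro h
          rw [h] at hrs
          exact absurd (lt_trans hpq hrs) (lt_irrefl p)
        have hsq : s ≠ r := ne_of_gt hrs
        rw [swapf_snd, swapf_other _ hsp hsq] at hval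
        right; right; right; right; right; right; right; right; right; left
        refine ⟨p, r, s, hpq, hrs, hv, hval, rfl, ?_, ?_, ?_, ?_⟩
        · rw [hyval p, swapf_other _ (Ne.symm hqp) (Ne.symm hsp), swapf_fst]
        · rw [hyval r, swapf_fst, swapf_other _ hsp hsq]
        · rw [hyval s, swapf_snd, swapf_snd]
        · intro k hkp hkq hks
          rw [hyval k, swapf_other _ hkq hks, swapf_other _ hkp hkq]
      rcases eq_or_ne s p with rfl | hsp
      · -- s = p : D13  (r < p)
        rw [swapf_other _ hrp hrq, swapf_fst] at hval
        right; right; right; right; right; right; right; right; right; right; right; right; 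
        refine ⟨s, q, r, hrs, hpq, hv, hval, rfl, ?_, ?_, ?_, ?_⟩
        · rw [hyval r, swapf_fst, swapf_fst]
        · rw [hyval s, swapf_snd, swapf_other _ hrp hrq]
        · rw [hyval q, swapf_other _ (Ne.symm hrq) hqp, swapf_snd]
        · intro k hkp hkq hkr
          rw [hyval k, swapf_other _ hkr hkp, swapf_other _ hkp hkq]
      rcases eq_or_ne s q with rfl | hsq
      · -- s = q : D12  (r ∉ {p,q}, r < q)
        rw [swapf_other _ hrp hrq, swapf_snd] at hval
        right; right; right; right; right; right; right; right; right; right; right; left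
        refine ⟨p, s, r, hpq, hrs, hrp, hv, hval, rfl, ?_, ?_, ?_, ?_⟩
        · rw [hyval p, swapf_other _ (Ne.symm hrp) (Ne.symm hqp), swapf_fst]
        · rw [hyval r, swapf_fst, swapf_snd]
        · rw [hyval s, swapf_snd, swapf_other _ hrp hrq]
        · intro k hkp hkq hkr
          rw [hyval k, swapf_other _ hkr hkq, swapf_other _ hkp hkq]
      · -- disjoint : D9
        rw [swapf_other _ hrp hrq, swapf_other _ hsp hsq] at hval
        right; right; right; right; right; right; right; right; left
        refine ⟨p, q, r, s, hpq, hrs, hrp, hrq, hsp, hsq, hv, hval, rfl, ?_, ?_, ?_, ?_, ?_⟩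
        · rw [hyval p, swapf_other _ (Ne.symm hrp) (Ne.symm hsp), swapf_fst]
        · rw [hyval q, swapf_other _ (Ne.symm hrq) (Ne.symm hsq), swapf_snd]
        · rw [hyval r, swapf_fst, swapf_other _ hsp hsq]
        · rw [hyval s, swapf_snd, swapf_other _ hrp hrq]
        · intro k hkp hkq hkr hks
          rw [hyval k, swapf_other _ hkr hks, swapf_other _ hkp hkq]

end Moves


section Cands

open Function

lemma two_classes {α : Type*} [Inhabited α] {S A B : α → Prop} (h : ∀ w, S w → A w ∨ B w)
    (hA : ∀ w w', S w → A w → S w' → A w' → w = w')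
    (hB : ∀ w w', S w → B w → S w' → B w' → w = w') :
    ∃ e₁ e₂, ∀ w, S w → w = e₁ ∨ w = e₂ := by
  classical
  by_cases ha : ∃ w, S w ∧ A w
  · obtain ⟨a, hSa, hAa⟩ := ha
    by_cases hb : ∃ w, S w ∧ B w
    · obtain ⟨b, hSb, hBb⟩ := hb
      exact ⟨a, b, fun w hw => (h w hw).imp (fun hh => hA w a hw hh hSa hAa)
        (fun hh => hB w b hw hh hSb hBb)⟩
    · refine ⟨a, a, fun w hw => Or.inl ?_⟩
      rcases h w hw with hh | hh
      · exact hA w a hw hh hSa hAa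
      · exact absurd ⟨w, hw, hh⟩ hb
  · by_cases hb : ∃ w, S w ∧ B w
    · obtain ⟨b, hSb, hBb⟩ := hb
      refine ⟨b, b, fun w hw => Or.inl ?_⟩
      rcases h w hw with hh | hh
      · exact absurd ⟨w, hw, hh⟩ ha
      · exact hB w b hw hh hSb hBb
    · refine ⟨default, default, fun w hw => ?_⟩
      rcases h w hw with hh | hh
      · exact absurd ⟨w, hw, hh⟩ ha
      · exact absurd ⟨w, hw, hh⟩ hb

lemma uniqA {x : Fin n → ℕ} (hx : IsRook n x) {i : Fin n} {c₁ c₂ : ℕ}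
    (h1 : x i < c₁) (h2 : x i < c₂) (hlt : c₁ < c₂)
    (hr1 : IsRook n (update x i c₁)) (hr2 : IsRook n (update x i c₂))
    (hl2 : rlen (update x i c₂) = rlen x + 1) : False := by
  have hfr2 := update_fresh hr2 h2
  have hcov := rlen_update_cov x i c₂ hx h2 hfr2 hl2
  obtain ⟨m, hmi, hmc⟩ := hcov.2 c₁ h1 hlt
  exact update_fresh hr1 h1 m (ne_of_lt hmi) hmc

lemma uniqB {x : Fin n → ℕ} (hx : IsRook n x) {i k k' : Fin n} {c : ℕ}
    (hkk' : k < k')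
    (hvk : x k = x i) (hvk' : x k' = x i) (hc : x i < c)
    (hr : IsRook n (update x k c)) (hl : rlen (update x k c) = rlen x + 1) : False := by
  have h1 : x k < c := by omega
  have hcov := rlen_update_cov x k c hx h1 (update_fresh hr h1) hl
  exact hcov.1 k' hkk' (by omega) (by omega)

/-- the候 candidates lemma for the pattern `y = update x i c`. -/
lemma candP1 {x y : Fin n → ℕ} (hx : IsRook n x) (hy : IsRook n y)
    {i : Fin n} {c : ℕ} (hc : x i < c) (hyi : y i = c) (hyo : ∀ k, k ≠ i → y k = x k) :
    ∃ e₁ e₂ : Fin n → ℕ, ∀ z, MidM n x y z → z = e₁ ∨ z = e₂ := by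
  have chg : ∀ p, y p ≠ x p → p = i := by
    intro p hp
    by_contra h'
    exact hp (hyo p h')
  apply two_classes (S := MidM n x y)
    (A := fun w => ∃ c', x i < c' ∧ c' < c ∧ w = update x i c')
    (B := fun w => ∃ k, i < k ∧ x k = x i ∧ w = update x k c)
  · -- split
    intro w hw
    rcases moves hw with
      ⟨i₀, c₁, c₂, h1, h2, hzf, hy1, hyoth⟩ |
      ⟨i₀, i₁, c₁, c₂, hne, hc1, hc2, hzf, hyi0, hyi1, hyo2⟩ |
      ⟨i₀, p, q, c₀, hpq, hip, hiq, hc0, hv, hzf, hy1, hy2, hy3, hyo2⟩ |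
      ⟨p, q, c₀, hpq, h1, h2, hzf, hyp, hyq, hyo2⟩ |
      ⟨p, q, c₀, hpq, h1, h2, hzf, hyp, hyq, hyo2⟩ |
      ⟨p, q, c₀, hpq, hv, h2, hzf, hyp, hyq, hyo2⟩ |
      ⟨p, q, c₀, hpq, hv, h2, hzf, hyp, hyq, hyo2⟩ |
      ⟨p, q, i₀, c₀, hpq, hip, hiq, hv, hc0, hzf, hy1, hy2, hy3, hyo2⟩ |
      ⟨p, q, r, s, hpq, hrs, hrp, hrq, hsp, hsq, hv, hv2, hzf, hy1, hy2, hy3, hy4, hyo2⟩ |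
      ⟨p, q, s, hpq, hqs, hv, hv2, hzf, hy1, hy2, hy3, hyo2⟩ |
      ⟨p, q, s, hpq, hps, hsq, hv, hv2, hzf, hy1, hy2, hy3, hyo2⟩ |
      ⟨p, q, r, hpq, hrq, hrp, hv, hv2, hzf, hy1, hy2, hy3, hyo2⟩ |
      ⟨p, q, r, hrp, hpq, hv, hv2, hzf, hy1, hy2, hy3, hyo2⟩
    · -- D1 : class A
      have hii : i₀ = i := chg i₀ (by omega)
      subst hii
      rw [hyi] at hy1
      exact Or.inl ⟨c₁, h1, by omega, hzf⟩
    · -- D2 : kill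
      have e0 : i₀ = i := chg i₀ (by omega)
      have e1 : i₁ = i := chg i₁ (by omega)
      rw [← e1] at e0
      exact absurd e0 hne
    · -- D3 : kill
      have e0 : i₀ = i := chg i₀ (by omega)
      have e1 : p = i := chg p (by omega)
      rw [← e1] at e0
      exact absurd e0 hip
    · -- D4 : kill
      have e0 : p = i := chg p (by omega)
      have e1 : q = i := chg q (by omega)
      rw [← e1] at e0
      exact absurd e0 (ne_of_lt hpq)
    · -- D5 : class B or kill
      by_cases hco : x p = x q
      · have e0 : p = i := chg p (by omega)
        subst e0
        rw [hyi] at hyp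
        exact Or.inr ⟨q, hpq, by omega, by rw [hyp]; exact hzf⟩
      · have e0 : p = i := chg p (by omega)
        have e1 : q = i := chg q (by omega)
        rw [← e1] at e0
        exact absurd e0 (ne_of_lt hpq)
    · -- D6 : kill
      have e0 : p = i := chg p (by omega)
      have e1 : q = i := chg q (by omega)
      rw [← e1] at e0
      exact absurd e0 (ne_of_lt hpq)
    · -- D7 : kill (using rookness of y in the degenerate case)
      by_cases hco : c₀ = x q
      · have e0 : p = i := chg p (by omega)
        have e2 : y p = y q := by rw [hyp, hyq, hco]
        have : p = q := hy.2 p q (by omega) e2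
        exact absurd this (ne_of_lt hpq)
      · have e0 : p = i := chg p (by omega)
        have e1 : q = i := chg q (by omega)
        rw [← e1] at e0
        exact absurd e0 (ne_of_lt hpq)
    · -- D8 : kill
      have e0 : p = i := chg p (by omega)
      have e1 : q = i := chg q (by omega)
      rw [← e1] at e0
      exact absurd e0 (ne_of_lt hpq)
    · -- D9 : kill
      have e0 : p = i := chg p (by omega)
      have e1 : q = i := chg q (by omega)
      rw [← e1] at e0
      exact absurd e0 (ne_of_lt hpq)
    · -- D10 : kill
      have hxq0 : x q ≠ 0 := by omega
      have hsq' : x s ≠ x q := fun h => absurd (hx.2 q s hxq0 h.symm) (ne_of_lt hqs)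
      have e0 : p = i := chg p (by omega)
      have e1 : q = i := chg q (by omega)
      rw [← e1] at e0
      exact absurd e0 (ne_of_lt hpq)
    · -- D11 : kill
      have e0 : p = i := chg p (by omega)
      have e1 : q = i := chg q (by omega)
      rw [← e1] at e0
      exact absurd e0 (ne_of_lt hpq)
    · -- D12 : kill
      have e0 : p = i := chg p (by omega)
      have e1 : r = i := chg r (by omega)
      rw [← e1] at e0
      exact absurd e0 (Ne.symm hrp)
    · -- D13 : kill
      have e0 : r = i := chg r (by omega)
      have e1 : q = i := chg q (by omega)
      rw [← e1] at e0
      exact absurd e0 (ne_of_lt (lt_trans hrp hpq))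
  · -- uniqueness in class A
    rintro w w' hw ⟨c₁, h11, h12, rfl⟩ hw' ⟨c₂, h21, h22, rfl⟩
    rcases lt_trichotomy c₁ c₂ with h | h | h
    · exact absurd (uniqA hx h11 h21 h hw.1 hw'.1 hw'.2.2.2) id
    · rw [h]
    · exact absurd (uniqA hx h21 h11 h hw'.1 hw.1 hw.2.2.2) id
  · -- uniqueness in class B
    rintro w w' hw ⟨k, hk1, hk2, rfl⟩ hw' ⟨k', hk1', hk2', rfl⟩
    rcases lt_trichotomy k k' with h | h | h
    · exact absurd (uniqB hx h hk2 hk2' hc hw.1 hw.2.2.2) id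
    · rw [h]
    · exact absurd (uniqB hx h hk2' hk2 hc hw'.1 hw'.2.2.2) id

end Cands


section CandP4

open Function

lemma card3_le {a b c' : Fin n} : ({a, b, c'} : Finset (Fin n)).card ≤ 3 := by
  apply le_trans (Finset.card_insert_le _ _)
  have := Finset.card_insert_le b ({c'} : Finset (Fin n))
  simp only [Finset.card_singleton] at this ⊢
  omega

lemma candP4 {x y : Fin n → ℕ} (hx : IsRook n x) (hy : IsRook n y)
    {p q r s : Fin n}
    (hpq : p < q) (hrs : r < s) (hrp : r ≠ p) (hrq : r ≠ q) (hsp : s ≠ p) (hsq : s ≠ q)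
    (hv1 : x p < x q) (hv2 : x r < x s)
    (hyp : y p = x q) (hyq : y q = x p) (hyr : y r = x s) (hys : y s = x r)
    (hyo : ∀ k, k ≠ p → k ≠ q → k ≠ r → k ≠ s → y k = x k) :
    ∃ e₁ e₂ : Fin n → ℕ, ∀ z, MidM n x y z → z = e₁ ∨ z = e₂ := by
  have hchp : y p ≠ x p := by omega
  have hchq : y q ≠ x q := by omega
  have hchr : y r ≠ x r := by omega
  have hchs : y s ≠ x s := by omega
  have chg4 : ∀ k, y k ≠ x k → (k = p ∨ k = q ∨ k = r ∨ k = s) := by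
    intro k hk
    by_contra hcon
    push_neg at hcon
    exact hk (hyo k hcon.1 hcon.2.1 hcon.2.2.1 hcon.2.2.2)
  have hm1 : p ∉ ({q, r, s} : Finset (Fin n)) := by
    simp only [Finset.mem_insert, Finset.mem_singleton]
    push_neg
    exact ⟨ne_of_lt hpq, Ne.symm hrp, Ne.symm hsp⟩
  have hm2 : q ∉ ({r, s} : Finset (Fin n)) := by
    simp only [Finset.mem_insert, Finset.mem_singleton]
    push_neg
    exact ⟨Ne.symm hrq, Ne.symm hsq⟩
  have hm3 : r ∉ ({s} : Finset (Fin n)) := by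
    simp only [Finset.mem_singleton]
    exact ne_of_lt hrs
  have hcard4 : ({p, q, r, s} : Finset (Fin n)).card = 4 := by
    rw [Finset.card_insert_of_notMem hm1, Finset.card_insert_of_notMem hm2,
      Finset.card_insert_of_notMem hm3, Finset.card_singleton]
  have mem3 : ∀ a b c' : Fin n, (∀ k, k ≠ a → k ≠ b → k ≠ c' → y k = x k) → False := by
    intro a b c' hoth
    have h1 : p = a ∨ p = b ∨ p = c' := by
      by_contra hcon; push_neg at hcon; exact hchp (hoth p hcon.1 hcon.2.1 hcon.2.2)
    have h2 : q = a ∨ q = b ∨ q = c' := by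
      by_contra hcon; push_neg at hcon; exact hchq (hoth q hcon.1 hcon.2.1 hcon.2.2)
    have h3 : r = a ∨ r = b ∨ r = c' := by
      by_contra hcon; push_neg at hcon; exact hchr (hoth r hcon.1 hcon.2.1 hcon.2.2)
    have h4 : s = a ∨ s = b ∨ s = c' := by
      by_contra hcon; push_neg at hcon; exact hchs (hoth s hcon.1 hcon.2.1 hcon.2.2)
    have hsub : ({p, q, r, s} : Finset (Fin n)) ⊆ ({a, b, c'} : Finset (Fin n)) := by
      intro k hk
      simp only [Finset.mem_insert, Finset.mem_singleton] at hk ⊢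
      rcases hk with rfl|rfl|rfl|rfl
      exacts [h1, h2, h3, h4]
    have := Finset.card_le_card hsub
    have := @card3_le n a b c'
    omega
  have mem2 : ∀ a b : Fin n, (∀ k, k ≠ a → k ≠ b → y k = x k) → False := by
    intro a b hoth
    exact mem3 a b b (fun k h1 h2 _ => hoth k h1 h2)
  refine ⟨swapf x p q, swapf x r s, ?_⟩
  intro w hw
  rcases moves hw with
    ⟨i₀, c₁, c₂, h1, h2, hzf, hy1, hyoth⟩ |
    ⟨i₀, i₁, c₁, c₂, hne, hc1, hc2, hzf, hyi0, hyi1, hyo2⟩ |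
    ⟨i₀, p₀, q₀, c₀, hpq₀, hip, hiq, hc0, hv₀, hzf, hy1, hy2, hy3, hyo2⟩ |
    ⟨p₀, q₀, c₀, hpq₀, h1, h2, hzf, hy1, hy2, hyo2⟩ |
    ⟨p₀, q₀, c₀, hpq₀, h1, h2, hzf, hy1, hy2, hyo2⟩ |
    ⟨p₀, q₀, c₀, hpq₀, hv₀, h2, hzf, hy1, hy2, hyo2⟩ |
    ⟨p₀, q₀, c₀, hpq₀, hv₀, h2, hzf, hy1, hy2, hyo2⟩ |
    ⟨p₀, q₀, i₀, c₀, hpq₀, hip, hiq, hv₀, hc0, hzf, hy1, hy2, hy3, hyo2⟩ |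
    ⟨p₀, q₀, r₀, s₀, hpq₀, hrs₀, hrp₀, hrq₀, hsp₀, hsq₀, hv₀, hv₀2, hzf, hy1, hy2, hy3, hy4, hyo2⟩ |
    ⟨p₀, q₀, s₀, hpq₀, hqs₀, hv₀, hv₀2, hzf, hy1, hy2, hy3, hyo2⟩ |
    ⟨p₀, q₀, s₀, hpq₀, hps₀, hsq₀, hv₀, hv₀2, hzf, hy1, hy2, hy3, hyo2⟩ |
    ⟨p₀, q₀, r₀, hpq₀, hrq₀, hrp₀, hv₀, hv₀2, hzf, hy1, hy2, hy3, hyo2⟩ |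
    ⟨p₀, q₀, r₀, hrp₀, hpq₀, hv₀, hv₀2, hzf, hy1, hy2, hy3, hyo2⟩
  · exact absurd (mem2 i₀ i₀ (fun k h1 _ => hyoth k h1)) id
  · exact absurd (mem2 i₀ i₁ hyo2) id
  · exact absurd (mem3 i₀ p₀ q₀ hyo2) id
  · exact absurd (mem2 p₀ q₀ hyo2) id
  · exact absurd (mem2 p₀ q₀ hyo2) id
  · exact absurd (mem2 p₀ q₀ hyo2) id
  · exact absurd (mem2 p₀ q₀ hyo2) id
  · exact absurd (mem3 p₀ q₀ i₀ hyo2) id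
  · -- D9 : the real case
    -- p₀ lands in one of the four slots
    have hchp0 : y p₀ ≠ x p₀ := by omega
    rcases chg4 p₀ hchp0 with h | h | h | h
    · -- p₀ = p ; x q₀ = x q hence q₀ = q
      subst h
      rw [hyp] at hy1
      have hq0 : q₀ = q := hx.2 q₀ q (by omega) hy1.symm
      subst hq0
      exact Or.inl hzf
    · -- p₀ = q : value contradiction
      subst h
      rw [hyq] at hy1
      omega
    · -- p₀ = r : q₀ = s
      subst h
      rw [hyr] at hy1
      have hq0 : q₀ = s := hx.2 q₀ s (by omega) hy1.symm
      subst hq0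
      exact Or.inr hzf
    · -- p₀ = s : value contradiction
      subst h
      rw [hys] at hy1
      omega
  · exact absurd (mem3 p₀ q₀ s₀ hyo2) id
  · exact absurd (mem3 p₀ q₀ s₀ hyo2) id
  · exact absurd (mem3 p₀ q₀ r₀ hyo2) id
  · exact absurd (mem3 p₀ q₀ r₀ hyo2) id

end CandP4


section CandP3

open Function

lemma valify3 {d a b c : Fin n} (m : d = a ∨ d = b ∨ d = c) :
    (d : ℕ) = a ∨ (d : ℕ) = b ∨ (d : ℕ) = c := by
  rcases m with h | h | h
  · exact Or.inl (by rw [h])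
  · exact Or.inr (Or.inl (by rw [h]))
  · exact Or.inr (Or.inr (by rw [h]))

lemma valify2 {d a b : Fin n} (m : d = a ∨ d = b) : (d : ℕ) = a ∨ (d : ℕ) = b := by
  rcases m with h | h
  · exact Or.inl (by rw [h])
  · exact Or.inr (by rw [h])

/-- Net classification for the 3-position pattern. -/
lemma net3 {x y : Fin n → ℕ} {d₁ d₂ d₃ : Fin n} (h12 : d₁ < d₂) (h23 : d₂ < d₃)
    (hch1 : y d₁ ≠ x d₁) (hch2 : y d₂ ≠ x d₂) (hch3 : y d₃ ≠ x d₃)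
    (hyo : ∀ k, k ≠ d₁ → k ≠ d₂ → k ≠ d₃ → y k = x k)
    {w : Fin n → ℕ} (hw : MidM n x y w) :
    (w = update x d₃ (y d₃) ∧ y d₁ = x d₂ ∧ y d₂ = x d₁ ∧ x d₁ < x d₂ ∧ x d₃ < y d₃) ∨
    (w = update x d₂ (y d₂) ∧ y d₁ = x d₃ ∧ y d₃ = x d₁ ∧ x d₁ < x d₃ ∧ x d₂ < y d₂) ∨
    (w = update x d₁ (y d₁) ∧ y d₂ = x d₃ ∧ y d₃ = x d₂ ∧ x d₂ < x d₃ ∧ x d₁ < y d₁) ∨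
    (w = swapf x d₁ d₂ ∧ y d₁ = x d₂ ∧ y d₂ = x d₁ ∧ x d₁ < x d₂) ∨
    (w = swapf x d₁ d₃ ∧ y d₁ = x d₃ ∧ y d₃ = x d₁ ∧ x d₁ < x d₃) ∨
    (w = swapf x d₂ d₃ ∧ y d₂ = x d₃ ∧ y d₃ = x d₂ ∧ x d₂ < x d₃) ∨
    (w = swapf x d₁ d₂ ∧ (y d₁ = x d₂ ∧ y d₂ = x d₃ ∧ y d₃ = x d₁) ∧ x d₁ < x d₂ ∧ x d₁ < x d₃) ∨
    (w = swapf x d₁ d₂ ∧ (y d₁ = x d₃ ∧ y d₂ = x d₁ ∧ y d₃ = x d₂) ∧ x d₁ < x d₂ ∧ x d₂ < x d₃) ∨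
    (w = swapf x d₁ d₃ ∧ (y d₁ = x d₂ ∧ y d₂ = x d₃ ∧ y d₃ = x d₁) ∧ x d₁ < x d₃ ∧ x d₃ < x d₂) ∨
    (w = swapf x d₂ d₃ ∧ (y d₁ = x d₂ ∧ y d₂ = x d₃ ∧ y d₃ = x d₁) ∧ x d₁ < x d₂ ∧ x d₂ < x d₃) ∨
    (w = swapf x d₁ d₃ ∧ (y d₁ = x d₃ ∧ y d₂ = x d₁ ∧ y d₃ = x d₂) ∧ x d₂ < x d₁ ∧ x d₁ < x d₃) ∨
    (w = swapf x d₂ d₃ ∧ (y d₁ = x d₃ ∧ y d₂ = x d₁ ∧ y d₃ = x d₂) ∧ x d₂ < x d₃ ∧ x d₁ < x d₃) := by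
  have h12' : (d₁ : ℕ) < d₂ := h12
  have h23' : (d₂ : ℕ) < d₃ := h23
  rcases moves hw with
    ⟨i₀, c₁, c₂, h1, h2, hzf, hy1, hyoth⟩ |
    ⟨i₀, i₁, c₁, c₂, hne, hc1, hc2, hzf, hyi0, hyi1, hyo2⟩ |
    ⟨i₀, p₀, q₀, c₀, hpq₀, hip, hiq, hc0, hv₀, hzf, hy1, hy2, hy3, hyo2⟩ |
    ⟨p₀, q₀, c₀, hpq₀, h1, h2, hzf, hy1, hy2, hyo2⟩ |
    ⟨p₀, q₀, c₀, hpq₀, h1, h2, hzf, hy1, hy2, hyo2⟩ |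
    ⟨p₀, q₀, c₀, hpq₀, hv₀, h2, hzf, hy1, hy2, hyo2⟩ |
    ⟨p₀, q₀, c₀, hpq₀, hv₀, h2, hzf, hy1, hy2, hyo2⟩ |
    ⟨p₀, q₀, i₀, c₀, hpq₀, hip, hiq, hv₀, hc0, hzf, hy1, hy2, hy3, hyo2⟩ |
    ⟨p₀, q₀, r₀, s₀, hpq₀, hrs₀, hrp₀, hrq₀, hsp₀, hsq₀, hv₀, hv₀2, hzf, hy1, hy2, hy3, hy4, hyo2⟩ |
    ⟨p₀, q₀, s₀, hpq₀, hqs₀, hv₀, hv₀2, hzf, hy1, hy2, hy3, hyo2⟩ |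
    ⟨p₀, q₀, s₀, hpq₀, hps₀, hsq₀, hv₀, hv₀2, hzf, hy1, hy2, hy3, hyo2⟩ |
    ⟨p₀, q₀, r₀, hpq₀, hrq₀, hrp₀, hv₀, hv₀2, hzf, hy1, hy2, hy3, hyo2⟩ |
    ⟨p₀, q₀, r₀, hrp₀, hpq₀, hv₀, hv₀2, hzf, hy1, hy2, hy3, hyo2⟩
  · -- D1: support 1
    exfalso
    have m1 : (d₁ : ℕ) = i₀ ∨ (d₁ : ℕ) = i₀ := valify2 (by
      by_contra hcon; push_neg at hcon; exact hch1 (hyoth d₁ hcon.1))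
    have m2 : (d₂ : ℕ) = i₀ ∨ (d₂ : ℕ) = i₀ := valify2 (by
      by_contra hcon; push_neg at hcon; exact hch2 (hyoth d₂ hcon.1))
    omega
  · -- D2: support 2
    exfalso
    have m1 : (d₁ : ℕ) = i₀ ∨ (d₁ : ℕ) = i₁ := valify2 (by
      by_contra hcon; push_neg at hcon; exact hch1 (hyo2 d₁ hcon.1 hcon.2))
    have m2 : (d₂ : ℕ) = i₀ ∨ (d₂ : ℕ) = i₁ := valify2 (by
      by_contra hcon; push_neg at hcon; exact hch2 (hyo2 d₂ hcon.1 hcon.2))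
    have m3 : (d₃ : ℕ) = i₀ ∨ (d₃ : ℕ) = i₁ := valify2 (by
      by_contra hcon; push_neg at hcon; exact hch3 (hyo2 d₃ hcon.1 hcon.2))
    omega
  · -- D3: I + T disjoint
    have m1 : (d₁ : ℕ) = i₀ ∨ (d₁ : ℕ) = p₀ ∨ (d₁ : ℕ) = q₀ := valify3 (by
      by_contra hcon; push_neg at hcon; exact hch1 (hyo2 d₁ hcon.1 hcon.2.1 hcon.2.2))
    have m2 : (d₂ : ℕ) = i₀ ∨ (d₂ : ℕ) = p₀ ∨ (d₂ : ℕ) = q₀ := valify3 (by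
      by_contra hcon; push_neg at hcon; exact hch2 (hyo2 d₂ hcon.1 hcon.2.1 hcon.2.2))
    have m3 : (d₃ : ℕ) = i₀ ∨ (d₃ : ℕ) = p₀ ∨ (d₃ : ℕ) = q₀ := valify3 (by
      by_contra hcon; push_neg at hcon; exact hch3 (hyo2 d₃ hcon.1 hcon.2.1 hcon.2.2))
    have hip' : (i₀ : ℕ) ≠ p₀ := fun h => hip (Fin.ext h)
    have hiq' : (i₀ : ℕ) ≠ q₀ := fun h => hiq (Fin.ext h)
    have hpq' : (p₀ : ℕ) < q₀ := hpq₀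
    have hassign : ((i₀ : ℕ) = d₁ ∧ (p₀ : ℕ) = d₂ ∧ (q₀ : ℕ) = d₃) ∨
        ((i₀ : ℕ) = d₂ ∧ (p₀ : ℕ) = d₁ ∧ (q₀ : ℕ) = d₃) ∨
        ((i₀ : ℕ) = d₃ ∧ (p₀ : ℕ) = d₁ ∧ (q₀ : ℕ) = d₂) := by omega
    rcases hassign with ⟨e1, e2, e3⟩ | ⟨e1, e2, e3⟩ | ⟨e1, e2, e3⟩ <;>
      obtain rfl := Fin.ext e1 <;> obtain rfl := Fin.ext e2 <;> obtain rfl := Fin.ext e3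
    · -- i₀ = d₁ : S3
      rw [← hy1] at hzf
      exact Or.inr (Or.inr (Or.inl ⟨hzf, hy2, hy3, hv₀, by omega⟩))
    · -- i₀ = d₂ : S2
      rw [← hy1] at hzf
      exact Or.inr (Or.inl ⟨hzf, hy2, hy3, hv₀, by omega⟩)
    · -- i₀ = d₃ : S1
      rw [← hy1] at hzf
      exact Or.inl ⟨hzf, hy2, hy3, hv₀, by omega⟩
  · -- D4: support 2
    exfalso
    have m1 : (d₁ : ℕ) = p₀ ∨ (d₁ : ℕ) = q₀ := valify2 (by
      by_contra hcon; push_neg at hcon; exact hch1 (hyo2 d₁ hcon.1 hcon.2))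
    have m2 : (d₂ : ℕ) = p₀ ∨ (d₂ : ℕ) = q₀ := valify2 (by
      by_contra hcon; push_neg at hcon; exact hch2 (hyo2 d₂ hcon.1 hcon.2))
    have m3 : (d₃ : ℕ) = p₀ ∨ (d₃ : ℕ) = q₀ := valify2 (by
      by_contra hcon; push_neg at hcon; exact hch3 (hyo2 d₃ hcon.1 hcon.2))
    omega
  · -- D5: support 2
    exfalso
    have m1 : (d₁ : ℕ) = p₀ ∨ (d₁ : ℕ) = q₀ := valify2 (by
      by_contra hcon; push_neg at hcon; exact hch1 (hyo2 d₁ hcon.1 hcon.2))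
    have m2 : (d₂ : ℕ) = p₀ ∨ (d₂ : ℕ) = q₀ := valify2 (by
      by_contra hcon; push_neg at hcon; exact hch2 (hyo2 d₂ hcon.1 hcon.2))
    have m3 : (d₃ : ℕ) = p₀ ∨ (d₃ : ℕ) = q₀ := valify2 (by
      by_contra hcon; push_neg at hcon; exact hch3 (hyo2 d₃ hcon.1 hcon.2))
    omega
  · -- D6: support 2
    exfalso
    have m1 : (d₁ : ℕ) = p₀ ∨ (d₁ : ℕ) = q₀ := valify2 (by
      by_contra hcon; push_neg at hcon; exact hch1 (hyo2 d₁ hcon.1 hcon.2))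
    have m2 : (d₂ : ℕ) = p₀ ∨ (d₂ : ℕ) = q₀ := valify2 (by
      by_contra hcon; push_neg at hcon; exact hch2 (hyo2 d₂ hcon.1 hcon.2))
    have m3 : (d₃ : ℕ) = p₀ ∨ (d₃ : ℕ) = q₀ := valify2 (by
      by_contra hcon; push_neg at hcon; exact hch3 (hyo2 d₃ hcon.1 hcon.2))
    omega
  · -- D7: support 2
    exfalso
    have m1 : (d₁ : ℕ) = p₀ ∨ (d₁ : ℕ) = q₀ := valify2 (by
      by_contra hcon; push_neg at hcon; exact hch1 (hyo2 d₁ hcon.1 hcon.2))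
    have m2 : (d₂ : ℕ) = p₀ ∨ (d₂ : ℕ) = q₀ := valify2 (by
      by_contra hcon; push_neg at hcon; exact hch2 (hyo2 d₂ hcon.1 hcon.2))
    have m3 : (d₃ : ℕ) = p₀ ∨ (d₃ : ℕ) = q₀ := valify2 (by
      by_contra hcon; push_neg at hcon; exact hch3 (hyo2 d₃ hcon.1 hcon.2))
    omega
  · -- D8: T + I disjoint
    have m1 : (d₁ : ℕ) = p₀ ∨ (d₁ : ℕ) = q₀ ∨ (d₁ : ℕ) = i₀ := valify3 (by
      by_contra hcon; push_neg at hcon; exact hch1 (hyo2 d₁ hcon.1 hcon.2.1 hcon.2.2))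
    have m2 : (d₂ : ℕ) = p₀ ∨ (d₂ : ℕ) = q₀ ∨ (d₂ : ℕ) = i₀ := valify3 (by
      by_contra hcon; push_neg at hcon; exact hch2 (hyo2 d₂ hcon.1 hcon.2.1 hcon.2.2))
    have m3 : (d₃ : ℕ) = p₀ ∨ (d₃ : ℕ) = q₀ ∨ (d₃ : ℕ) = i₀ := valify3 (by
      by_contra hcon; push_neg at hcon; exact hch3 (hyo2 d₃ hcon.1 hcon.2.1 hcon.2.2))
    have hip' : (i₀ : ℕ) ≠ p₀ := fun h => hip (Fin.ext h)
    have hiq' : (i₀ : ℕ) ≠ q₀ := fun h => hiq (Fin.ext h)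
    have hpq' : (p₀ : ℕ) < q₀ := hpq₀
    have hassign : ((i₀ : ℕ) = d₁ ∧ (p₀ : ℕ) = d₂ ∧ (q₀ : ℕ) = d₃) ∨
        ((i₀ : ℕ) = d₂ ∧ (p₀ : ℕ) = d₁ ∧ (q₀ : ℕ) = d₃) ∨
        ((i₀ : ℕ) = d₃ ∧ (p₀ : ℕ) = d₁ ∧ (q₀ : ℕ) = d₂) := by omega
    rcases hassign with ⟨e1, e2, e3⟩ | ⟨e1, e2, e3⟩ | ⟨e1, e2, e3⟩ <;>
      obtain rfl := Fin.ext e1 <;> obtain rfl := Fin.ext e2 <;> obtain rfl := Fin.ext e3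
    · -- i₀ = d₁ : S6
      exact Or.inr (Or.inr (Or.inr (Or.inr (Or.inr (Or.inl ⟨hzf, hy1, hy2, hv₀⟩)))))
    · -- i₀ = d₂ : S5
      exact Or.inr (Or.inr (Or.inr (Or.inr (Or.inl ⟨hzf, hy1, hy2, hv₀⟩))))
    · -- i₀ = d₃ : S4
      exact Or.inr (Or.inr (Or.inr (Or.inl ⟨hzf, hy1, hy2, hv₀⟩)))
  · -- D9: support 4, kill
    exfalso
    have hchp0 : y p₀ ≠ x p₀ := by omega
    have hchq0 : y q₀ ≠ x q₀ := by omega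
    have hchr0 : y r₀ ≠ x r₀ := by omega
    have hchs0 : y s₀ ≠ x s₀ := by omega
    have cov : ∀ k, y k ≠ x k → ((k : ℕ) = d₁ ∨ (k : ℕ) = d₂ ∨ (k : ℕ) = d₃) := by
      intro k hk
      refine valify3 ?_
      by_contra hcon; push_neg at hcon; exact hk (hyo k hcon.1 hcon.2.1 hcon.2.2)
    have c1 := cov p₀ hchp0
    have c2 := cov q₀ hchq0
    have c3 := cov r₀ hchr0
    have c4 := cov s₀ hchs0
    have n1 : (p₀ : ℕ) < q₀ := hpq₀
    have n2 : (r₀ : ℕ) < s₀ := hrs₀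
    have n3 : (r₀ : ℕ) ≠ p₀ := fun h => hrp₀ (Fin.ext h)
    have n4 : (r₀ : ℕ) ≠ q₀ := fun h => hrq₀ (Fin.ext h)
    have n5 : (s₀ : ℕ) ≠ p₀ := fun h => hsp₀ (Fin.ext h)
    have n6 : (s₀ : ℕ) ≠ q₀ := fun h => hsq₀ (Fin.ext h)
    omega
  · -- D10 : S7
    have m1 : (d₁ : ℕ) = p₀ ∨ (d₁ : ℕ) = q₀ ∨ (d₁ : ℕ) = s₀ := valify3 (by
      by_contra hcon; push_neg at hcon; exact hch1 (hyo2 d₁ hcon.1 hcon.2.1 hcon.2.2))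
    have m2 : (d₂ : ℕ) = p₀ ∨ (d₂ : ℕ) = q₀ ∨ (d₂ : ℕ) = s₀ := valify3 (by
      by_contra hcon; push_neg at hcon; exact hch2 (hyo2 d₂ hcon.1 hcon.2.1 hcon.2.2))
    have m3 : (d₃ : ℕ) = p₀ ∨ (d₃ : ℕ) = q₀ ∨ (d₃ : ℕ) = s₀ := valify3 (by
      by_contra hcon; push_neg at hcon; exact hch3 (hyo2 d₃ hcon.1 hcon.2.1 hcon.2.2))
    have n1 : (p₀ : ℕ) < q₀ := hpq₀
    have n2 : (q₀ : ℕ) < s₀ := hqs₀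
    have hassign : ((p₀ : ℕ) = d₁ ∧ (q₀ : ℕ) = d₂ ∧ (s₀ : ℕ) = d₃) := by omega
    obtain ⟨e1, e2, e3⟩ := hassign
    obtain rfl := Fin.ext e1
    obtain rfl := Fin.ext e2
    obtain rfl := Fin.ext e3
    exact Or.inr (Or.inr (Or.inr (Or.inr (Or.inr (Or.inr (Or.inl
      ⟨hzf, ⟨hy1, hy2, hy3⟩, hv₀, hv₀2⟩))))))
  · -- D11 : S8 or S9
    have m1 : (d₁ : ℕ) = p₀ ∨ (d₁ : ℕ) = q₀ ∨ (d₁ : ℕ) = s₀ := valify3 (by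
      by_contra hcon; push_neg at hcon; exact hch1 (hyo2 d₁ hcon.1 hcon.2.1 hcon.2.2))
    have m2 : (d₂ : ℕ) = p₀ ∨ (d₂ : ℕ) = q₀ ∨ (d₂ : ℕ) = s₀ := valify3 (by
      by_contra hcon; push_neg at hcon; exact hch2 (hyo2 d₂ hcon.1 hcon.2.1 hcon.2.2))
    have m3 : (d₃ : ℕ) = p₀ ∨ (d₃ : ℕ) = q₀ ∨ (d₃ : ℕ) = s₀ := valify3 (by
      by_contra hcon; push_neg at hcon; exact hch3 (hyo2 d₃ hcon.1 hcon.2.1 hcon.2.2))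
    have n1 : (p₀ : ℕ) < q₀ := hpq₀
    have n2 : (p₀ : ℕ) < s₀ := hps₀
    have n3 : (s₀ : ℕ) ≠ q₀ := fun h => hsq₀ (Fin.ext h)
    have hassign : ((p₀ : ℕ) = d₁ ∧ (q₀ : ℕ) = d₂ ∧ (s₀ : ℕ) = d₃) ∨
        ((p₀ : ℕ) = d₁ ∧ (q₀ : ℕ) = d₃ ∧ (s₀ : ℕ) = d₂) := by omega
    rcases hassign with ⟨e1, e2, e3⟩ | ⟨e1, e2, e3⟩ <;>
      obtain rfl := Fin.ext e1 <;> obtain rfl := Fin.ext e2 <;> obtain rfl := Fin.ext e3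
    · -- S8
      exact Or.inr (Or.inr (Or.inr (Or.inr (Or.inr (Or.inr (Or.inr (Or.inl
        ⟨hzf, ⟨hy1, hy2, hy3⟩, hv₀, hv₀2⟩)))))))
    · -- S9
      exact Or.inr (Or.inr (Or.inr (Or.inr (Or.inr (Or.inr (Or.inr (Or.inr (Or.inl
        ⟨hzf, ⟨hy1, hy3, hy2⟩, hv₀, hv₀2⟩))))))))
  · -- D12 : S10 or S11
    have m1 : (d₁ : ℕ) = p₀ ∨ (d₁ : ℕ) = q₀ ∨ (d₁ : ℕ) = r₀ := valify3 (by
      by_contra hcon; push_neg at hcon; exact hch1 (hyo2 d₁ hcon.1 hcon.2.1 hcon.2.2))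
    have m2 : (d₂ : ℕ) = p₀ ∨ (d₂ : ℕ) = q₀ ∨ (d₂ : ℕ) = r₀ := valify3 (by
      by_contra hcon; push_neg at hcon; exact hch2 (hyo2 d₂ hcon.1 hcon.2.1 hcon.2.2))
    have m3 : (d₃ : ℕ) = p₀ ∨ (d₃ : ℕ) = q₀ ∨ (d₃ : ℕ) = r₀ := valify3 (by
      by_contra hcon; push_neg at hcon; exact hch3 (hyo2 d₃ hcon.1 hcon.2.1 hcon.2.2))
    have n1 : (p₀ : ℕ) < q₀ := hpq₀
    have n2 : (r₀ : ℕ) < q₀ := hrq₀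
    have n3 : (r₀ : ℕ) ≠ p₀ := fun h => hrp₀ (Fin.ext h)
    have hassign : ((r₀ : ℕ) = d₁ ∧ (p₀ : ℕ) = d₂ ∧ (q₀ : ℕ) = d₃) ∨
        ((p₀ : ℕ) = d₁ ∧ (r₀ : ℕ) = d₂ ∧ (q₀ : ℕ) = d₃) := by omega
    rcases hassign with ⟨e1, e2, e3⟩ | ⟨e1, e2, e3⟩ <;>
      obtain rfl := Fin.ext e1 <;> obtain rfl := Fin.ext e2 <;> obtain rfl := Fin.ext e3
    · -- S10
      exact Or.inr (Or.inr (Or.inr (Or.inr (Or.inr (Or.inr (Or.inr (Or.inr (Or.inr (Or.inl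
        ⟨hzf, ⟨hy2, hy1, hy3⟩, hv₀2, hv₀⟩)))))))))
    · -- S11
      exact Or.inr (Or.inr (Or.inr (Or.inr (Or.inr (Or.inr (Or.inr (Or.inr (Or.inr (Or.inr (Or.inl
        ⟨hzf, ⟨hy1, hy2, hy3⟩, hv₀2, hv₀⟩))))))))))
  · -- D13 : S12
    have m1 : (d₁ : ℕ) = p₀ ∨ (d₁ : ℕ) = q₀ ∨ (d₁ : ℕ) = r₀ := valify3 (by
      by_contra hcon; push_neg at hcon; exact hch1 (hyo2 d₁ hcon.1 hcon.2.1 hcon.2.2))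
    have m2 : (d₂ : ℕ) = p₀ ∨ (d₂ : ℕ) = q₀ ∨ (d₂ : ℕ) = r₀ := valify3 (by
      by_contra hcon; push_neg at hcon; exact hch2 (hyo2 d₂ hcon.1 hcon.2.1 hcon.2.2))
    have m3 : (d₃ : ℕ) = p₀ ∨ (d₃ : ℕ) = q₀ ∨ (d₃ : ℕ) = r₀ := valify3 (by
      by_contra hcon; push_neg at hcon; exact hch3 (hyo2 d₃ hcon.1 hcon.2.1 hcon.2.2))
    have n1 : (p₀ : ℕ) < q₀ := hpq₀
    have n2 : (r₀ : ℕ) < p₀ := hrp₀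
    have hassign : ((r₀ : ℕ) = d₁ ∧ (p₀ : ℕ) = d₂ ∧ (q₀ : ℕ) = d₃) := by omega
    obtain ⟨e1, e2, e3⟩ := hassign
    obtain rfl := Fin.ext e1
    obtain rfl := Fin.ext e2
    obtain rfl := Fin.ext e3
    refine Or.inr (Or.inr (Or.inr (Or.inr (Or.inr (Or.inr (Or.inr (Or.inr (Or.inr (Or.inr (Or.inr
      ⟨hzf, ⟨hy1, hy2, hy3⟩, hv₀, hv₀2⟩))))))))))

lemma candP3 {x y : Fin n → ℕ} (hx : IsRook n x) (hy : IsRook n y)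
    {d₁ d₂ d₃ : Fin n} (h12 : d₁ < d₂) (h23 : d₂ < d₃)
    (hch1 : y d₁ ≠ x d₁) (hch2 : y d₂ ≠ x d₂) (hch3 : y d₃ ≠ x d₃)
    (hyo : ∀ k, k ≠ d₁ → k ≠ d₂ → k ≠ d₃ → y k = x k) :
    ∃ e₁ e₂ : Fin n → ℕ, ∀ z, MidM n x y z → z = e₁ ∨ z = e₂ := by
  classical
  have hd12 : d₁ ≠ d₂ := ne_of_lt h12
  have hd23 : d₂ ≠ d₃ := ne_of_lt h23
  have hd13 : d₁ ≠ d₃ := ne_of_lt (lt_trans h12 h23)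
  have nz : ∀ {k l : Fin n}, k ≠ l → x k = x l → x k = 0 := by
    intro k l hkl h
    by_contra h0
    exact hkl (hx.2 _ _ h0 h)
  by_cases t1 : y d₁ = x d₂ ∧ y d₂ = x d₁
  · refine ⟨Function.update x d₃ (y d₃), swapf x d₁ d₂, fun w hw => ?_⟩
    rcases net3 h12 h23 hch1 hch2 hch3 hyo hw with
      ⟨hzf, e1, e2, e3, e4⟩ | ⟨hzf, e1, e2, e3, e4⟩ | ⟨hzf, e1, e2, e3, e4⟩ |
      ⟨hzf, e1, e2, e3⟩ | ⟨hzf, e1, e2, e3⟩ | ⟨hzf, e1, e2, e3⟩ |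
      ⟨hzf, ⟨e1, e2, e3⟩, e4, e5⟩ | ⟨hzf, ⟨e1, e2, e3⟩, e4, e5⟩ | ⟨hzf, ⟨e1, e2, e3⟩, e4, e5⟩ |
      ⟨hzf, ⟨e1, e2, e3⟩, e4, e5⟩ | ⟨hzf, ⟨e1, e2, e3⟩, e4, e5⟩ | ⟨hzf, ⟨e1, e2, e3⟩, e4, e5⟩
    · exact Or.inl hzf
    · exfalso; have hxx : x d₂ = x d₃ := by rw [← t1.1, e1]
      have h0 := nz hd23 hxx; omega
    · exfalso; have hxx : x d₁ = x d₃ := by rw [← t1.2, e1]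
      have h0 := nz hd13 hxx; omega
    · exact Or.inr hzf
    · exfalso; have hxx : x d₂ = x d₃ := by rw [← t1.1, e1]
      have h0 := nz hd23 hxx; omega
    · exfalso; have hxx : x d₁ = x d₃ := by rw [← t1.2, e1]
      have h0 := nz hd13 hxx; omega
    · exfalso; have hxx : x d₁ = x d₃ := by rw [← t1.2, e2]
      exact hch3 (by rw [e3, hxx])
    · exfalso; have hxx : x d₂ = x d₃ := by rw [← t1.1, e1]
      exact hch3 (by rw [e3, hxx])
    · exfalso; have hxx : x d₁ = x d₃ := by rw [← t1.2, e2]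
      exact hch3 (by rw [e3, hxx])
    · exfalso; have hxx : x d₁ = x d₃ := by rw [← t1.2, e2]
      exact hch3 (by rw [e3, hxx])
    · exfalso; have hxx : x d₂ = x d₃ := by rw [← t1.1, e1]
      exact hch3 (by rw [e3, hxx])
    · exfalso; have hxx : x d₂ = x d₃ := by rw [← t1.1, e1]
      exact hch3 (by rw [e3, hxx])
  by_cases t2 : y d₁ = x d₃ ∧ y d₃ = x d₁
  · refine ⟨Function.update x d₂ (y d₂), swapf x d₁ d₃, fun w hw => ?_⟩
    rcases net3 h12 h23 hch1 hch2 hch3 hyo hw with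
      ⟨hzf, e1, e2, e3, e4⟩ | ⟨hzf, e1, e2, e3, e4⟩ | ⟨hzf, e1, e2, e3, e4⟩ |
      ⟨hzf, e1, e2, e3⟩ | ⟨hzf, e1, e2, e3⟩ | ⟨hzf, e1, e2, e3⟩ |
      ⟨hzf, ⟨e1, e2, e3⟩, e4, e5⟩ | ⟨hzf, ⟨e1, e2, e3⟩, e4, e5⟩ | ⟨hzf, ⟨e1, e2, e3⟩, e4, e5⟩ |
      ⟨hzf, ⟨e1, e2, e3⟩, e4, e5⟩ | ⟨hzf, ⟨e1, e2, e3⟩, e4, e5⟩ | ⟨hzf, ⟨e1, e2, e3⟩, e4, e5⟩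
    · exfalso; have hxx : x d₂ = x d₃ := by rw [← e1, t2.1]
      have h0 := nz hd23 hxx; omega
    · exact Or.inl hzf
    · exfalso
      have hne0 : y d₁ ≠ 0 := by rw [t2.1]; omega
      exact hd12 (hy.2 d₁ d₂ hne0 (by rw [t2.1, ← e1]))
    · exfalso; have hxx : x d₂ = x d₃ := by rw [← e1, t2.1]
      have h0 := nz hd23 hxx; omega
    · exact Or.inr hzf
    · exfalso
      have hne0 : y d₁ ≠ 0 := by rw [t2.1]; omega
      exact hd12 (hy.2 d₁ d₂ hne0 (by rw [t2.1, ← e1]))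
    · exfalso; have hxx : x d₂ = x d₃ := by rw [← e1, t2.1]
      have h0 := nz hd23 hxx; omega
    · exfalso; have hxx : x d₁ = x d₂ := by rw [← t2.2, e3]
      exact hch2 (by rw [e2, hxx])
    · exfalso; have hxx : x d₂ = x d₃ := by rw [← e1, t2.1]
      omega
    · exfalso; have hxx : x d₂ = x d₃ := by rw [← e1, t2.1]
      omega
    · exfalso; have hxx : x d₁ = x d₂ := by rw [← t2.2, e3]
      omega
    · exfalso; have hxx : x d₁ = x d₂ := by rw [← t2.2, e3]
      exact hch2 (by rw [e2, hxx])
  by_cases t3 : y d₂ = x d₃ ∧ y d₃ = x d₂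
  · refine ⟨Function.update x d₁ (y d₁), swapf x d₂ d₃, fun w hw => ?_⟩
    rcases net3 h12 h23 hch1 hch2 hch3 hyo hw with
      ⟨hzf, e1, e2, e3, e4⟩ | ⟨hzf, e1, e2, e3, e4⟩ | ⟨hzf, e1, e2, e3, e4⟩ |
      ⟨hzf, e1, e2, e3⟩ | ⟨hzf, e1, e2, e3⟩ | ⟨hzf, e1, e2, e3⟩ |
      ⟨hzf, ⟨e1, e2, e3⟩, e4, e5⟩ | ⟨hzf, ⟨e1, e2, e3⟩, e4, e5⟩ | ⟨hzf, ⟨e1, e2, e3⟩, e4, e5⟩ |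
      ⟨hzf, ⟨e1, e2, e3⟩, e4, e5⟩ | ⟨hzf, ⟨e1, e2, e3⟩, e4, e5⟩ | ⟨hzf, ⟨e1, e2, e3⟩, e4, e5⟩
    · exfalso
      have hne0 : y d₁ ≠ 0 := by rw [e1]; omega
      exact hd13 (hy.2 d₁ d₃ hne0 (by rw [e1, ← t3.2]))
    · exfalso
      have hne0 : y d₁ ≠ 0 := by rw [e1]; omega
      exact hd12 (hy.2 d₁ d₂ hne0 (by rw [e1, ← t3.1]))
    · exact Or.inl hzf
    · exfalso
      have hne0 : y d₁ ≠ 0 := by rw [e1]; omega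
      exact hd13 (hy.2 d₁ d₃ hne0 (by rw [e1, ← t3.2]))
    · exfalso
      have hne0 : y d₁ ≠ 0 := by rw [e1]; omega
      exact hd12 (hy.2 d₁ d₂ hne0 (by rw [e1, ← t3.1]))
    · exact Or.inr hzf
    · exfalso; have hxx : x d₁ = x d₂ := by rw [← e3, t3.2]
      exact hch1 (by rw [e1, ← hxx])
    · exfalso; have hxx : x d₁ = x d₃ := by rw [← e2, t3.1]
      exact hch1 (by rw [e1, ← hxx])
    · exfalso; have hxx : x d₁ = x d₂ := by rw [← e3, t3.2]
      exact hch1 (by rw [e1, ← hxx])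
    · exfalso; have hxx : x d₁ = x d₂ := by rw [← e3, t3.2]
      exact hch1 (by rw [e1, ← hxx])
    · exfalso; have hxx : x d₁ = x d₃ := by rw [← e2, t3.1]
      exact hch1 (by rw [e1, ← hxx])
    · exfalso; have hxx : x d₁ = x d₃ := by rw [← e2, t3.1]
      exact hch1 (by rw [e1, ← hxx])
  by_cases t4 : y d₁ = x d₂ ∧ y d₂ = x d₃ ∧ y d₃ = x d₁
  · by_cases hbc : x d₂ < x d₃
    · refine ⟨swapf x d₁ d₂, swapf x d₂ d₃, fun w hw => ?_⟩
      rcases net3 h12 h23 hch1 hch2 hch3 hyo hw with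
        ⟨hzf, e1, e2, e3, e4⟩ | ⟨hzf, e1, e2, e3, e4⟩ | ⟨hzf, e1, e2, e3, e4⟩ |
        ⟨hzf, e1, e2, e3⟩ | ⟨hzf, e1, e2, e3⟩ | ⟨hzf, e1, e2, e3⟩ |
        ⟨hzf, ⟨e1, e2, e3⟩, e4, e5⟩ | ⟨hzf, ⟨e1, e2, e3⟩, e4, e5⟩ | ⟨hzf, ⟨e1, e2, e3⟩, e4, e5⟩ |
        ⟨hzf, ⟨e1, e2, e3⟩, e4, e5⟩ | ⟨hzf, ⟨e1, e2, e3⟩, e4, e5⟩ | ⟨hzf, ⟨e1, e2, e3⟩, e4, e5⟩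
      · exfalso; have hxx : x d₁ = x d₃ := by rw [← e2, t4.2.1]
        exact hch3 (by rw [t4.2.2, hxx])
      · exfalso; have hxx : x d₂ = x d₃ := by rw [← t4.1, e1]
        have h0 := nz hd23 hxx; omega
      · exfalso; have hxx : x d₁ = x d₂ := by rw [← t4.2.2, e2]
        exact hch1 (by rw [t4.1, ← hxx])
      · exfalso; have hxx : x d₁ = x d₃ := by rw [← e2, t4.2.1]
        exact hch3 (by rw [t4.2.2, hxx])
      · exfalso; have hxx : x d₂ = x d₃ := by rw [← t4.1, e1]
        have h0 := nz hd23 hxx; omega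
      · exfalso; have hxx : x d₁ = x d₂ := by rw [← t4.2.2, e2]
        exact hch1 (by rw [t4.1, ← hxx])
      · exact Or.inl hzf
      · exfalso; have hxx : x d₂ = x d₃ := by rw [← t4.1, e1]
        omega
      · exfalso; omega
      · exact Or.inr hzf
      · exfalso; have hxx : x d₂ = x d₃ := by rw [← t4.1, e1]
        omega
      · exfalso; have hxx : x d₂ = x d₃ := by rw [← t4.1, e1]
        omega
    · refine ⟨swapf x d₁ d₂, swapf x d₁ d₃, fun w hw => ?_⟩
      rcases net3 h12 h23 hch1 hch2 hch3 hyo hw with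
        ⟨hzf, e1, e2, e3, e4⟩ | ⟨hzf, e1, e2, e3, e4⟩ | ⟨hzf, e1, e2, e3, e4⟩ |
        ⟨hzf, e1, e2, e3⟩ | ⟨hzf, e1, e2, e3⟩ | ⟨hzf, e1, e2, e3⟩ |
        ⟨hzf, ⟨e1, e2, e3⟩, e4, e5⟩ | ⟨hzf, ⟨e1, e2, e3⟩, e4, e5⟩ | ⟨hzf, ⟨e1, e2, e3⟩, e4, e5⟩ |
        ⟨hzf, ⟨e1, e2, e3⟩, e4, e5⟩ | ⟨hzf, ⟨e1, e2, e3⟩, e4, e5⟩ | ⟨hzf, ⟨e1, e2, e3⟩, e4, e5⟩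
      · exfalso; have hxx : x d₁ = x d₃ := by rw [← e2, t4.2.1]
        exact hch3 (by rw [t4.2.2, hxx])
      · exfalso; have hxx : x d₂ = x d₃ := by rw [← t4.1, e1]
        have h0 := nz hd23 hxx; omega
      · exfalso; have hxx : x d₁ = x d₂ := by rw [← t4.2.2, e2]
        exact hch1 (by rw [t4.1, ← hxx])
      · exfalso; have hxx : x d₁ = x d₃ := by rw [← e2, t4.2.1]
        exact hch3 (by rw [t4.2.2, hxx])
      · exfalso; have hxx : x d₂ = x d₃ := by rw [← t4.1, e1]
        have h0 := nz hd23 hxx; omega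
      · exfalso; have hxx : x d₁ = x d₂ := by rw [← t4.2.2, e2]
        exact hch1 (by rw [t4.1, ← hxx])
      · exact Or.inl hzf
      · exfalso; have hxx : x d₂ = x d₃ := by rw [← t4.1, e1]
        omega
      · exact Or.inr hzf
      · exfalso; omega
      · exfalso; have hxx : x d₂ = x d₃ := by rw [← t4.1, e1]
        omega
      · exfalso; have hxx : x d₂ = x d₃ := by rw [← t4.1, e1]
        omega
  by_cases t5 : y d₁ = x d₃ ∧ y d₂ = x d₁ ∧ y d₃ = x d₂
  · by_cases hbc : x d₁ < x d₂
    · refine ⟨swapf x d₁ d₂, swapf x d₂ d₃, fun w hw => ?_⟩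
      rcases net3 h12 h23 hch1 hch2 hch3 hyo hw with
        ⟨hzf, e1, e2, e3, e4⟩ | ⟨hzf, e1, e2, e3, e4⟩ | ⟨hzf, e1, e2, e3, e4⟩ |
        ⟨hzf, e1, e2, e3⟩ | ⟨hzf, e1, e2, e3⟩ | ⟨hzf, e1, e2, e3⟩ |
        ⟨hzf, ⟨e1, e2, e3⟩, e4, e5⟩ | ⟨hzf, ⟨e1, e2, e3⟩, e4, e5⟩ | ⟨hzf, ⟨e1, e2, e3⟩, e4, e5⟩ |
        ⟨hzf, ⟨e1, e2, e3⟩, e4, e5⟩ | ⟨hzf, ⟨e1, e2, e3⟩, e4, e5⟩ | ⟨hzf, ⟨e1, e2, e3⟩, e4, e5⟩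
      · exfalso; have hxx : x d₂ = x d₃ := by rw [← e1, t5.1]
        have h0 := nz hd23 hxx; omega
      · exfalso; have hxx : x d₁ = x d₂ := by rw [← t5.2.2, e2]
        exact hch2 (by rw [t5.2.1, hxx])
      · exfalso; have hxx : x d₁ = x d₃ := by rw [← t5.2.1, e1]
        have h0 := nz hd13 hxx; omega
      · exfalso; have hxx : x d₂ = x d₃ := by rw [← e1, t5.1]
        have h0 := nz hd23 hxx; omega
      · exfalso; have hxx : x d₁ = x d₂ := by rw [← t5.2.2, e2]
        exact hch2 (by rw [t5.2.1, hxx])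
      · exfalso; have hxx : x d₁ = x d₃ := by rw [← t5.2.1, e1]
        have h0 := nz hd13 hxx; omega
      · exfalso; have hxx : x d₁ = x d₃ := by rw [← t5.2.1, e2]
        omega
      · exact Or.inl hzf
      · exfalso; have hxx : x d₁ = x d₃ := by rw [← t5.2.1, e2]
        omega
      · exfalso; have hxx : x d₁ = x d₃ := by rw [← t5.2.1, e2]
        omega
      · exfalso; omega
      · exact Or.inr hzf
    · refine ⟨swapf x d₁ d₃, swapf x d₂ d₃, fun w hw => ?_⟩
      rcases net3 h12 h23 hch1 hch2 hch3 hyo hw with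
        ⟨hzf, e1, e2, e3, e4⟩ | ⟨hzf, e1, e2, e3, e4⟩ | ⟨hzf, e1, e2, e3, e4⟩ |
        ⟨hzf, e1, e2, e3⟩ | ⟨hzf, e1, e2, e3⟩ | ⟨hzf, e1, e2, e3⟩ |
        ⟨hzf, ⟨e1, e2, e3⟩, e4, e5⟩ | ⟨hzf, ⟨e1, e2, e3⟩, e4, e5⟩ | ⟨hzf, ⟨e1, e2, e3⟩, e4, e5⟩ |
        ⟨hzf, ⟨e1, e2, e3⟩, e4, e5⟩ | ⟨hzf, ⟨e1, e2, e3⟩, e4, e5⟩ | ⟨hzf, ⟨e1, e2, e3⟩, e4, e5⟩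
      · exfalso; have hxx : x d₂ = x d₃ := by rw [← e1, t5.1]
        have h0 := nz hd23 hxx; omega
      · exfalso; have hxx : x d₁ = x d₂ := by rw [← t5.2.2, e2]
        exact hch2 (by rw [t5.2.1, hxx])
      · exfalso; have hxx : x d₁ = x d₃ := by rw [← t5.2.1, e1]
        have h0 := nz hd13 hxx; omega
      · exfalso; have hxx : x d₂ = x d₃ := by rw [← e1, t5.1]
        have h0 := nz hd23 hxx; omega
      · exfalso; have hxx : x d₁ = x d₂ := by rw [← t5.2.2, e2]
        exact hch2 (by rw [t5.2.1, hxx])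
      · exfalso; have hxx : x d₁ = x d₃ := by rw [← t5.2.1, e1]
        have h0 := nz hd13 hxx; omega
      · exfalso; have hxx : x d₁ = x d₃ := by rw [← t5.2.1, e2]
        omega
      · exfalso; omega
      · exfalso; have hxx : x d₁ = x d₃ := by rw [← t5.2.1, e2]
        omega
      · exfalso; have hxx : x d₁ = x d₃ := by rw [← t5.2.1, e2]
        omega
      · exact Or.inl hzf
      · exact Or.inr hzf
  · -- no pattern matches : vacuous
    refine ⟨x, x, fun w hw => ?_⟩
    exfalso
    rcases net3 h12 h23 hch1 hch2 hch3 hyo hw with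
      ⟨hzf, e1, e2, e3, e4⟩ | ⟨hzf, e1, e2, e3, e4⟩ | ⟨hzf, e1, e2, e3, e4⟩ |
      ⟨hzf, e1, e2, e3⟩ | ⟨hzf, e1, e2, e3⟩ | ⟨hzf, e1, e2, e3⟩ |
      ⟨hzf, ⟨e1, e2, e3⟩, e4, e5⟩ | ⟨hzf, ⟨e1, e2, e3⟩, e4, e5⟩ | ⟨hzf, ⟨e1, e2, e3⟩, e4, e5⟩ |
      ⟨hzf, ⟨e1, e2, e3⟩, e4, e5⟩ | ⟨hzf, ⟨e1, e2, e3⟩, e4, e5⟩ | ⟨hzf, ⟨e1, e2, e3⟩, e4, e5⟩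
    · exact t1 ⟨e1, e2⟩
    · exact t2 ⟨e1, e2⟩
    · exact t3 ⟨e1, e2⟩
    · exact t1 ⟨e1, e2⟩
    · exact t2 ⟨e1, e2⟩
    · exact t3 ⟨e1, e2⟩
    · exact t4 ⟨e1, e2, e3⟩
    · exact t5 ⟨e1, e2, e3⟩
    · exact t4 ⟨e1, e2, e3⟩
    · exact t4 ⟨e1, e2, e3⟩
    · exact t5 ⟨e1, e2, e3⟩
    · exact t5 ⟨e1, e2, e3⟩


end CandP3


section CandP2

open Function

/-- Net classification for the 2-position pattern. -/
lemma net2 {x y : Fin n → ℕ} (hx : IsRook n x) {p q : Fin n} (hpq : p < q)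
    (hchp : y p ≠ x p) (hchq : y q ≠ x q)
    (hyo : ∀ k, k ≠ p → k ≠ q → y k = x k)
    {w : Fin n → ℕ} (hw : MidM n x y w) :
    (w = swapf x p q ∧ y q = x p ∧ x p < x q ∧ x q < y p) ∨
    (w = swapf x p q ∧ y p = x q ∧ x p < x q ∧ x p < y q) ∨
    (w = update x p (y p) ∧ x p < y p ∧ x q < y q) ∨
    (w = update x q (y q) ∧ x p < y p ∧ x q < y q) ∨
    (w = update x p (y q) ∧ y p = x q ∧ x p < y q ∧ y q < x q) ∨
    (w = update x q (y p) ∧ y q = x p ∧ x q < y p ∧ x p < y p) ∨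
    (∃ m, p < m ∧ m < q ∧ x m = x p ∧ x m < x q ∧ w = swapf x m q ∧
      y p = x q ∧ y q = x p) := by
  have hpq' : (p : ℕ) < q := hpq
  have chg2 : ∀ k, y k ≠ x k → ((k : ℕ) = p ∨ (k : ℕ) = q) := by
    intro k hk
    refine valify2 ?_
    by_contra hcon; push_neg at hcon; exact hk (hyo k hcon.1 hcon.2)
  have cp := chg2 p hchp
  have cq := chg2 q hchq
  rcases moves hw with
    ⟨i₀, c₁, c₂, h1, h2, hzf, hy1, hyoth⟩ |
    ⟨i₀, i₁, c₁, c₂, hne, hc1, hc2, hzf, hyi0, hyi1, hyo2⟩ |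
    ⟨i₀, p₀, q₀, c₀, hpq₀, hip, hiq, hc0, hv₀, hzf, hy1, hy2, hy3, hyo2⟩ |
    ⟨p₀, q₀, c₀, hpq₀, h1, h2, hzf, hy1, hy2, hyo2⟩ |
    ⟨p₀, q₀, c₀, hpq₀, h1, h2, hzf, hy1, hy2, hyo2⟩ |
    ⟨p₀, q₀, c₀, hpq₀, hv₀, h2, hzf, hy1, hy2, hyo2⟩ |
    ⟨p₀, q₀, c₀, hpq₀, hv₀, h2, hzf, hy1, hy2, hyo2⟩ |
    ⟨p₀, q₀, i₀, c₀, hpq₀, hip, hiq, hv₀, hc0, hzf, hy1, hy2, hy3, hyo2⟩ |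
    ⟨p₀, q₀, r₀, s₀, hpq₀, hrs₀, hrp₀, hrq₀, hsp₀, hsq₀, hv₀, hv₀2, hzf, hy1, hy2, hy3, hy4, hyo2⟩ |
    ⟨p₀, q₀, s₀, hpq₀, hqs₀, hv₀, hv₀2, hzf, hy1, hy2, hy3, hyo2⟩ |
    ⟨p₀, q₀, s₀, hpq₀, hps₀, hsq₀, hv₀, hv₀2, hzf, hy1, hy2, hy3, hyo2⟩ |
    ⟨p₀, q₀, r₀, hpq₀, hrq₀, hrp₀, hv₀, hv₀2, hzf, hy1, hy2, hy3, hyo2⟩ |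
    ⟨p₀, q₀, r₀, hrp₀, hpq₀, hv₀, hv₀2, hzf, hy1, hy2, hy3, hyo2⟩
  · -- D1: support 1, kill
    exfalso
    have mp : p = i₀ := by by_contra hcon; exact hchp (hyoth p hcon)
    have mq : q = i₀ := by by_contra hcon; exact hchq (hyoth q hcon)
    rw [← mq] at mp
    exact (ne_of_lt hpq) mp
  · -- D2 : V3 or V4
    have hchi0 : y i₀ ≠ x i₀ := by omega
    have hchi1 : y i₁ ≠ x i₁ := by omega
    have c0 := chg2 i₀ hchi0
    have c1 := chg2 i₁ hchi1
    have hne' : (i₀ : ℕ) ≠ i₁ := fun h => hne (Fin.ext h)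
    have hass : ((i₀ : ℕ) = p ∧ (i₁ : ℕ) = q) ∨ ((i₀ : ℕ) = q ∧ (i₁ : ℕ) = p) := by omega
    rcases hass with ⟨e1, e2⟩ | ⟨e1, e2⟩ <;> obtain rfl := Fin.ext e1 <;> obtain rfl := Fin.ext e2
    · refine Or.inr (Or.inr (Or.inl ⟨by rw [← hyi0] at hzf; exact hzf, by omega, by omega⟩))
    · refine Or.inr (Or.inr (Or.inr (Or.inl
        ⟨by rw [← hyi0] at hzf; exact hzf, by omega, by omega⟩)))
  · -- D3 : kill (3 changed)
    exfalso
    have hch1 : y i₀ ≠ x i₀ := by omega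
    have hch2 : y p₀ ≠ x p₀ := by omega
    have hch3 : y q₀ ≠ x q₀ := by omega
    have c1 := chg2 i₀ hch1
    have c2 := chg2 p₀ hch2
    have c3 := chg2 q₀ hch3
    have n1 : (i₀ : ℕ) ≠ p₀ := fun h => hip (Fin.ext h)
    have n2 : (i₀ : ℕ) ≠ q₀ := fun h => hiq (Fin.ext h)
    have n3 : (p₀ : ℕ) < q₀ := hpq₀
    omega
  · -- D4 : V5
    have hch1 : y p₀ ≠ x p₀ := by omega
    have hch2 : y q₀ ≠ x q₀ := by omega
    have c1 := chg2 p₀ hch1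
    have c2 := chg2 q₀ hch2
    have n3 : (p₀ : ℕ) < q₀ := hpq₀
    have hass : ((p₀ : ℕ) = p ∧ (q₀ : ℕ) = q) := by omega
    obtain rfl := Fin.ext hass.1
    obtain rfl := Fin.ext hass.2
    refine Or.inr (Or.inr (Or.inr (Or.inr (Or.inl
      ⟨by rw [← hy2] at hzf; exact hzf, hy1, by omega, by omega⟩))))
  · -- D5 : V6 or degenerate kill
    by_cases hco : x p₀ = x q₀
    · exfalso
      have hch1 : y p₀ ≠ x p₀ := by omega
      have c1 := chg2 p₀ hch1
      have mp : p = p₀ := by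
        by_contra hcon
        refine hchp (hyo2 p hcon fun hq => ?_)
        rw [hq] at hchp
        exact hchp (by omega)
      have mq : q = p₀ := by
        by_contra hcon
        refine hchq (hyo2 q hcon fun hq => ?_)
        rw [hq] at hchq
        exact hchq (by omega)
      rw [← mq] at mp
      exact (ne_of_lt hpq) mp
    · have hch1 : y p₀ ≠ x p₀ := by omega
      have hch2 : y q₀ ≠ x q₀ := by omega
      have c1 := chg2 p₀ hch1
      have c2 := chg2 q₀ hch2
      have n3 : (p₀ : ℕ) < q₀ := hpq₀
      have hass : ((p₀ : ℕ) = p ∧ (q₀ : ℕ) = q) := by omega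
      obtain rfl := Fin.ext hass.1
      obtain rfl := Fin.ext hass.2
      refine Or.inr (Or.inr (Or.inr (Or.inr (Or.inr (Or.inl
        ⟨by rw [← hy1] at hzf; exact hzf, hy2, by omega, by omega⟩)))))
  · -- D6 : V1
    have hch1 : y p₀ ≠ x p₀ := by omega
    have hch2 : y q₀ ≠ x q₀ := by omega
    have c1 := chg2 p₀ hch1
    have c2 := chg2 q₀ hch2
    have n3 : (p₀ : ℕ) < q₀ := hpq₀
    have hass : ((p₀ : ℕ) = p ∧ (q₀ : ℕ) = q) := by omega
    obtain rfl := Fin.ext hass.1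
    obtain rfl := Fin.ext hass.2
    exact Or.inl ⟨hzf, hy2, hv₀, by omega⟩
  · -- D7 : V2 or degenerate kill
    by_cases hco : c₀ = x q₀
    · exfalso
      have mp : p = p₀ := by
        by_contra hcon
        refine hchp (hyo2 p hcon fun hq => ?_)
        rw [hq] at hchp
        exact hchp (by omega)
      have mq : q = p₀ := by
        by_contra hcon
        refine hchq (hyo2 q hcon fun hq => ?_)
        rw [hq] at hchq
        exact hchq (by omega)
      rw [← mq] at mp
      exact (ne_of_lt hpq) mp
    · have hch1 : y p₀ ≠ x p₀ := by omega
      have hch2 : y q₀ ≠ x q₀ := by rw [hy2]; exact fun h => hco h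
      have c1 := chg2 p₀ hch1
      have c2 := chg2 q₀ hch2
      have n3 : (p₀ : ℕ) < q₀ := hpq₀
      have hass : ((p₀ : ℕ) = p ∧ (q₀ : ℕ) = q) := by omega
      obtain rfl := Fin.ext hass.1
      obtain rfl := Fin.ext hass.2
      exact Or.inr (Or.inl ⟨hzf, hy1, hv₀, by omega⟩)
  · -- D8 : kill (3 changed)
    exfalso
    have hch1 : y p₀ ≠ x p₀ := by omega
    have hch2 : y q₀ ≠ x q₀ := by omega
    have hch3 : y i₀ ≠ x i₀ := by omega
    have c1 := chg2 p₀ hch1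
    have c2 := chg2 q₀ hch2
    have c3 := chg2 i₀ hch3
    have n1 : (i₀ : ℕ) ≠ p₀ := fun h => hip (Fin.ext h)
    have n2 : (i₀ : ℕ) ≠ q₀ := fun h => hiq (Fin.ext h)
    have n3 : (p₀ : ℕ) < q₀ := hpq₀
    omega
  · -- D9 : kill (4 changed)
    exfalso
    have hch1 : y p₀ ≠ x p₀ := by omega
    have hch2 : y q₀ ≠ x q₀ := by omega
    have c1 := chg2 p₀ hch1
    have c2 := chg2 q₀ hch2
    have hch3 : y r₀ ≠ x r₀ := by omega
    have c3 := chg2 r₀ hch3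
    have n1 : (p₀ : ℕ) < q₀ := hpq₀
    have n2 : (r₀ : ℕ) ≠ p₀ := fun h => hrp₀ (Fin.ext h)
    have n3 : (r₀ : ℕ) ≠ q₀ := fun h => hrq₀ (Fin.ext h)
    omega
  · -- D10 : kill (3 changed)
    exfalso
    have hxq0 : x q₀ ≠ 0 := by omega
    have hsq : x s₀ ≠ x q₀ := by
      intro h
      exact (ne_of_gt hqs₀) (hx.2 s₀ q₀ (by omega) h)
    have hch1 : y p₀ ≠ x p₀ := by omega
    have hch2 : y q₀ ≠ x q₀ := by rw [hy2]; exact hsq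
    have hch3 : y s₀ ≠ x s₀ := by omega
    have c1 := chg2 p₀ hch1
    have c2 := chg2 q₀ hch2
    have c3 := chg2 s₀ hch3
    have n1 : (p₀ : ℕ) < q₀ := hpq₀
    have n2 : (q₀ : ℕ) < s₀ := hqs₀
    omega
  · -- D11 : kill (3 changed)
    exfalso
    have hch1 : y p₀ ≠ x p₀ := by omega
    have hch2 : y q₀ ≠ x q₀ := by omega
    have hch3 : y s₀ ≠ x s₀ := by omega
    have c1 := chg2 p₀ hch1
    have c2 := chg2 q₀ hch2
    have c3 := chg2 s₀ hch3
    have n1 : (p₀ : ℕ) < q₀ := hpq₀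
    have n2 : (p₀ : ℕ) < s₀ := hps₀
    have n3 : (s₀ : ℕ) ≠ q₀ := fun h => hsq₀ (Fin.ext h)
    omega
  · -- D12 : kill (3 changed)
    exfalso
    have hch1 : y p₀ ≠ x p₀ := by omega
    have hch2 : y q₀ ≠ x q₀ := by omega
    have hch3 : y r₀ ≠ x r₀ := by omega
    have c1 := chg2 p₀ hch1
    have c2 := chg2 q₀ hch2
    have c3 := chg2 r₀ hch3
    have n1 : (p₀ : ℕ) < q₀ := hpq₀
    have n2 : (r₀ : ℕ) < q₀ := hrq₀
    have n3 : (r₀ : ℕ) ≠ p₀ := fun h => hrp₀ (Fin.ext h)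
    omega
  · -- D13 : V7 or kill
    by_cases hco : x r₀ = x p₀
    · -- coincidence: positions r₀ < q₀ changed, p₀ unchanged
      have hch1 : y r₀ ≠ x r₀ := by omega
      have hch3 : y q₀ ≠ x q₀ := by omega
      have c1 := chg2 r₀ hch1
      have c3 := chg2 q₀ hch3
      have n1 : (r₀ : ℕ) < p₀ := hrp₀
      have n2 : (p₀ : ℕ) < q₀ := hpq₀
      have hass : ((r₀ : ℕ) = p ∧ (q₀ : ℕ) = q) := by omega
      obtain rfl := Fin.ext hass.1
      obtain rfl := Fin.ext hass.2
      refine Or.inr (Or.inr (Or.inr (Or.inr (Or.inr (Or.inr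
        ⟨p₀, hrp₀, hpq₀, hco.symm, by omega, hzf, hy1, by rw [hy3, ← hco]⟩)))))
    · exfalso
      have hch1 : y r₀ ≠ x r₀ := by omega
      have hch2 : y p₀ ≠ x p₀ := by rw [hy2]; exact fun h => hco h
      have hch3 : y q₀ ≠ x q₀ := by omega
      have c1 := chg2 r₀ hch1
      have c2 := chg2 p₀ hch2
      have c3 := chg2 q₀ hch3
      have n1 : (r₀ : ℕ) < p₀ := hrp₀
      have n2 : (p₀ : ℕ) < q₀ := hpq₀
      omega

lemma candP2 {x y : Fin n → ℕ} (hx : IsRook n x) (hy : IsRook n y)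
    {p q : Fin n} (hpq : p < q)
    (hchp : y p ≠ x p) (hchq : y q ≠ x q)
    (hyo : ∀ k, k ≠ p → k ≠ q → y k = x k) :
    ∃ e₁ e₂ : Fin n → ℕ, ∀ z, MidM n x y z → z = e₁ ∨ z = e₂ := by
  classical
  by_cases g1 : y p = x q
  · by_cases g2 : y q = x p
    · -- α : net swap; only the "middle zero" class survives
      apply two_classes (S := MidM n x y)
        (A := fun w => ∃ m, p < m ∧ m < q ∧ x m = x p ∧ x m < x q ∧ w = swapf x m q)
        (B := fun _ => False)
      · intro w hw
        rcases net2 hx hpq hchp hchq hyo hw with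
          ⟨hzf, e1, e2, e3⟩ | ⟨hzf, e1, e2, e3⟩ | ⟨hzf, e1, e2⟩ | ⟨hzf, e1, e2⟩ |
          ⟨hzf, e1, e2, e3⟩ | ⟨hzf, e1, e2, e3⟩ | ⟨m, hm1, hm2, hm3, hm4, hzf, e1, e2⟩
        · exact absurd e3 (by omega)
        · exact absurd e3 (by omega)
        · exact absurd e2 (by omega)
        · exact absurd e2 (by omega)
        · exact absurd e3 (by omega)
        · exact absurd e2 (by omega)
        · exact Or.inl ⟨m, hm1, hm2, hm3, hm4, hzf⟩
      · rintro w w' hw ⟨m, hm1, hm2, hm3, hm4, rfl⟩ hw' ⟨m', hm1', hm2', hm3', hm4', rfl⟩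
        rcases lt_trichotomy m m' with h | h | h
        · exfalso
          have hl : rlen (swapf x m q) = rlen x + 1 := hw.2.2.2
          have hcov := rlen_swapf_cov x m q hm2 hm4 (swap_fresh hx hm4) hl
          rcases hcov m' h hm2' with hcc | hcc <;> omega
        · rw [h]
        · exfalso
          have hl : rlen (swapf x m' q) = rlen x + 1 := hw'.2.2.2
          have hcov := rlen_swapf_cov x m' q hm2' hm4' (swap_fresh hx hm4') hl
          rcases hcov m h hm2 with hcc | hcc <;> omega
      · rintro w w' _ hF
        exact absurd hF id
    · -- β : y p = x q, y q ≠ x p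
      by_cases g3 : x q < y q
      · refine ⟨swapf x p q, Function.update x q (y q), fun w hw => ?_⟩
        rcases net2 hx hpq hchp hchq hyo hw with
          ⟨hzf, e1, e2, e3⟩ | ⟨hzf, e1, e2, e3⟩ | ⟨hzf, e1, e2⟩ | ⟨hzf, e1, e2⟩ |
          ⟨hzf, e1, e2, e3⟩ | ⟨hzf, e1, e2, e3⟩ | ⟨m, hm1, hm2, hm3, hm4, hzf, e1, e2⟩
        · exact absurd e1 g2
        · exact Or.inl hzf
        · exfalso
          have hwp : w p = y p := by rw [hzf, Function.update_self]
          have hwq : w q = x q := by rw [hzf, Function.update_of_ne (ne_of_gt hpq)]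
          have : p = q := hw.1.2 p q (by omega) (by rw [hwp, hwq, g1])
          exact absurd this (ne_of_lt hpq)
        · exact Or.inr hzf
        · exact absurd e3 (by omega)
        · exact absurd e1 g2
        · exact absurd e2 g2
      · refine ⟨swapf x p q, Function.update x p (y q), fun w hw => ?_⟩
        rcases net2 hx hpq hchp hchq hyo hw with
          ⟨hzf, e1, e2, e3⟩ | ⟨hzf, e1, e2, e3⟩ | ⟨hzf, e1, e2⟩ | ⟨hzf, e1, e2⟩ |
          ⟨hzf, e1, e2, e3⟩ | ⟨hzf, e1, e2, e3⟩ | ⟨m, hm1, hm2, hm3, hm4, hzf, e1, e2⟩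
        · exact absurd e1 g2
        · exact Or.inl hzf
        · exfalso
          have hwp : w p = y p := by rw [hzf, Function.update_self]
          have hwq : w q = x q := by rw [hzf, Function.update_of_ne (ne_of_gt hpq)]
          have : p = q := hw.1.2 p q (by omega) (by rw [hwp, hwq, g1])
          exact absurd this (ne_of_lt hpq)
        · exact absurd e2 (by omega)
        · exact Or.inr hzf
        · exact absurd e1 g2
        · exact absurd e2 g2
  · by_cases g4 : y q = x p
    · -- γ : y q = x p, y p ≠ x q
      by_cases g5 : x p < x q
      · refine ⟨swapf x p q, Function.update x q (y p), fun w hw => ?_⟩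
        rcases net2 hx hpq hchp hchq hyo hw with
          ⟨hzf, e1, e2, e3⟩ | ⟨hzf, e1, e2, e3⟩ | ⟨hzf, e1, e2⟩ | ⟨hzf, e1, e2⟩ |
          ⟨hzf, e1, e2, e3⟩ | ⟨hzf, e1, e2, e3⟩ | ⟨m, hm1, hm2, hm3, hm4, hzf, e1, e2⟩
        · exact Or.inl hzf
        · exact absurd e1 g1
        · exact absurd e2 (by omega)
        · exfalso
          have hwq : w q = y q := by rw [hzf, Function.update_self]
          have hwp : w p = x p := by rw [hzf, Function.update_of_ne (ne_of_lt hpq)]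
          have : q = p := hw.1.2 q p (by omega) (by rw [hwp, hwq, g4])
          exact absurd this (Ne.symm (ne_of_lt hpq))
        · exact absurd e1 g1
        · exact Or.inr hzf
        · exact absurd e1 g1
      · refine ⟨Function.update x p (y p), Function.update x q (y p), fun w hw => ?_⟩
        rcases net2 hx hpq hchp hchq hyo hw with
          ⟨hzf, e1, e2, e3⟩ | ⟨hzf, e1, e2, e3⟩ | ⟨hzf, e1, e2⟩ | ⟨hzf, e1, e2⟩ |
          ⟨hzf, e1, e2, e3⟩ | ⟨hzf, e1, e2, e3⟩ | ⟨m, hm1, hm2, hm3, hm4, hzf, e1, e2⟩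
        · exact absurd e2 g5
        · exact absurd e2 g5
        · exact Or.inl hzf
        · exfalso
          have hwq : w q = y q := by rw [hzf, Function.update_self]
          have hwp : w p = x p := by rw [hzf, Function.update_of_ne (ne_of_lt hpq)]
          have : q = p := hw.1.2 q p (by omega) (by rw [hwp, hwq, g4])
          exact absurd this (Ne.symm (ne_of_lt hpq))
        · exact absurd e1 g1
        · exact Or.inr hzf
        · exact absurd e1 g1
    · -- δ : y p ≠ x q, y q ≠ x p
      refine ⟨Function.update x p (y p), Function.update x q (y q), fun w hw => ?_⟩
      rcases net2 hx hpq hchp hchq hyo hw with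
        ⟨hzf, e1, e2, e3⟩ | ⟨hzf, e1, e2, e3⟩ | ⟨hzf, e1, e2⟩ | ⟨hzf, e1, e2⟩ |
        ⟨hzf, e1, e2, e3⟩ | ⟨hzf, e1, e2, e3⟩ | ⟨m, hm1, hm2, hm3, hm4, hzf, e1, e2⟩
      · exact absurd e1 g4
      · exact absurd e1 g1
      · exact Or.inl hzf
      · exact Or.inr hzf
      · exact absurd e1 g1
      · exact absurd e1 g4
      · exact absurd e1 g1


end CandP2


lemma cand_global {x y : Fin n → ℕ} (hx : IsRook n x) (hy : IsRook n y)
    (hlen : rlen y = rlen x + 2) :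
    ∃ e₁ e₂ : Fin n → ℕ, ∀ z, MidM n x y z → z = e₁ ∨ z = e₂ := by
  classical
  by_cases hex : ∃ z, MidM n x y z
  swap
  · exact ⟨x, x, fun z hz => absurd ⟨z, hz⟩ hex⟩
  obtain ⟨z₀, hz₀⟩ := hex
  rcases moves hz₀ with
    ⟨i₀, c₁, c₂, h1, h2, hzf, hy1, hyoth⟩ |
    ⟨i₀, i₁, c₁, c₂, hne, hc1, hc2, hzf, hyi0, hyi1, hyo2⟩ |
    ⟨i₀, p₀, q₀, c₀, hpq₀, hip, hiq, hc0, hv₀, hzf, hy1, hy2, hy3, hyo2⟩ |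
    ⟨p₀, q₀, c₀, hpq₀, h1, h2, hzf, hy1, hy2, hyo2⟩ |
    ⟨p₀, q₀, c₀, hpq₀, h1, h2, hzf, hy1, hy2, hyo2⟩ |
    ⟨p₀, q₀, c₀, hpq₀, hv₀, h2, hzf, hy1, hy2, hyo2⟩ |
    ⟨p₀, q₀, c₀, hpq₀, hv₀, h2, hzf, hy1, hy2, hyo2⟩ |
    ⟨p₀, q₀, i₀, c₀, hpq₀, hip, hiq, hv₀, hc0, hzf, hy1, hy2, hy3, hyo2⟩ |
    ⟨p₀, q₀, r₀, s₀, hpq₀, hrs₀, hrp₀, hrq₀, hsp₀, hsq₀, hv₀, hv₀2, hzf, hy1, hy2, hy3, hy4, hyo2⟩ |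
    ⟨p₀, q₀, s₀, hpq₀, hqs₀, hv₀, hv₀2, hzf, hy1, hy2, hy3, hyo2⟩ |
    ⟨p₀, q₀, s₀, hpq₀, hps₀, hsq₀, hv₀, hv₀2, hzf, hy1, hy2, hy3, hyo2⟩ |
    ⟨p₀, q₀, r₀, hpq₀, hrq₀, hrp₀, hv₀, hv₀2, hzf, hy1, hy2, hy3, hyo2⟩ |
    ⟨p₀, q₀, r₀, hrp₀, hpq₀, hv₀, hv₀2, hzf, hy1, hy2, hy3, hyo2⟩
  · -- D1 : pattern P1
    exact candP1 hx hy (by omega : x i₀ < c₂) hy1 hyoth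
  · -- D2 : pattern P2 (two orders)
    rcases lt_trichotomy i₀ i₁ with h | h | h
    · exact candP2 hx hy h (by omega) (by omega) hyo2
    · exact absurd h hne
    · exact candP2 hx hy h (by omega) (by omega) (fun k h1 h2 => hyo2 k h2 h1)
  · -- D3 : pattern P3
    rcases lt_trichotomy i₀ p₀ with h | h | h
    · exact candP3 hx hy h hpq₀ (by omega) (by omega) (by omega) hyo2
    · exact absurd h hip
    · rcases lt_trichotomy i₀ q₀ with h' | h' | h'
      · exact candP3 hx hy h h' (by omega) (by omega) (by omega)
          (fun k h1 h2 h3 => hyo2 k h2 h1 h3)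
      · exact absurd h' hiq
      · exact candP3 hx hy hpq₀ h' (by omega) (by omega) (by omega)
          (fun k h1 h2 h3 => hyo2 k h3 h1 h2)
  · -- D4 : pattern P2
    exact candP2 hx hy hpq₀ (by omega) (by omega) hyo2
  · -- D5
    by_cases hco : x p₀ = x q₀
    · refine candP1 hx hy (h2 : x p₀ < c₀) hy1 ?_
      intro k hk
      by_cases hkq : k = q₀
      · rw [hkq, hy2, hco]
      · exact hyo2 k hk hkq
    · exact candP2 hx hy hpq₀ (by omega) (by omega) hyo2
  · -- D6 : pattern P2
    exact candP2 hx hy hpq₀ (by omega) (by omega) hyo2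
  · -- D7
    by_cases hco : c₀ = x q₀
    · refine candP1 hx hy (hv₀ : x p₀ < x q₀) hy1 ?_
      intro k hk
      by_cases hkq : k = q₀
      · rw [hkq, hy2, hco]
      · exact hyo2 k hk hkq
    · exact candP2 hx hy hpq₀ (by omega) (by omega) hyo2
  · -- D8 : pattern P3
    rcases lt_trichotomy i₀ p₀ with h | h | h
    · exact candP3 hx hy h hpq₀ (by omega) (by omega) (by omega)
        (fun k h1 h2 h3 => hyo2 k h2 h3 h1)
    · exact absurd h hip
    · rcases lt_trichotomy i₀ q₀ with h' | h' | h'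
      · exact candP3 hx hy h h' (by omega) (by omega) (by omega)
          (fun k h1 h2 h3 => hyo2 k h1 h3 h2)
      · exact absurd h' hiq
      · exact candP3 hx hy hpq₀ h' (by omega) (by omega) (by omega)
          (fun k h1 h2 h3 => hyo2 k h1 h2 h3)
  · -- D9 : pattern P4
    exact candP4 hx hy hpq₀ hrs₀ hrp₀ hrq₀ hsp₀ hsq₀ hv₀ hv₀2 hy1 hy2 hy3 hy4 hyo2
  · -- D10 : pattern P3
    have hq0 : x q₀ ≠ 0 := by omega
    have hsq : x s₀ ≠ x q₀ := by
      intro h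
      exact (ne_of_gt hqs₀) (hx.2 s₀ q₀ (by omega) h)
    exact candP3 hx hy hpq₀ hqs₀ (by omega) (by omega) (by omega) hyo2
  · -- D11 : pattern P3
    rcases lt_trichotomy q₀ s₀ with h | h | h
    · exact candP3 hx hy hpq₀ h (by omega) (by omega) (by omega) hyo2
    · exact absurd h.symm hsq₀
    · exact candP3 hx hy hps₀ h (by omega) (by omega) (by omega)
        (fun k h1 h2 h3 => hyo2 k h1 h3 h2)
  · -- D12 : pattern P3
    rcases lt_trichotomy r₀ p₀ with h | h | h
    · exact candP3 hx hy h hpq₀ (by omega) (by omega) (by omega)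
        (fun k h1 h2 h3 => hyo2 k h2 h3 h1)
    · exact absurd h hrp₀
    · exact candP3 hx hy h hrq₀ (by omega) (by omega) (by omega)
        (fun k h1 h2 h3 => hyo2 k h1 h3 h2)
  · -- D13
    by_cases hco : x r₀ = x p₀
    · refine candP2 hx hy (lt_trans hrp₀ hpq₀) (by omega) (by omega) ?_
      intro k h1 h2
      by_cases hkp : k = p₀
      · rw [hkp, hy2, hco]
      · exact hyo2 k hkp h2 h1
    · exact candP3 hx hy hrp₀ hpq₀ (by omega) (by omega) (by omega)
        (fun k h1 h2 h3 => hyo2 k h2 h3 h1)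


theorem length_two_interval_chain_or_diamond (n : ℕ) (x y : Fin n → ℕ)
    (hx : IsRook n x) (hy : IsRook n y)
    (hlt : RookLt n x y) (hlen : rlen y = rlen x + 2) :
    (∃! z, RookLt n x z ∧ RookLt n z y) ∨
    (∃ z₁ z₂, z₁ ≠ z₂ ∧ RookLt n x z₁ ∧ RookLt n z₁ y ∧ RookLt n x z₂ ∧ RookLt n z₂ y ∧
      ∀ z, RookLt n x z → RookLt n z y → z = z₁ ∨ z = z₂) := by
  classical
  obtain ⟨z₁, hz1a, hz1b⟩ := exists_mid hx hy hlt hlen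
  by_cases hu : ∀ z, RookLt n x z → RookLt n z y → z = z₁
  · exact Or.inl ⟨z₁, ⟨hz1a, hz1b⟩, fun z hz => hu z hz.1 hz.2⟩
  · push_neg at hu
    obtain ⟨z₂, h2a, h2b, hne⟩ := hu
    obtain ⟨e₁, e₂, hcand⟩ := cand_global hx hy hlen
    have c0 : ∀ z, RookLt n x z → RookLt n z y → z = e₁ ∨ z = e₂ :=
      fun z hxz hzy => hcand z (mid_of_lt hlen hxz hzy)
    have c1 := c0 z₁ hz1a hz1b
    have c2 := c0 z₂ h2a h2b
    refine Or.inr ⟨z₁, z₂, Ne.symm hne, hz1a, hz1b, h2a, h2b, ?_⟩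
    intro z hxz hzy
    have c3 := c0 z hxz hzy
    rcases c1 with rfl | rfl <;> rcases c2 with rfl | rfl <;> tauto
end

section
/- Define the edge-labeling F on covering relations of R_n by F(x,y) = (a_i, b_i) if y covers x by changing entry i from a_i to b_i (type 1), and F(x,y) = (a_i, a_j) if y covers x by swapping entries a_i < a_j with i < j (type 2), with labels ordered lexicographically in {0,...,n}×{0,...,n}. Then in every interval [x,y] of R_n, the maximal chain whose label sequence is lexicographically smallest has weakly increasing labels. -/
open Finset

variable {n : ℕ}

section AuxBCR

variable {n : ℕ}

/-- one generating step between rooks -/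
def RookStep (n : ℕ) (a b : Fin n → ℕ) : Prop :=
  IsRook n a ∧ IsRook n b ∧ (Step1 a b ∨ Step2 a b)

lemma step1_ne {a b : Fin n → ℕ} (h : Step1 a b) : a ≠ b := by
  obtain ⟨i, hi, -⟩ := h
  intro he; rw [he] at hi; exact lt_irrefl _ hi

lemma step2_ne {a b : Fin n → ℕ} (h : Step2 a b) : a ≠ b := by
  obtain ⟨i, j, hij, hlt, hbi, -, -⟩ := h
  intro he; subst he; omega

/-- the sorted-pairs index set -/
def SP (n : ℕ) : Finset (Fin n × Fin n) :=
  (univ ×ˢ univ).filter fun p : Fin n × Fin n => p.1 < p.2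

lemma rinv_eq_sum (a : Fin n → ℕ) :
    rinv a = ∑ p ∈ SP n, (if a p.2 < a p.1 then 1 else 0) := by
  rw [rinv, Finset.card_filter, SP, Finset.sum_filter]
  apply Finset.sum_congr rfl
  intro p _
  by_cases h1 : p.1 < p.2 <;> by_cases h2 : a p.2 < a p.1 <;> simp [h1, h2]

lemma sum_update_step1 {a b : Fin n → ℕ} (i : Fin n)
    (hoff : ∀ j, j ≠ i → a j = b j) : (∑ k, b k) + a i = (∑ k, a k) + b i := by
  rw [← Finset.add_sum_erase univ b (Finset.mem_univ i),
      ← Finset.add_sum_erase univ a (Finset.mem_univ i)]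
  have : ∑ k ∈ univ.erase i, b k = ∑ k ∈ univ.erase i, a k := by
    apply Finset.sum_congr rfl
    intro k hk
    exact (hoff k (Finset.ne_of_mem_erase hk)).symm
  omega

end AuxBCR
section AuxBCR2
variable {n : ℕ}

/-- the decreasing pairs for a type-1 step at `i` -/
def DD (n : ℕ) (a b : Fin n → ℕ) (i : Fin n) : Finset (Fin n × Fin n) :=
  (SP n).filter fun p => p.2 = i ∧ a i < a p.1 ∧ a p.1 < b i

lemma DD_card_eq_sum (a b : Fin n → ℕ) (i : Fin n) :
    (DD n a b i).card = ∑ p ∈ SP n, (if p.2 = i ∧ a i < a p.1 ∧ a p.1 < b i then 1 else 0) := by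
  rw [DD, Finset.card_filter]

lemma rinv_le_step1 {a b : Fin n → ℕ} {i : Fin n} (hb : IsRook n b)
    (hi : a i < b i) (hoff : ∀ j, j ≠ i → a j = b j) :
    rinv a ≤ rinv b + (DD n a b i).card := by
  rw [rinv_eq_sum, rinv_eq_sum, DD_card_eq_sum, ← Finset.sum_add_distrib]
  apply Finset.sum_le_sum
  intro p hp
  have hps : p.1 < p.2 := by
    simp only [SP, Finset.mem_filter] at hp; exact hp.2
  by_cases h2 : p.2 = i
  · have h1 : p.1 ≠ i := by intro h; rw [h, h2] at hps; exact lt_irrefl _ hps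
    have hne : a p.1 ≠ b i := by
      intro he
      have : b p.1 = b i := by rw [← hoff p.1 h1, he]
      have := hb.2 p.1 i (by omega) this
      exact h1 this
    rw [← hoff p.1 h1, h2]
    simp only [if_pos rfl, true_and]
    split_ifs <;> omega
  · have hcond : ¬ (p.2 = i ∧ a i < a p.1 ∧ a p.1 < b i) := by
      intro hc; exact h2 hc.1
    rw [if_neg hcond]
    by_cases h1 : p.1 = i
    · rw [← hoff p.2 h2, h1]
      split_ifs <;> omega
    · rw [← hoff p.1 h1, ← hoff p.2 h2]
      omega

lemma DD_card_le {a b : Fin n → ℕ} {i : Fin n} (ha : IsRook n a) :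
    (DD n a b i).card ≤ b i - a i - 1 := by
  have h := Finset.card_le_card_of_injOn (fun p => a p.1)
    (s := DD n a b i) (t := Finset.Ioo (a i) (b i)) ?_ ?_
  · rwa [Nat.card_Ioo] at h
  · intro p hp
    simp only [DD, Finset.mem_coe, Finset.mem_filter] at hp
    rw [Finset.mem_coe, Finset.mem_Ioo]; exact ⟨hp.2.2.1, hp.2.2.2⟩
  · intro p hp q hq hpq
    simp only [Finset.mem_coe, DD, Finset.mem_filter] at hp hq
    have h1 : p.1 = q.1 := ha.2 p.1 q.1 (by omega) hpq
    have h2 : p.2 = q.2 := by rw [hp.2.1, hq.2.1]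
    exact Prod.ext h1 h2

lemma rlen_lt_of_step1 {a b : Fin n → ℕ} (ha : IsRook n a) (hb : IsRook n b) (h : Step1 a b) :
    rlen a < rlen b := by
  obtain ⟨i, hi, hoff⟩ := h
  have hsum := sum_update_step1 i hoff
  have h1 := rinv_le_step1 (n := n) (a := a) (b := b) (i := i) hb hi hoff
  have h2 := DD_card_le (b := b) (i := i) ha
  rw [rlen, rlen]
  omega

end AuxBCR2
section AuxBCR3
variable {n : ℕ}

lemma rinv_ge_step1_exact {a b : Fin n → ℕ} {i : Fin n}
    (ha : IsRook n a) (hb : IsRook n b) (hi : a i < b i)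
    (hoff : ∀ j, j ≠ i → a j = b j)
    (hN1 : ∀ w, a i < w → w < b i → ∃ k, k < i ∧ a k = w)
    (hN2 : a i = 0 → ∀ k, i < k → a k ≠ 0) :
    rinv b + (DD n a b i).card ≤ rinv a := by
  rw [rinv_eq_sum, rinv_eq_sum, DD_card_eq_sum, ← Finset.sum_add_distrib]
  apply Finset.sum_le_sum
  intro p hp
  have hps : p.1 < p.2 := by
    simp only [SP, Finset.mem_filter] at hp; exact hp.2
  by_cases h2 : p.2 = i
  · have h1 : p.1 ≠ i := by intro h; rw [h, h2] at hps; exact lt_irrefl _ hps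
    rw [← hoff p.1 h1, h2]
    simp only [if_pos rfl, true_and]
    split_ifs <;> omega
  · have hcond : ¬ (p.2 = i ∧ a i < a p.1 ∧ a p.1 < b i) := by
      intro hc; exact h2 hc.1
    rw [if_neg hcond]
    by_cases h1 : p.1 = i
    · rw [← hoff p.2 h2, h1]
      have key : a p.2 < b i → a p.2 < a i := by
        intro h
        by_contra hcon
        push_neg at hcon
        rcases Nat.lt_or_ge (a i) (a p.2) with hlt | hge
        · obtain ⟨k, hk, hak⟩ := hN1 (a p.2) hlt h
          have : k = p.2 := ha.2 k p.2 (by omega) hak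
          rw [h1] at hps
          omega
        · have heq : a i = a p.2 := by omega
          rcases Nat.eq_zero_or_pos (a i) with h0 | h0
          · exact hN2 h0 p.2 (h1 ▸ hps) (by omega)
          · have := ha.2 i p.2 (by omega) heq
            rw [h1] at hps; rw [this] at hps; exact lt_irrefl _ hps
      split_ifs <;> omega
    · rw [← hoff p.1 h1, ← hoff p.2 h2]
      omega

lemma DD_card_exact {a b : Fin n → ℕ} {i : Fin n} (ha : IsRook n a)
    (hN1 : ∀ w, a i < w → w < b i → ∃ k, k < i ∧ a k = w) :
    (DD n a b i).card = b i - a i - 1 := by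
  rw [← Nat.card_Ioo]
  apply Finset.card_bij (fun p _ => a p.1)
  · intro p hp
    simp only [DD, Finset.mem_filter] at hp
    rw [Finset.mem_Ioo]; exact ⟨hp.2.2.1, hp.2.2.2⟩
  · intro p hp q hq hpq
    simp only [DD, Finset.mem_filter] at hp hq
    have h1 : p.1 = q.1 := ha.2 p.1 q.1 (by omega) hpq
    have h2 : p.2 = q.2 := by rw [hp.2.1, hq.2.1]
    exact Prod.ext h1 h2
  · intro w hw
    rw [Finset.mem_Ioo] at hw
    obtain ⟨k, hk, hak⟩ := hN1 w hw.1 hw.2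
    have hmem : ((k, i) : Fin n × Fin n) ∈ DD n a b i := by
      simp only [DD, SP, Finset.mem_filter, Finset.mem_product, Finset.mem_univ, true_and]
      exact ⟨hk, by omega, by omega⟩
    exact ⟨(k, i), hmem, hak⟩

lemma rlen_step1_exact {a b : Fin n → ℕ} {i : Fin n}
    (ha : IsRook n a) (hb : IsRook n b) (hi : a i < b i)
    (hoff : ∀ j, j ≠ i → a j = b j)
    (hN1 : ∀ w, a i < w → w < b i → ∃ k, k < i ∧ a k = w)
    (hN2 : a i = 0 → ∀ k, i < k → a k ≠ 0) :
    rlen b = rlen a + 1 := by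
  have hsum := sum_update_step1 i hoff
  have h1 := rinv_le_step1 (n := n) (a := a) (b := b) (i := i) hb hi hoff
  have h2 := rinv_ge_step1_exact ha hb hi hoff hN1 hN2
  have h3 := DD_card_exact (b := b) ha hN1
  rw [rlen, rlen]
  omega

end AuxBCR3
section AuxBCR4
variable {n : ℕ}

/-- pair reindexing for a swap -/
def psw (i j : Fin n) (p : Fin n × Fin n) : Fin n × Fin n :=
  if Equiv.swap i j p.1 < Equiv.swap i j p.2 then (Equiv.swap i j p.1, Equiv.swap i j p.2) else p

lemma swap_vals {a b : Fin n → ℕ} {i j : Fin n} (hbi : b i = a j) (hbj : b j = a i)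
    (hoff : ∀ k, k ≠ i → k ≠ j → a k = b k) (k : Fin n) :
    b k = a (Equiv.swap i j k) := by
  rcases eq_or_ne k i with rfl | hki
  · rw [Equiv.swap_apply_left]; exact hbi
  rcases eq_or_ne k j with rfl | hkj
  · rw [Equiv.swap_apply_right]; exact hbj
  · rw [Equiv.swap_apply_of_ne_of_ne hki hkj]; exact (hoff k hki hkj).symm

lemma psw_mem {i j : Fin n} (p : Fin n × Fin n) (hp : p ∈ SP n) : psw i j p ∈ SP n := by
  simp only [SP, Finset.mem_filter, Finset.mem_product, Finset.mem_univ, true_and] at hp ⊢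
  unfold psw
  split_ifs with h
  · exact h
  · exact hp

lemma psw_invol {i j : Fin n} (p : Fin n × Fin n) (hp : p ∈ SP n) : psw i j (psw i j p) = p := by
  simp only [SP, Finset.mem_filter, Finset.mem_product, Finset.mem_univ, true_and] at hp
  by_cases h : Equiv.swap i j p.1 < Equiv.swap i j p.2
  · have e1 : psw i j p = (Equiv.swap i j p.1, Equiv.swap i j p.2) := by
      simp only [psw, if_pos h]
    rw [e1]
    simp only [psw, Equiv.swap_apply_self]
    rw [if_pos hp]
  · have e1 : psw i j p = p := by simp only [psw, if_neg h]
    rw [e1, e1]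

lemma rinv_psw_reindex {b : Fin n → ℕ} {i j : Fin n} :
    rinv b = ∑ p ∈ SP n, (if b (psw i j p).2 < b (psw i j p).1 then 1 else 0) := by
  rw [rinv_eq_sum]
  exact Finset.sum_nbij' (psw i j) (psw i j) psw_mem psw_mem psw_invol psw_invol
    (fun p hp => rfl) |>.symm

section
variable {a b : Fin n → ℕ} {i j : Fin n}

lemma psw_term_le (ha : IsRook n a) (hij : i < j) (hlt : a i < a j)
    (hbi : b i = a j) (hbj : b j = a i) (hoff : ∀ k, k ≠ i → k ≠ j → a k = b k)
    (p : Fin n × Fin n) (hp : p ∈ SP n) :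
    (if a p.2 < a p.1 then 1 else 0) ≤
      (if b (psw i j p).2 < b (psw i j p).1 then (1 : ℕ) else 0) := by
  simp only [SP, Finset.mem_filter, Finset.mem_product, Finset.mem_univ, true_and] at hp
  have hbv := swap_vals hbi hbj hoff
  by_cases h : Equiv.swap i j p.1 < Equiv.swap i j p.2
  · simp only [psw, if_pos h, hbv, Equiv.swap_apply_self]
    exact le_rfl
  · simp only [psw, if_neg h]
    rcases eq_or_ne p.1 i with h1i | h1i
    · rcases eq_or_ne p.2 j with h2j | h2j
      · rw [h1i, h2j, hbi, hbj]
        split_ifs <;> omega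
      · -- p = (i, q), i < q < j
        have h2i : p.2 ≠ i := ne_of_gt (h1i ▸ hp)
        rw [h1i, hbi, ← hoff p.2 h2i h2j]
        split_ifs <;> omega
    · rcases eq_or_ne p.2 j with h2j | h2j
      · -- p = (q, j), i < q < j
        have h1j : p.1 ≠ j := ne_of_lt (h2j ▸ hp)
        rw [h2j, hbj, ← hoff p.1 h1i h1j]
        split_ifs <;> omega
      · exfalso
        rcases eq_or_ne p.1 j with h1j | h1j
        · apply h
          have h2i : p.2 ≠ i := ne_of_gt (lt_trans hij (h1j ▸ hp))
          rw [h1j, Equiv.swap_apply_right, Equiv.swap_apply_of_ne_of_ne h2i h2j]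
          exact lt_trans hij (h1j ▸ hp)
        · rcases eq_or_ne p.2 i with h2i | h2i
          · apply h
            rw [h2i, Equiv.swap_apply_left, Equiv.swap_apply_of_ne_of_ne h1i h1j]
            exact lt_trans (h2i ▸ hp) hij
          · apply h
            rw [Equiv.swap_apply_of_ne_of_ne h1i h1j,
              Equiv.swap_apply_of_ne_of_ne h2i h2j]
            exact hp

lemma mem_SP_pair (hij : i < j) : ((i, j) : Fin n × Fin n) ∈ SP n := by
  simp only [SP, Finset.mem_filter, Finset.mem_product, Finset.mem_univ, true_and]
  exact hij

lemma psw_self (hij : i < j) : psw i j (i, j) = (i, j) := by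
  simp only [psw, Equiv.swap_apply_left, Equiv.swap_apply_right]
  exact if_neg (lt_asymm hij)

lemma rlen_lt_of_step2 (ha : IsRook n a) (hb : IsRook n b) (h : Step2 a b) :
    rlen a < rlen b := by
  obtain ⟨i, j, hij, hlt, hbi, hbj, hoff⟩ := h
  have hsum : (∑ k, b k) = ∑ k, a k :=
    Fintype.sum_equiv (Equiv.swap i j) _ _ (swap_vals hbi hbj hoff)
  have hinv : rinv a < rinv b := by
    rw [rinv_eq_sum, rinv_psw_reindex (i := i) (j := j)]
    apply Finset.sum_lt_sum
    · exact fun p hp => psw_term_le ha hij hlt hbi hbj hoff p hp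
    · refine ⟨(i, j), mem_SP_pair hij, ?_⟩
      rw [psw_self hij]
      show (if a j < a i then (1:ℕ) else 0) < (if b j < b i then 1 else 0)
      rw [hbi, hbj, if_neg (by omega), if_pos (by omega)]
      omega
  rw [rlen, rlen]
  omega

lemma psw_term_exact (ha : IsRook n a) (hij : i < j) (hlt : a i < a j)
    (hbi : b i = a j) (hbj : b j = a i) (hoff : ∀ k, k ≠ i → k ≠ j → a k = b k)
    (hnb : ∀ k, i < k → k < j → ¬(a i ≤ a k ∧ a k < a j))
    (p : Fin n × Fin n) (hp : p ∈ SP n) (hne : p ≠ (i, j)) :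
    (if a p.2 < a p.1 then 1 else 0) =
      (if b (psw i j p).2 < b (psw i j p).1 then (1 : ℕ) else 0) := by
  simp only [SP, Finset.mem_filter, Finset.mem_product, Finset.mem_univ, true_and] at hp
  have hbv := swap_vals hbi hbj hoff
  by_cases h : Equiv.swap i j p.1 < Equiv.swap i j p.2
  · simp only [psw, if_pos h, hbv, Equiv.swap_apply_self]
  · simp only [psw, if_neg h]
    rcases eq_or_ne p.1 i with h1i | h1i
    · rcases eq_or_ne p.2 j with h2j | h2j
      · exfalso; apply hne; rw [← h1i, ← h2j]
      · -- p = (i, q), i < q < j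
        have h2i : p.2 ≠ i := ne_of_gt (h1i ▸ hp)
        have hq1 : i < p.2 := h1i ▸ hp
        have hq2 : p.2 < j := by
          rcases lt_or_ge p.2 j with hq | hq
          · exact hq
          · exfalso; apply h
            rw [h1i, Equiv.swap_apply_left, Equiv.swap_apply_of_ne_of_ne h2i h2j]
            exact lt_of_le_of_ne hq (Ne.symm h2j) |>.trans_le (le_refl _) |>.le.lt_of_ne (Ne.symm h2j) 
        have hmid := hnb p.2 hq1 hq2
        rw [h1i, hbi, ← hoff p.2 h2i h2j]
        split_ifs <;> omega
    · rcases eq_or_ne p.2 j with h2j | h2j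
      · -- p = (q, j), i < q < j
        have h1j : p.1 ≠ j := ne_of_lt (h2j ▸ hp)
        have hq2 : p.1 < j := h2j ▸ hp
        have hq1 : i < p.1 := by
          rcases lt_or_ge p.1 i with hq | hq
          · exfalso; apply h
            rw [h2j, Equiv.swap_apply_right, Equiv.swap_apply_of_ne_of_ne h1i h1j]
            exact hq
          · exact lt_of_le_of_ne hq (Ne.symm h1i)
        have hmid := hnb p.1 hq1 hq2
        have haj : a p.1 ≠ a j := by
          intro he
          have := ha.2 p.1 j (by omega) he
          exact h1j this
        rw [h2j, hbj, ← hoff p.1 h1i h1j]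
        split_ifs <;> omega
      · exfalso
        rcases eq_or_ne p.1 j with h1j | h1j
        · apply h
          have h2i : p.2 ≠ i := ne_of_gt (lt_trans hij (h1j ▸ hp))
          rw [h1j, Equiv.swap_apply_right, Equiv.swap_apply_of_ne_of_ne h2i h2j]
          exact lt_trans hij (h1j ▸ hp)
        · rcases eq_or_ne p.2 i with h2i | h2i
          · apply h
            rw [h2i, Equiv.swap_apply_left, Equiv.swap_apply_of_ne_of_ne h1i h1j]
            exact lt_trans (h2i ▸ hp) hij
          · apply h
            rw [Equiv.swap_apply_of_ne_of_ne h1i h1j,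
              Equiv.swap_apply_of_ne_of_ne h2i h2j]
            exact hp

lemma rlen_step2_exact (ha : IsRook n a) (hb : IsRook n b)
    (hij : i < j) (hlt : a i < a j) (hbi : b i = a j) (hbj : b j = a i)
    (hoff : ∀ k, k ≠ i → k ≠ j → a k = b k)
    (hnb : ∀ k, i < k → k < j → ¬(a i ≤ a k ∧ a k < a j)) :
    rlen b = rlen a + 1 := by
  have hsum : (∑ k, b k) = ∑ k, a k :=
    Fintype.sum_equiv (Equiv.swap i j) _ _ (swap_vals hbi hbj hoff)
  have hinv : rinv b = rinv a + 1 := by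
    rw [rinv_psw_reindex (i := i) (j := j), rinv_eq_sum]
    rw [← Finset.add_sum_erase _ _ (mem_SP_pair hij),
        ← Finset.add_sum_erase _ _ (mem_SP_pair hij)]
    have h1 : (if b (psw i j ((i, j) : Fin n × Fin n)).2 < b (psw i j (i, j)).1
        then (1:ℕ) else 0) = 1 := by
      rw [psw_self hij]
      show (if b j < b i then (1:ℕ) else 0) = 1
      rw [hbi, hbj, if_pos (by omega)]
    have h2 : (if a ((i, j) : Fin n × Fin n).2 < a (i, j).1 then (1:ℕ) else 0) = 0 := by
      show (if a j < a i then (1:ℕ) else 0) = 0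
      rw [if_neg (by omega)]
    have h3 : ∑ p ∈ (SP n).erase (i, j),
        (if b (psw i j p).2 < b (psw i j p).1 then (1:ℕ) else 0) =
        ∑ p ∈ (SP n).erase (i, j), (if a p.2 < a p.1 then (1:ℕ) else 0) := by
      apply Finset.sum_congr rfl
      intro p hp
      rw [Finset.mem_erase] at hp
      exact (psw_term_exact ha hij hlt hbi hbj hoff hnb p hp.2 hp.1).symm
    rw [h1, h2, h3]
    omega
  rw [rlen, rlen]
  omega

end
end AuxBCR4
section AuxBCR5
variable {n : ℕ}

lemma rookStep_rlen_lt {a b : Fin n → ℕ} (h : RookStep n a b) : rlen a < rlen b := by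
  obtain ⟨ha, hb, h⟩ := h
  rcases h with h | h
  · exact rlen_lt_of_step1 ha hb h
  · exact rlen_lt_of_step2 ha hb h

lemma rookStep_ne {a b : Fin n → ℕ} (h : RookStep n a b) : a ≠ b := by
  intro he
  have := rookStep_rlen_lt h
  rw [he] at this
  exact lt_irrefl _ this

lemma rookLe_iff (a b : Fin n → ℕ) : RookLe n a b ↔ Relation.ReflTransGen (RookStep n) a b := by
  rfl

lemma rookLe_rlen_s10 {a b : Fin n → ℕ} (h : RookLe n a b) : a = b ∨ rlen a < rlen b := by
  rw [rookLe_iff] at h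
  induction h with
  | refl => exact Or.inl rfl
  | tail hab hbc ih =>
    right
    have h2 := rookStep_rlen_lt hbc
    rcases ih with rfl | h1
    · exact h2
    · exact lt_trans h1 h2

lemma rookLt_rlen_s10 {a b : Fin n → ℕ} (h : RookLt n a b) : rlen a < rlen b :=
  (rookLe_rlen_s10 h.1).resolve_left h.2

lemma rookStep_rookLt {a b : Fin n → ℕ} (h : RookStep n a b) : RookLt n a b :=
  ⟨Relation.ReflTransGen.single h, rookStep_ne h⟩

lemma rookLt_rook_left {a b : Fin n → ℕ} (h : RookLt n a b) : IsRook n a := by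
  rcases Relation.ReflTransGen.cases_head h.1 with rfl | ⟨c, hac, _⟩
  · exact absurd rfl h.2
  · exact hac.1

lemma rookLt_rook_right {a b : Fin n → ℕ} (h : RookLt n a b) : IsRook n b := by
  rcases Relation.ReflTransGen.cases_tail h.1 with rfl | ⟨c, _, hcb⟩
  · exact absurd rfl h.2
  · exact hcb.2.1

lemma rookCov_step {a b : Fin n → ℕ} (h : RookCov n a b) : RookStep n a b := by
  obtain ⟨⟨hle, hne⟩, hmin⟩ := h
  rcases Relation.ReflTransGen.cases_head hle with rfl | ⟨c, hac, hcb⟩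
  · exact absurd rfl hne
  · rcases eq_or_ne c b with rfl | hcb'
    · exact hac
    · exact absurd (hmin c (rookStep_rookLt hac) ⟨hcb, hcb'⟩) not_false

/-- explicit swap of two entries -/
def swp (a : Fin n → ℕ) (i j : Fin n) : Fin n → ℕ :=
  fun m => if m = i then a j else if m = j then a i else a m

lemma swp_eq_comp (a : Fin n → ℕ) (i j : Fin n) :
    swp a i j = a ∘ (Equiv.swap i j) := by
  funext m
  simp only [swp, Function.comp_apply]
  rcases eq_or_ne m i with rfl | hmi
  · rw [if_pos rfl, Equiv.swap_apply_left]
  rcases eq_or_ne m j with rfl | hmj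
  · rw [if_neg hmi, if_pos rfl, Equiv.swap_apply_right]
  · rw [if_neg hmi, if_neg hmj, Equiv.swap_apply_of_ne_of_ne hmi hmj]

lemma swp_rook {a : Fin n → ℕ} (ha : IsRook n a) (i j : Fin n) : IsRook n (swp a i j) := by
  rw [swp_eq_comp]
  constructor
  · intro m; exact ha.1 _
  · intro m m' h0 he
    have := ha.2 _ _ h0 he
    exact (Equiv.swap i j).injective this

lemma swp_step2 {a : Fin n → ℕ} {i j : Fin n} (hij : i < j) (hlt : a i < a j) :
    Step2 a (swp a i j) := by
  refine ⟨i, j, hij, hlt, ?_, ?_, ?_⟩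
  · simp [swp]
  · simp only [swp]
    rw [if_neg (ne_of_gt hij)]
    simp
  · intro k hki hkj
    simp only [swp]
    rw [if_neg hki, if_neg hkj]

lemma update_rook {a : Fin n → ℕ} {i : Fin n} {w : ℕ} (ha : IsRook n a)
    (hwn : w ≤ n) (hw : ∀ k, k ≠ i → a k ≠ w) : IsRook n (Function.update a i w) := by
  classical
  constructor
  · intro m
    rcases eq_or_ne m i with rfl | hmi
    · rwa [Function.update_self]
    · rw [Function.update_of_ne hmi]; exact ha.1 m
  · intro m m' h0 he
    by_cases hmi : m = i
    · by_cases hmi' : m' = i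
      · rw [hmi, hmi']
      · rw [hmi, Function.update_self] at he
        rw [Function.update_of_ne hmi'] at he
        exact absurd he.symm (hw m' hmi')
    · by_cases hmi' : m' = i
      · rw [Function.update_of_ne hmi] at h0 he
        rw [hmi', Function.update_self] at he
        exact absurd he (hw m hmi)
      · rw [Function.update_of_ne hmi] at h0 he
        rw [Function.update_of_ne hmi'] at he
        exact ha.2 m m' h0 he

lemma update_step1 {a : Fin n → ℕ} {i : Fin n} {w : ℕ} (h : a i < w) :
    Step1 a (Function.update a i w) := by
  classical
  refine ⟨i, ?_, ?_⟩
  · rwa [Function.update_self]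
  · intro k hk; rw [Function.update_of_ne hk]

end AuxBCR5
section AuxBCR6
variable {n : ℕ}

lemma swp_at1 (a : Fin n → ℕ) (i j : Fin n) : swp a i j i = a j := by simp [swp]

lemma swp_at2 (a : Fin n → ℕ) {i j : Fin n} (h : j ≠ i) : swp a i j j = a i := by
  simp only [swp]; rw [if_neg h]; simp

lemma swp_off (a : Fin n → ℕ) {i j m : Fin n} (h1 : m ≠ i) (h2 : m ≠ j) :
    swp a i j m = a m := by
  simp only [swp]; rw [if_neg h1, if_neg h2]

lemma rookCov_rlen {a b : Fin n → ℕ} (h : RookCov n a b) : rlen b = rlen a + 1 := by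
  classical
  obtain ⟨ha, hb, hs⟩ := rookCov_step h
  have hmin := h.2
  rcases hs with ⟨i, hi, hoff⟩ | ⟨i, j, hij, hlt, hbi, hbj, hoff⟩
  · -- type 1 step at i
    have hbfresh : ∀ m, m ≠ i → a m ≠ b i := by
      intro m hm he
      have h2 : b m = b i := by rw [← hoff m hm, he]
      exact hm (hb.2 m i (by omega) h2)
    apply rlen_step1_exact ha hb hi hoff
    · -- every value strictly between occurs before i
      intro w hw1 hw2
      by_contra hcon
      push_neg at hcon
      by_cases hex : ∃ k, a k = w
      · obtain ⟨k, hk⟩ := hex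
        have hki : k ≠ i := by intro he; rw [he] at hk; omega
        have hik : i < k := by
          rcases lt_trichotomy i k with h' | h' | h'
          · exact h'
          · exact absurd h'.symm hki
          · exact absurd hk (hcon k h')
        have hzrook : IsRook n (swp a i k) := swp_rook ha i k
        have hz_i : swp a i k i = a k := swp_at1 a i k
        have hz_k : swp a i k k = a i := swp_at2 a hki
        have hz1rook : IsRook n (Function.update (swp a i k) i (b i)) := by
          apply update_rook hzrook (hb.1 i)
          intro m hm
          rcases eq_or_ne m k with rfl | hmk
          · rw [hz_k]; omega
          · rw [swp_off a hm hmk]; exact hbfresh m hm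
        have hs1 : Step1 (swp a i k) (Function.update (swp a i k) i (b i)) := by
          apply update_step1; rw [hz_i]; omega
        have hs2 : Step1 (Function.update (swp a i k) i (b i)) b := by
          refine ⟨k, ?_, ?_⟩
          · have e1 : Function.update (swp a i k) i (b i) k = a i := by
              rw [Function.update_of_ne hki]; exact hz_k
            have e2 : a k = b k := hoff k hki
            omega
          · intro m hm
            rcases eq_or_ne m i with rfl | hmi
            · rw [Function.update_self]
            · rw [Function.update_of_ne hmi, swp_off a hmi hm, hoff m hmi]
        have hst : Step2 a (swp a i k) := swp_step2 hik (by omega)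
        apply hmin (swp a i k) (rookStep_rookLt ⟨ha, hzrook, Or.inr hst⟩)
        exact ⟨Relation.ReflTransGen.head ⟨hzrook, hz1rook, Or.inl hs1⟩
          (Relation.ReflTransGen.single ⟨hz1rook, hb, Or.inl hs2⟩),
          fun he => by have := congrFun he i; rw [hz_i] at this; omega⟩
      · push_neg at hex
        have hcrook : IsRook n (Function.update a i w) :=
          update_rook ha (le_trans (le_of_lt hw2) (hb.1 i)) (fun k _ => hex k)
        have hs1 : Step1 a (Function.update a i w) := update_step1 (by omega)
        have hs2 : Step1 (Function.update a i w) b := by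
          refine ⟨i, ?_, ?_⟩
          · rw [Function.update_self]; omega
          · intro m hm; rw [Function.update_of_ne hm, hoff m hm]
        exact hmin _ (rookStep_rookLt ⟨ha, hcrook, Or.inl hs1⟩)
          (rookStep_rookLt ⟨hcrook, hb, Or.inl hs2⟩)
    · -- no zero entries after i when a i = 0
      intro h0 k hik
      by_contra hk0
      have hki : k ≠ i := ne_of_gt hik
      have hcrook : IsRook n (Function.update a k (b i)) := by
        apply update_rook ha (hb.1 i)
        intro m hm
        rcases eq_or_ne m i with rfl | hmi
        · intro he; omega
        · exact hbfresh m hmi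
      have hs1 : Step1 a (Function.update a k (b i)) := update_step1 (by omega)
      have hs2 : Step2 (Function.update a k (b i)) b := by
        refine ⟨i, k, hik, ?_, ?_, ?_, ?_⟩
        · rw [Function.update_of_ne (ne_of_lt hik), Function.update_self]
          omega
        · rw [Function.update_self]
        · rw [Function.update_of_ne (ne_of_lt hik), ← hoff k hki]
          omega
        · intro m hmi hmk
          rw [Function.update_of_ne hmk, hoff m hmi]
      exact hmin _ (rookStep_rookLt ⟨ha, hcrook, Or.inl hs1⟩)
        (rookStep_rookLt ⟨hcrook, hb, Or.inr hs2⟩)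
  · -- type 2 step swapping i < j
    apply rlen_step2_exact ha hb hij hlt hbi hbj hoff
    intro k hik hkj hcon
    obtain ⟨hc1, hc2⟩ := hcon
    have hki : k ≠ i := ne_of_gt hik
    have hkj' : k ≠ j := ne_of_lt hkj
    have hzrook : IsRook n (swp a k j) := swp_rook ha k j
    have hz_k : swp a k j k = a j := swp_at1 a k j
    have hz_j : swp a k j j = a k := swp_at2 a hkj'.symm
    have hz_i : swp a k j i = a i := swp_off a hki.symm (ne_of_lt hij)
    rcases Nat.eq_or_lt_of_le hc1 with heq | hlt2
    · -- a k = a i, forces both zero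
      have h0 : a i = 0 := by
        by_contra h0
        exact hki (ha.2 k i (by omega) heq.symm)
      have hs1 : Step2 a (swp a k j) := swp_step2 hkj (by omega)
      have hs2 : Step2 (swp a k j) b := by
        refine ⟨i, k, hik, ?_, ?_, ?_, ?_⟩
        · rw [hz_i, hz_k]; omega
        · rw [hbi, hz_k]
        · rw [hz_i, ← hoff k hki hkj']; omega
        · intro m hmi hmk
          rcases eq_or_ne m j with rfl | hmj
          · rw [hz_j, hbj]; omega
          · rw [swp_off a hmk hmj, hoff m hmi hmj]
      exact hmin _ (rookStep_rookLt ⟨ha, hzrook, Or.inr hs1⟩)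
        (rookStep_rookLt ⟨hzrook, hb, Or.inr hs2⟩)
    · -- a i < a k < a j
      have hs1 : Step2 a (swp a k j) := swp_step2 hkj (by omega)
      have hz2rook : IsRook n (swp (swp a k j) i k) := swp_rook hzrook i k
      have hz2_i : swp (swp a k j) i k i = a j := by rw [swp_at1, hz_k]
      have hz2_k : swp (swp a k j) i k k = a i := by rw [swp_at2 _ hki, hz_i]
      have hz2_j : swp (swp a k j) i k j = a k := by
        rw [swp_off _ (ne_of_gt hij) hkj'.symm, hz_j]
      have hs2 : Step2 (swp a k j) (swp (swp a k j) i k) := by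
        apply swp_step2 hik
        rw [hz_i, hz_k]; omega
      have hs3 : Step2 (swp (swp a k j) i k) b := by
        refine ⟨k, j, hkj, ?_, ?_, ?_, ?_⟩
        · rw [hz2_k, hz2_j]; omega
        · rw [hz2_j, ← hoff k hki hkj']
        · rw [hz2_k, hbj]
        · intro m hmk hmj
          rcases eq_or_ne m i with rfl | hmi
          · rw [hz2_i, hbi]
          · rw [swp_off _ hmi hmk, swp_off a hmk hmj, hoff m hmi hmj]
      apply hmin _ (rookStep_rookLt ⟨ha, hzrook, Or.inr hs1⟩)
      exact ⟨Relation.ReflTransGen.head ⟨hzrook, hz2rook, Or.inr hs2⟩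
        (Relation.ReflTransGen.single ⟨hz2rook, hb, Or.inr hs3⟩),
        fun he => by have := congrFun he i; rw [hz_i, hbi] at this; omega⟩

end AuxBCR6
section AuxBCR7
variable {n : ℕ}

lemma flabel_step1 {a b : Fin n → ℕ} {i : Fin n} (hi : a i < b i)
    (hoff : ∀ j, j ≠ i → a j = b j) : Flabel a b = (a i, b i) := by
  have hex : ∃ m, a m < b m ∧ ∀ j, j ≠ m → a j = b j := ⟨i, hi, hoff⟩
  rw [Flabel, dif_pos hex]
  obtain ⟨hc1, hc2⟩ := hex.choose_spec
  rcases eq_or_ne hex.choose i with he | he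
  · rw [he]
  · exact absurd (hc2 i (Ne.symm he)) (by omega)

lemma flabel_step2 {a b : Fin n → ℕ} {i j : Fin n} (hij : i < j) (hlt : a i < a j)
    (hbi : b i = a j) (hbj : b j = a i) (hoff : ∀ k, k ≠ i → k ≠ j → a k = b k) :
    Flabel a b = (a i, a j) := by
  have hd1 : a i ≠ b i := by omega
  have hd2 : a j ≠ b j := by omega
  have hijne : i ≠ j := ne_of_lt hij
  have hno : ¬ ∃ m, a m < b m ∧ ∀ k, k ≠ m → a k = b k := by
    rintro ⟨m, hm1, hm2⟩
    have hmi : m = i := by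
      by_contra hmi; exact hd1 (hm2 i (Ne.symm hmi))
    have hmj : m = j := by
      by_contra hmj; exact hd2 (hm2 j (Ne.symm hmj))
    exact hijne (hmi ▸ hmj)
  have hex2 : ∃ p : Fin n × Fin n, p.1 < p.2 ∧ a p.1 < a p.2 ∧ b p.1 = a p.2 ∧ b p.2 = a p.1 ∧
      ∀ k, k ≠ p.1 → k ≠ p.2 → a k = b k := ⟨(i, j), hij, hlt, hbi, hbj, hoff⟩
  rw [Flabel, dif_neg hno, dif_pos hex2]
  obtain ⟨hc1, hc2, hc3, hc4, hc5⟩ := hex2.choose_spec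
  have hp1 : hex2.choose.1 = i ∨ hex2.choose.1 = j := by
    by_contra hcon
    push_neg at hcon
    exact absurd (hoff _ hcon.1 hcon.2) (by omega)
  have hp2 : hex2.choose.2 = i ∨ hex2.choose.2 = j := by
    by_contra hcon
    push_neg at hcon
    exact absurd (hoff _ hcon.1 hcon.2) (by omega)
  have hi_in : i = hex2.choose.1 ∨ i = hex2.choose.2 := by
    by_contra hcon
    push_neg at hcon
    exact hd1 (hc5 i hcon.1 hcon.2)
  have hchoice : hex2.choose.1 = i ∧ hex2.choose.2 = j := by
    rcases hp1 with e1 | e1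
    · rcases hp2 with e2 | e2
      · exfalso; rw [e1] at hc1; rw [e2] at hc1; exact lt_irrefl _ hc1
      · exact ⟨e1, e2⟩
    · rcases hp2 with e2 | e2
      · exfalso; rw [e1, e2] at hc1; exact lt_asymm hij hc1
      · exfalso; rw [e1] at hc1; rw [e2] at hc1; exact lt_irrefl _ hc1
  rw [hchoice.1, hchoice.2]

lemma step_cov {a b : Fin n → ℕ} (hstep : RookStep n a b) (hr : rlen b = rlen a + 1) :
    RookCov n a b :=
  ⟨rookStep_rookLt hstep, fun z h1 h2 => by
    have g1 := rookLt_rlen_s10 h1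
    have g2 := rookLt_rlen_s10 h2
    omega⟩

lemma pairLt_of_not_le {p q : ℕ × ℕ} (h : ¬ pairLe p q) : pairLt q p := by
  obtain ⟨p1, p2⟩ := p
  obtain ⟨q1, q2⟩ := q
  simp only [pairLe, pairLt, Prod.mk.injEq] at *
  omega

lemma pairLt_irrefl (p : ℕ × ℕ) : ¬ pairLt p p := by simp [pairLt]

lemma pairLt_asymm {p q : ℕ × ℕ} (h1 : pairLt p q) (h2 : pairLt q p) : False := by
  obtain ⟨p1, p2⟩ := p
  obtain ⟨q1, q2⟩ := q
  simp only [pairLt] at *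
  omega

lemma lex_asymm : ∀ {A B : List (ℕ × ℕ)},
    List.Lex pairLt A B → List.Lex pairLt B A → False := by
  intro A B h1
  induction h1 with
  | nil => intro h2; cases h2
  | @cons a l m h ih =>
    intro h2
    cases h2 with
    | cons h' => exact ih h'
    | rel hr => exact pairLt_irrefl _ hr
  | @rel a l b m hr =>
    intro h2
    cases h2 with
    | cons h' => exact pairLt_irrefl _ hr
    | rel hr' => exact pairLt_asymm hr hr'

lemma lexLe_asymm {A B : List (ℕ × ℕ)} (h1 : lexLe A B) (h2 : List.Lex pairLt B A) :
    False := by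
  rcases h1 with rfl | h1
  · exact lex_asymm h2 h2
  · exact lex_asymm h1 h2

end AuxBCR7
section AuxBCR8
variable {n : ℕ}

lemma exchange {x u y : Fin n → ℕ} (h1 : RookCov n x u) (h2 : RookCov n u y)
    (hd : pairLt (Flabel u y) (Flabel x u)) :
    ∃ v, RookCov n x v ∧ RookCov n v y ∧ pairLt (Flabel x v) (Flabel x u) := by
  classical
  obtain ⟨hx, hu, hs1⟩ := rookCov_step h1
  obtain ⟨-, hy, hs2⟩ := rookCov_step h2
  have hr1 := rookCov_rlen h1
  have hr2 := rookCov_rlen h2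
  have mkcov : ∀ v, RookStep n x v → RookStep n v y → RookCov n x v ∧ RookCov n v y := by
    intro v s1 s2
    have g1 := rookStep_rlen_lt s1
    have g2 := rookStep_rlen_lt s2
    exact ⟨step_cov s1 (by omega), step_cov s2 (by omega)⟩
  rcases hs1 with ⟨i, hi, hoffa⟩ | ⟨j, k, hjk, hltx, hubj, hubk, hoffa⟩
  · -- first step is type 1 at i
    rw [flabel_step1 hi hoffa] at hd ⊢
    rcases hs2 with ⟨i', hi', hoffb⟩ | ⟨j, k, hjk, hltu, hybj, hybk, hoffb⟩
    · -- CASE A : type1 then type1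
      rw [flabel_step1 hi' hoffb] at hd
      rcases eq_or_ne i' i with rfl | hii
      · exfalso
        simp only [pairLt] at hd
        omega
      · have hxu_i' : x i' = u i' := hoffa i' hii
        have hy_i : y i = u i := (hoffb i (Ne.symm hii)).symm
        simp only [pairLt] at hd
        rcases eq_or_ne (y i') (x i) with heq | hne
        · -- the raised value passes through x i
          have hlt21 : u i' < x i := by omega
          rcases lt_or_gt_of_ne hii with hlti | hgti
          · -- i' < i : swap positions i' i in x
            have hvrook : IsRook n (swp x i' i) := swp_rook hx i' i
            have hv1 : swp x i' i i' = x i := swp_at1 x i' i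
            have hv2 : swp x i' i i = x i' := swp_at2 x (Ne.symm hii)
            have s1 : RookStep n x (swp x i' i) :=
              ⟨hx, hvrook, Or.inr (swp_step2 hlti (by omega))⟩
            have s2 : RookStep n (swp x i' i) y := by
              refine ⟨hvrook, hy, Or.inl ⟨i, ?_, ?_⟩⟩
              · rw [hv2]; omega
              · intro m hm
                rcases eq_or_ne m i' with rfl | hmi'
                · rw [hv1]; omega
                · rw [swp_off x hmi' hm, hoffa m hm, hoffb m hmi']
            obtain ⟨c1, c2⟩ := mkcov _ s1 s2
            refine ⟨_, c1, c2, ?_⟩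
            rw [flabel_step2 hlti (by omega) hv1 hv2
              (fun m hm1 hm2 => (swp_off x hm1 hm2).symm)]
            simp only [pairLt]
            omega
          · -- i < i' : raise entry i' to u i
            have hvrook : IsRook n (Function.update x i' (u i)) := by
              apply update_rook hx (hu.1 i)
              intro m hm
              rcases eq_or_ne m i with rfl | hmi
              · omega
              · rw [hoffa m hmi]
                intro he
                exact hmi (hu.2 m i (by omega) he)
            have hv1 : Function.update x i' (u i) i' = u i := Function.update_self _ _ _
            have hv2 : Function.update x i' (u i) i = x i :=
              Function.update_of_ne (Ne.symm hii) _ _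
            have s1 : RookStep n x (Function.update x i' (u i)) :=
              ⟨hx, hvrook, Or.inl (update_step1 (by omega))⟩
            have s2 : RookStep n (Function.update x i' (u i)) y := by
              refine ⟨hvrook, hy, Or.inr ⟨i, i', hgti, ?_, ?_, ?_, ?_⟩⟩
              · rw [hv1, hv2]; omega
              · rw [hv1, hy_i]
              · rw [hv2]; omega
              · intro m hm1 hm2
                rw [Function.update_of_ne hm2, hoffa m hm1, hoffb m hm2]
            obtain ⟨c1, c2⟩ := mkcov _ s1 s2
            refine ⟨_, c1, c2, ?_⟩
            rw [flabel_step1 (show x i' < Function.update x i' (u i) i' by rw [hv1]; omega)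
              (fun m hm => (Function.update_of_ne hm _ _).symm)]
            rw [hv1]
            simp only [pairLt]
            omega
        · -- generic : do the second raise first
          have hvrook : IsRook n (Function.update x i' (y i')) := by
            apply update_rook hx (hy.1 i')
            intro m hm
            rcases eq_or_ne m i with rfl | hmi
            · omega
            · rw [hoffa m hmi, hoffb m hm]
              intro he
              exact hm (hy.2 m i' (by omega) he)
          have hv1 : Function.update x i' (y i') i' = y i' := Function.update_self _ _ _
          have hv2 : Function.update x i' (y i') i = x i :=
            Function.update_of_ne (Ne.symm hii) _ _
          have s1 : RookStep n x (Function.update x i' (y i')) :=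
            ⟨hx, hvrook, Or.inl (update_step1 (by omega))⟩
          have s2 : RookStep n (Function.update x i' (y i')) y := by
            refine ⟨hvrook, hy, Or.inl ⟨i, ?_, ?_⟩⟩
            · rw [hv2]; omega
            · intro m hm
              rcases eq_or_ne m i' with rfl | hmi'
              · rw [hv1]
              · rw [Function.update_of_ne hmi', hoffa m hm, hoffb m hmi']
          obtain ⟨c1, c2⟩ := mkcov _ s1 s2
          refine ⟨_, c1, c2, ?_⟩
          rw [flabel_step1 (show x i' < Function.update x i' (y i') i' by rw [hv1]; omega)
            (fun m hm => (Function.update_of_ne hm _ _).symm)]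
          rw [hv1]
          simp only [pairLt]
          omega
    · -- CASE B : type1 then type2
      rw [flabel_step2 hjk hltu hybj hybk hoffb] at hd
      rcases eq_or_ne i j with rfl | hij'
      · exfalso
        have hx_i : x i < u i := hi
        simp only [pairLt] at hd
        omega
      rcases eq_or_ne i k with rfl | hik'
      · -- i = k : swap j i in x, then raise j
        have hxj : x j = u j := hoffa j (ne_of_lt hjk)
        have hs2s1 : u j < x i := by simp only [pairLt] at hd; omega
        have hvrook : IsRook n (swp x j i) := swp_rook hx j i
        have hv1 : swp x j i j = x i := swp_at1 x j i
        have hv2 : swp x j i i = x j := swp_at2 x (ne_of_gt hjk)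
        have s1 : RookStep n x (swp x j i) :=
          ⟨hx, hvrook, Or.inr (swp_step2 hjk (by omega))⟩
        have s2 : RookStep n (swp x j i) y := by
          refine ⟨hvrook, hy, Or.inl ⟨j, ?_, ?_⟩⟩
          · rw [hv1, hybj]; omega
          · intro m hm
            rcases eq_or_ne m i with rfl | hmi
            · rw [hv2, hybk, hxj]
            · rw [swp_off x hm hmi, hoffa m hmi, hoffb m hm hmi]
        obtain ⟨c1, c2⟩ := mkcov _ s1 s2
        refine ⟨_, c1, c2, ?_⟩
        rw [flabel_step2 hjk (by omega) hv1 hv2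
          (fun m hm1 hm2 => (swp_off x hm1 hm2).symm)]
        simp only [pairLt]
        omega
      · -- i outside {j,k} : do the swap first
        have hxj : x j = u j := hoffa j (Ne.symm hij')
        have hxk : x k = u k := hoffa k (Ne.symm hik')
        have hvrook : IsRook n (swp x j k) := swp_rook hx j k
        have hv1 : swp x j k j = x k := swp_at1 x j k
        have hv2 : swp x j k k = x j := swp_at2 x (ne_of_gt hjk)
        have s1 : RookStep n x (swp x j k) :=
          ⟨hx, hvrook, Or.inr (swp_step2 hjk (by omega))⟩
        have s2 : RookStep n (swp x j k) y := by
          refine ⟨hvrook, hy, Or.inl ⟨i, ?_, ?_⟩⟩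
          · rw [swp_off x hij' hik', ← hoffb i hij' hik']; omega
          · intro m hm
            rcases eq_or_ne m j with rfl | hmj
            · rw [hv1, hybj, hxk]
            · rcases eq_or_ne m k with rfl | hmk
              · rw [hv2, hybk, hxj]
              · rw [swp_off x hmj hmk, hoffa m hm, hoffb m hmj hmk]
        obtain ⟨c1, c2⟩ := mkcov _ s1 s2
        refine ⟨_, c1, c2, ?_⟩
        rw [flabel_step2 hjk (by omega) hv1 hv2
          (fun m hm1 hm2 => (swp_off x hm1 hm2).symm)]
        simp only [pairLt] at hd ⊢
        omega
  · -- first step is type 2 swapping j < k in x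
    rw [flabel_step2 hjk hltx hubj hubk hoffa] at hd ⊢
    rcases hs2 with ⟨i, hi', hoffb⟩ | ⟨j', k', hj'k', hltu, hybj, hybk, hoffb⟩
    · -- CASE C : type2 then type1 at i
      rw [flabel_step1 hi' hoffb] at hd
      rcases eq_or_ne i j with rfl | hij'
      · exfalso
        simp only [pairLt] at hd
        omega
      rcases eq_or_ne i k with rfl | hik'
      · -- i = k : raise j to y i, then swap
        have hyk1 : x j < y i := by omega
        have hyk2 : y i < x i := by simp only [pairLt] at hd; omega
        have hvrook : IsRook n (Function.update x j (y i)) := by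
          apply update_rook hx (hy.1 i)
          intro m hm
          rcases eq_or_ne m i with rfl | hmk
          · omega
          · rw [hoffa m hm hmk, hoffb m hmk]
            intro he
            exact hmk (hy.2 m i (by omega) he)
        have hv1 : Function.update x j (y i) j = y i := Function.update_self _ _ _
        have hv2 : Function.update x j (y i) i = x i :=
          Function.update_of_ne (ne_of_gt hjk) _ _
        have s1 : RookStep n x (Function.update x j (y i)) :=
          ⟨hx, hvrook, Or.inl (update_step1 (by omega))⟩
        have s2 : RookStep n (Function.update x j (y i)) y := by
          refine ⟨hvrook, hy, Or.inr ⟨j, i, hjk, ?_, ?_, ?_, ?_⟩⟩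
          · rw [hv1, hv2]; omega
          · rw [hv2, ← hubj, hoffb j (ne_of_lt hjk)]
          · rw [hv1]
          · intro m hm1 hm2
            rw [Function.update_of_ne hm1, hoffa m hm1 hm2, hoffb m hm2]
        obtain ⟨c1, c2⟩ := mkcov _ s1 s2
        refine ⟨_, c1, c2, ?_⟩
        rw [flabel_step1 (show x j < Function.update x j (y i) j by rw [hv1]; omega)
          (fun m hm => (Function.update_of_ne hm _ _).symm)]
        rw [hv1]
        exact Or.inr ⟨rfl, hyk2⟩
      · -- i outside {j,k}
        have hxu_i : x i = u i := hoffa i hij' hik'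
        have hyj : y j = x k := by rw [← hubj, hoffb j (Ne.symm hij')]
        have hyk : y k = x j := by rw [← hubk, hoffb k (Ne.symm hik')]
        rcases eq_or_ne (y i) (x j) with heq | hne
        · exfalso
          have h1 : x i < x j := by simp only [pairLt] at hd; omega
          have h2 : y i = y k := by rw [heq, hyk]
          exact hik' (hy.2 i k (by omega) h2)
        · have hvrook : IsRook n (Function.update x i (y i)) := by
            apply update_rook hx (hy.1 i)
            intro m hm
            rcases eq_or_ne m j with rfl | hmj
            · exact fun he => hne he.symm
            rcases eq_or_ne m k with rfl | hmk
            · rw [← hyj]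
              intro he
              exact hij' (hy.2 j i (by omega) he).symm
            · rw [hoffa m hmj hmk, hoffb m hm]
              intro he
              exact hm (hy.2 m i (by omega) he)
          have hv1 : Function.update x i (y i) i = y i := Function.update_self _ _ _
          have s1 : RookStep n x (Function.update x i (y i)) :=
            ⟨hx, hvrook, Or.inl (update_step1 (by omega))⟩
          have s2 : RookStep n (Function.update x i (y i)) y := by
            refine ⟨hvrook, hy, Or.inr ⟨j, k, hjk, ?_, ?_, ?_, ?_⟩⟩
            · rw [Function.update_of_ne (Ne.symm hij'), Function.update_of_ne (Ne.symm hik')]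
              omega
            · rw [Function.update_of_ne (Ne.symm hik'), hyj]
            · rw [Function.update_of_ne (Ne.symm hij'), hyk]
            · intro m hm1 hm2
              rcases eq_or_ne m i with rfl | hmi
              · rw [hv1]
              · rw [Function.update_of_ne hmi, hoffa m hm1 hm2, hoffb m hmi]
          obtain ⟨c1, c2⟩ := mkcov _ s1 s2
          refine ⟨_, c1, c2, ?_⟩
          rw [flabel_step1 (show x i < Function.update x i (y i) i by rw [hv1]; omega)
            (fun m hm => (Function.update_of_ne hm _ _).symm)]
          rw [hv1]
          simp only [pairLt] at hd ⊢
          omega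
    · -- CASE D : type2 then type2
      rw [flabel_step2 hj'k' hltu hybj hybk hoffb] at hd
      rcases eq_or_ne j' j with rfl | hb
      · exfalso
        simp only [pairLt] at hd
        omega
      rcases eq_or_ne j' k with rfl | hc
      · -- j' = k : positions j < k < k'
        have hjk' : j < k' := lt_trans hjk hj'k'
        have hk'j : k' ≠ j := ne_of_gt hjk'
        have hk'k : k' ≠ j' := ne_of_gt hj'k'
        have hxk' : x k' = u k' := hoffa k' hk'j hk'k
        have ht2 : x j < x k' := by omega
        have ht2' : x k' < x j' := by simp only [pairLt] at hd; omega
        have hvrook : IsRook n (swp x j k') := swp_rook hx j k'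
        have hv1 : swp x j k' j = x k' := swp_at1 x j k'
        have hv2 : swp x j k' k' = x j := swp_at2 x hk'j
        have s1 : RookStep n x (swp x j k') :=
          ⟨hx, hvrook, Or.inr (swp_step2 hjk' ht2)⟩
        have s2 : RookStep n (swp x j k') y := by
          refine ⟨hvrook, hy, Or.inr ⟨j, j', hjk, ?_, ?_, ?_, ?_⟩⟩
          · rw [hv1, swp_off x (ne_of_gt hjk) (ne_of_lt hj'k')]
            omega
          · rw [swp_off x (ne_of_gt hjk) (ne_of_lt hj'k'), ← hubj,
              hoffb j (ne_of_lt hjk) (ne_of_lt hjk')]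
          · rw [hv1, hybj, hxk']
          · intro m hm1 hm2
            rcases eq_or_ne m k' with rfl | hmk'
            · rw [hv2, hybk, hubk]
            · rw [swp_off x hm1 hmk', hoffa m hm1 hm2, hoffb m hm2 hmk']
        obtain ⟨c1, c2⟩ := mkcov _ s1 s2
        refine ⟨_, c1, c2, ?_⟩
        rw [flabel_step2 hjk' ht2 hv1 hv2
          (fun m hm1 hm2 => (swp_off x hm1 hm2).symm)]
        exact Or.inr ⟨rfl, ht2'⟩
      rcases eq_or_ne k' j with rfl | hdj
      · -- k' = j : positions j' < j < k
        have hj'k2 : j' < k := lt_trans hj'k' hjk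
        have hj'j : j' ≠ k' := ne_of_lt hj'k'
        have hxj' : x j' = u j' := hoffa j' hj'j hc
        have hs2s1 : x j' < x k' := by simp only [pairLt] at hd; omega
        have hvrook : IsRook n (swp x j' k') := swp_rook hx j' k'
        have hv1 : swp x j' k' j' = x k' := swp_at1 x j' k'
        have hv2 : swp x j' k' k' = x j' := swp_at2 x (Ne.symm hj'j)
        have s1 : RookStep n x (swp x j' k') :=
          ⟨hx, hvrook, Or.inr (swp_step2 hj'k' hs2s1)⟩
        have s2 : RookStep n (swp x j' k') y := by
          refine ⟨hvrook, hy, Or.inr ⟨j', k, hj'k2, ?_, ?_, ?_, ?_⟩⟩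
          · rw [hv1, swp_off x (ne_of_gt hj'k2) (ne_of_gt hjk)]
            omega
          · rw [swp_off x (ne_of_gt hj'k2) (ne_of_gt hjk), hybj, hubj]
          · rw [hv1, ← hubk, hoffb k (ne_of_gt hj'k2) (ne_of_gt hjk)]
          · intro m hm1 hm2
            rcases eq_or_ne m k' with rfl | hmk'
            · rw [hv2, hybk, hxj']
            · rw [swp_off x hm1 hmk', hoffa m hmk' hm2, hoffb m hm1 hmk']
        obtain ⟨c1, c2⟩ := mkcov _ s1 s2
        refine ⟨_, c1, c2, ?_⟩
        rw [flabel_step2 hj'k' hs2s1 hv1 hv2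
          (fun m hm1 hm2 => (swp_off x hm1 hm2).symm)]
        simp only [pairLt]
        omega
      rcases eq_or_ne k' k with rfl | he
      · -- k' = k : positions j' < k', j' ≠ j
        have hxj' : x j' = u j' := hoffa j' hb hc
        have hs2s1 : x j' < x j := by
          rw [hxj']
          have := hubk
          omega
        rcases lt_or_gt_of_ne hb with hj'j | hjj'
        · -- j' < j
          have hvrook : IsRook n (swp x j' j) := swp_rook hx j' j
          have hv1 : swp x j' j j' = x j := swp_at1 x j' j
          have hv2 : swp x j' j j = x j' := swp_at2 x (Ne.symm hb)
          have s1 : RookStep n x (swp x j' j) :=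
            ⟨hx, hvrook, Or.inr (swp_step2 hj'j hs2s1)⟩
          have s2 : RookStep n (swp x j' j) y := by
            refine ⟨hvrook, hy, Or.inr ⟨j, k', hjk, ?_, ?_, ?_, ?_⟩⟩
            · rw [hv2, swp_off x (Ne.symm hc) hdj]
              omega
            · rw [swp_off x (Ne.symm hc) hdj, ← hubj, hoffb j (Ne.symm hb) (ne_of_lt hjk)]
            · rw [hv2, hybk, hxj']
            · intro m hm1 hm2
              rcases eq_or_ne m j' with rfl | hmj'
              · rw [hv1, hybj, hubk]
              · rw [swp_off x hmj' hm1, hoffa m hm1 hm2, hoffb m hmj' hm2]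
          obtain ⟨c1, c2⟩ := mkcov _ s1 s2
          refine ⟨_, c1, c2, ?_⟩
          rw [flabel_step2 hj'j hs2s1 hv1 hv2
            (fun m hm1 hm2 => (swp_off x hm1 hm2).symm)]
          simp only [pairLt]
          omega
        · -- j < j'
          have hxlt : x j' < x k' := by omega
          have hvrook : IsRook n (swp x j' k') := swp_rook hx j' k'
          have hv1 : swp x j' k' j' = x k' := swp_at1 x j' k'
          have hv2 : swp x j' k' k' = x j' := swp_at2 x (Ne.symm hc)
          have s1 : RookStep n x (swp x j' k') :=
            ⟨hx, hvrook, Or.inr (swp_step2 hj'k' hxlt)⟩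
          have s2 : RookStep n (swp x j' k') y := by
            refine ⟨hvrook, hy, Or.inr ⟨j, j', hjj', ?_, ?_, ?_, ?_⟩⟩
            · rw [hv1, swp_off x (Ne.symm hb) (ne_of_lt hjk)]
              omega
            · rw [hv1, ← hubj, hoffb j (Ne.symm hb) (ne_of_lt hjk)]
            · rw [swp_off x (Ne.symm hb) (ne_of_lt hjk), hybj, hubk]
            · intro m hm1 hm2
              rcases eq_or_ne m k' with rfl | hmk
              · rw [hv2, hybk, hxj']
              · rw [swp_off x hm2 hmk, hoffa m hm1 hmk, hoffb m hm2 hmk]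
          obtain ⟨c1, c2⟩ := mkcov _ s1 s2
          refine ⟨_, c1, c2, ?_⟩
          rw [flabel_step2 hj'k' hxlt hv1 hv2
            (fun m hm1 hm2 => (swp_off x hm1 hm2).symm)]
          simp only [pairLt]
          omega
      · -- disjoint positions
        have hxj' : x j' = u j' := hoffa j' hb hc
        have hxk' : x k' = u k' := hoffa k' hdj he
        have hvrook : IsRook n (swp x j' k') := swp_rook hx j' k'
        have hv1 : swp x j' k' j' = x k' := swp_at1 x j' k'
        have hv2 : swp x j' k' k' = x j' := swp_at2 x (ne_of_gt hj'k')
        have s1 : RookStep n x (swp x j' k') :=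
          ⟨hx, hvrook, Or.inr (swp_step2 hj'k' (by omega))⟩
        have s2 : RookStep n (swp x j' k') y := by
          refine ⟨hvrook, hy, Or.inr ⟨j, k, hjk, ?_, ?_, ?_, ?_⟩⟩
          · rw [swp_off x (Ne.symm hb) (Ne.symm hdj), swp_off x (Ne.symm hc) (Ne.symm he)]
            omega
          · rw [swp_off x (Ne.symm hc) (Ne.symm he), ← hubj, hoffb j (Ne.symm hb) (Ne.symm hdj)]
          · rw [swp_off x (Ne.symm hb) (Ne.symm hdj), ← hubk,
              hoffb k (Ne.symm hc) (Ne.symm he)]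
          · intro m hm1 hm2
            rcases eq_or_ne m j' with rfl | hmj'
            · rw [hv1, hybj, hxk']
            rcases eq_or_ne m k' with rfl | hmk'
            · rw [hv2, hybk, hxj']
            · rw [swp_off x hmj' hmk', hoffa m hm1 hm2, hoffb m hmj' hmk']
        obtain ⟨c1, c2⟩ := mkcov _ s1 s2
        refine ⟨_, c1, c2, ?_⟩
        rw [flabel_step2 hj'k' (by omega) hv1 hv2
          (fun m hm1 hm2 => (swp_off x hm1 hm2).symm)]
        simp only [pairLt] at hd ⊢
        omega

end AuxBCR8
section AuxBCR9
variable {n : ℕ}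

lemma labels_cons_cons (a b : Fin n → ℕ) (l : List (Fin n → ℕ)) :
    labels (a :: b :: l) = Flabel a b :: labels (b :: l) := rfl

lemma key_chain : ∀ (c : List (Fin n → ℕ)), c.Chain' (RookCov n) →
    (∀ d, d.Chain' (RookCov n) → d.head? = c.head? → d.getLast? = c.getLast? →
      lexLe (labels c) (labels d)) →
    (labels c).Chain' pairLe := by
  intro c
  induction c with
  | nil => intro _ _; exact List.isChain_nil
  | cons a t ih =>
    cases t with
    | nil => intro _ _; exact List.isChain_nil
    | cons b r =>
      intro hch hlex
      obtain ⟨hab, hbt⟩ := List.isChain_cons_cons.mp hch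
      have htail : (labels (b :: r)).Chain' pairLe := by
        apply ih hbt
        intro d hd hh hl
        obtain ⟨b', d', rfl⟩ : ∃ b' d', d = b' :: d' := by
          cases d with
          | nil => simp at hh
          | cons p q => exact ⟨p, q, rfl⟩
        have hb' : b = b' := by
          simp only [List.head?] at hh
          exact (Option.some.inj hh).symm
        subst hb'
        have hchd : (a :: b :: d').Chain' (RookCov n) := List.isChain_cons_cons.mpr ⟨hab, hd⟩
        have hlast : (a :: b :: d').getLast? = (a :: b :: r).getLast? := by
          rw [List.getLast?_cons_cons, List.getLast?_cons_cons]
          exact hl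
        have h1 := hlex (a :: b :: d') hchd rfl hlast
        rw [labels_cons_cons, labels_cons_cons] at h1
        rcases h1 with he | hlt
        · injection he with h1 h2
          exact Or.inl h2
        · cases hlt with
          | cons h' => exact Or.inr h'
          | rel hr => exact absurd hr (pairLt_irrefl _)
      rw [labels_cons_cons]
      cases r with
      | nil => exact List.isChain_singleton _
      | cons c0 r' =>
        rw [labels_cons_cons] at htail ⊢
        refine List.isChain_cons_cons.mpr ⟨?_, htail⟩
        by_contra hnle
        have hdesc := pairLt_of_not_le hnle
        obtain ⟨hbc, hct⟩ := List.isChain_cons_cons.mp hbt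
        obtain ⟨v, hc1, hc2, hvlt⟩ := exchange hab hbc hdesc
        have hchd : (a :: v :: c0 :: r').Chain' (RookCov n) :=
          List.isChain_cons_cons.mpr ⟨hc1, List.isChain_cons_cons.mpr ⟨hc2, hct⟩⟩
        have hlast : (a :: v :: c0 :: r').getLast? = (a :: b :: c0 :: r').getLast? := by
          rw [List.getLast?_cons_cons, List.getLast?_cons_cons,
            List.getLast?_cons_cons, List.getLast?_cons_cons]
        have h1 := hlex (a :: v :: c0 :: r') hchd rfl hlast
        apply lexLe_asymm h1
        rw [labels_cons_cons, labels_cons_cons]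
        exact List.Lex.rel hvlt

end AuxBCR9

theorem lex_smallest_chain_is_increasing (n : ℕ) (x y : Fin n → ℕ)
    (hx : IsRook n x) (hy : IsRook n y) (hle : RookLe n x y)
    (c : List (Fin n → ℕ)) (hc : RookMaxChain n x y c)
    (hlex : ∀ d, RookMaxChain n x y d → lexLe (labels c) (labels d)) :
    (labels c).Chain' pairLe := by
  obtain ⟨hch, hhead, hlast⟩ := hc
  apply key_chain c hch
  intro d hd hh hl
  exact hlex d ⟨hd, by rw [hh, hhead], by rw [hl, hlast]⟩
end
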